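/- arXiv:0804.3667 — 5 statements merged into one kernel-verified Lean document; each statement's English description precedes it below -/
import Mathlib

section
/- In the setup below, let Z be the set of vertices v_i of S such that b_i(x) = 0. Then |Z| ≤ d. -/
open scoped BigOperators Pointwise

noncomputable section

/-- A point of `ℝ^m` with integer coordinates (a lattice point). -/
def IsLatticePoint {m : ℕ} (v : Fin m → ℝ) : Prop := ∀ i, ∃ z : ℤ, v i = (z : ℝ)

/-- `P` is a lattice polytope in `ℝ^m`: the convex hull of a nonempty finite set of
lattice points. -/
def IsLatticePolytope {m : ℕ} (P : Set (Fin m → ℝ)) : Prop :=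
  ∃ V : Finset (Fin m → ℝ), V.Nonempty ∧ (∀ v ∈ V, IsLatticePoint v) ∧
    P = convexHull ℝ (V : Set (Fin m → ℝ))

/-- The number of lattice points contained in a subset of `ℝ^m`. -/
def latticePointCount {m : ℕ} (A : Set (Fin m → ℝ)) : ℕ :=
  Set.ncard {z : Fin m → ℤ | (fun i => (z i : ℝ)) ∈ A}

/-- `h` is the `h^*`-polynomial of the full-dimensional lattice polytope `P ⊆ ℝ^n`:
its coefficients are nonnegative, it has degree at most `n`, and the Ehrhart counting
function of `P` is given by `|mP ∩ ℤ^n| = ∑_i h_i * C(n + m - i, n)`, which is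
equivalent to `∑_m |mP ∩ ℤ^n| t^m = h(t)/(1-t)^{n+1}`. -/
def IsHStarPoly {n : ℕ} (P : Set (Fin n → ℝ)) (h : Polynomial ℤ) : Prop :=
  h.natDegree ≤ n ∧ (∀ i, 0 ≤ h.coeff i) ∧
    ∀ m : ℕ, (latticePointCount ((m : ℝ) • P) : ℤ) =
      ∑ i ∈ Finset.range (n + 1), h.coeff i * ((n + m - i).choose n : ℤ)

/-- The normalized volume of a (full-dimensional) polytope in `ℝ^m`:
`m!` times its Euclidean volume. -/
def normVol {m : ℕ} (P : Set (Fin m → ℝ)) : ℝ :=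
  (Nat.factorial m : ℝ) * (MeasureTheory.volume P).toReal

/-- The point of `ℝ^s` over which the `j`-th summand of a Cayley sum sits:
`0` for `j = 0`, and the standard basis vector `e_j` for `j = 1, …, s`. -/
def cayleyVertex (s : ℕ) (j : Fin (s + 1)) : Fin s → ℝ :=
  fun i => if (i : ℕ) + 1 = (j : ℕ) then 1 else 0

/-- The Cayley sum `P_0 * ⋯ * P_s ⊆ ℝ^q × ℝ^s` of polytopes `P_0, …, P_s ⊆ ℝ^q`:
the convex hull of `(P_0 × {0}) ∪ (P_1 × {e_1}) ∪ ⋯ ∪ (P_s × {e_s})`. -/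
def CayleySum {q s : ℕ} (Ps : Fin (s + 1) → Set (Fin q → ℝ)) :
    Set ((Fin q → ℝ) × (Fin s → ℝ)) :=
  convexHull ℝ (⋃ j : Fin (s + 1), (fun p => (p, cayleyVertex s j)) '' Ps j)

/-- A lattice point of `ℝ^q × ℝ^s`. -/
def IsLatticePointPair {q s : ℕ} (v : (Fin q → ℝ) × (Fin s → ℝ)) : Prop :=
  IsLatticePoint v.1 ∧ IsLatticePoint v.2

/-- An affine isomorphism `ℝ^n ≅ ℝ^q × ℝ^s` is a `ℤ`-affine linear change of coordinates
if it identifies the lattice `ℤ^n` with the lattice `ℤ^q × ℤ^s`. -/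
def IsLatticeEquiv {n q s : ℕ} (T : (Fin n → ℝ) ≃ᵃ[ℝ] (Fin q → ℝ) × (Fin s → ℝ)) : Prop :=
  ∀ v : Fin n → ℝ, IsLatticePoint v ↔ IsLatticePointPair (T v)


/- **Setup** (Section 2): `P ⊆ ℝ^{n+1}` is an `n`-dimensional lattice polytope contained
in the hyperplane `x_{n+1} = 1`, of degree `d`: `(n−d)P` has no lattice points in its
relative interior, and `x` is a lattice point in the relative interior of `(n−d+1)P`.
`S ⊆ P` is an `n`-dimensional lattice simplex with vertices `v_0, …, v_n` whose spanned
cone contains `x`, and `b y` gives the unique coefficients of `y` in the basis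
`v_0, …, v_n`, i.e. `y = ∑ i, b y i • v i`. -/
/-- (Lemma 2.2.) Let `Z` be the set of vertices `v_i` of `S` such that
`b_i(x) = 0`.  Then `|Z| ≤ d`. -/
theorem statement5 (n d : ℕ) (P : Set (Fin (n + 1) → ℝ))
    (v : Fin (n + 1) → Fin (n + 1) → ℝ) (b : (Fin (n + 1) → ℝ) → Fin (n + 1) → ℝ)
    (x : Fin (n + 1) → ℝ)
    (hP : IsLatticePolytope P)
    (hPdim : Module.finrank ℝ (vectorSpan ℝ P) = n)
    (hheight : ∀ p ∈ P, p (Fin.last n) = 1)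
    (hdn : d ≤ n)
    (hNoInt : ∀ z : Fin (n + 1) → ℤ,
      (fun i => (z i : ℝ)) ∉ intrinsicInterior ℝ (((n - d : ℕ) : ℝ) • P))
    (hxint : IsLatticePoint x)
    (hxmem : x ∈ intrinsicInterior ℝ (((n - d + 1 : ℕ) : ℝ) • P))
    (hvint : ∀ i, IsLatticePoint (v i))
    (hvmem : ∀ i, v i ∈ P)
    (hvaff : AffineIndependent ℝ v)
    (hb : ∀ y : Fin (n + 1) → ℝ, y = ∑ i, b y i • v i)
    (hxcone : ∀ i, 0 ≤ b x i)
    :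
    Set.ncard {i : Fin (n + 1) | b x i = 0} ≤ d := by
  classical
  by_contra hcon
  push_neg at hcon
  obtain ⟨Vfin, hVne, hVlat, hPhull⟩ := hP
  have hPconv : Convex ℝ P := by rw [hPhull]; exact convex_convexHull ℝ _
  set K : ℝ := ((n - d : ℕ) : ℝ) with hK
  have hKnn : (0:ℝ) ≤ K := by rw [hK]; exact Nat.cast_nonneg _
  have hK1 : ((n - d + 1 : ℕ) : ℝ) = K + 1 := by rw [Nat.cast_add, Nat.cast_one]
  rw [hK1] at hxmem
  have hK1pos : (0:ℝ) < K + 1 := by linarith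
  -- the cone over `P`
  set C : Set (Fin (n + 1) → ℝ) := {w | ∃ t : ℝ, 0 < t ∧ ∃ p ∈ P, w = t • p} with hCdef
  have hCadd : ∀ a ∈ C, ∀ a' ∈ C, a + a' ∈ C := by
    rintro a ⟨t, ht, p, hp, rfl⟩ a' ⟨s, hs, q, hq, rfl⟩
    have hts : 0 < t + s := by linarith
    refine ⟨t + s, hts, (t / (t + s)) • p + (s / (t + s)) • q, ?_, ?_⟩
    · exact hPconv hp hq (by positivity) (by positivity) (by field_simp)
    · rw [smul_add, smul_smul, smul_smul]
      field_simp
  have hCsmul : ∀ (r : ℝ), 0 < r → ∀ a ∈ C, r • a ∈ C := by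
    rintro r hr a ⟨t, ht, p, hp, rfl⟩
    exact ⟨r * t, by positivity, p, hp, smul_smul r t p⟩
  have hslice : ∀ (r : ℝ), 0 < r → ∀ y ∈ C, y (Fin.last n) = r → y ∈ r • P := by
    rintro r hr y ⟨t, ht, p, hp, rfl⟩ hyl
    have hpl := hheight p hp
    have htr : t = r := by
      simpa [Pi.smul_apply, smul_eq_mul, hpl] using hyl
    exact ⟨p, hp, by rw [htr]⟩
  have hsmul_last : ∀ (r : ℝ), ∀ y ∈ r • P, y (Fin.last n) = r := by
    rintro r y ⟨p, hp, rfl⟩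
    simp [Pi.smul_apply, smul_eq_mul, hheight p hp]
  -- last coordinates
  have hvlast : ∀ i, v i (Fin.last n) = 1 := fun i => hheight _ (hvmem i)
  have hxQ : x ∈ (K + 1) • P := intrinsicInterior_subset hxmem
  have hxlast : x (Fin.last n) = K + 1 := hsmul_last _ _ hxQ
  have hsum : ∑ i, b x i = K + 1 := by
    have h := congrFun (hb x) (Fin.last n)
    simp only [Finset.sum_apply, Pi.smul_apply, smul_eq_mul, hvlast, mul_one] at h
    rw [← h]; exact hxlast
  -- counting: there is `j` with `1 < b x j`
  set N : Finset (Fin (n + 1)) := Finset.univ.filter (fun i => b x i ≠ 0) with hN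
  have hcard : d + 1 ≤ (Finset.univ.filter (fun i => b x i = 0)).card := by
    have hset : {i : Fin (n + 1) | b x i = 0}
        = ↑(Finset.univ.filter (fun i => b x i = 0)) := by
      ext i; simp
    rw [hset, Set.ncard_coe_finset] at hcon
    omega
  have hNcard : N.card ≤ n - d := by
    have hcompl : N = (Finset.univ.filter (fun i => b x i = 0))ᶜ := by
      ext i; simp [hN]
    rw [hcompl, Finset.card_compl]
    have h3 : Fintype.card (Fin (n+1)) = n + 1 := Fintype.card_fin _
    omega
  have hsumN : ∑ i ∈ N, b x i = K + 1 := by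
    rw [hN, Finset.sum_filter_ne_zero]; exact hsum
  have hexj : ∃ j, 1 < b x j := by
    by_contra hno
    push_neg at hno
    have h1 : ∑ i ∈ N, b x i ≤ ∑ _i ∈ N, (1:ℝ) :=
      Finset.sum_le_sum (fun i _ => hno i)
    rw [Finset.sum_const, nsmul_eq_mul, mul_one] at h1
    have h2 : (N.card : ℝ) ≤ K := by
      rw [hK]; exact_mod_cast hNcard
    rw [hsumN] at h1
    linarith
  obtain ⟨j, hj⟩ := hexj
  have hbj : 0 < b x j := lt_trans one_pos hj
  have hjN : j ∈ N := by rw [hN]; simp [hbj.ne']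
  have hKpos : (0:ℝ) < K := by
    have h1 : b x j ≤ ∑ i ∈ N, b x i :=
      Finset.single_le_sum (fun i _ => hxcone i) hjN
    rw [hsumN] at h1
    linarith
  -- the hyperplanes `x_last = r`
  set W : Submodule ℝ (Fin (n+1) → ℝ) :=
    LinearMap.ker (LinearMap.proj (R := ℝ) (φ := fun _ : Fin (n+1) => ℝ) (Fin.last n)) with hW
  have hHmem : ∀ (r : ℝ) (y : Fin (n+1) → ℝ),
      y ∈ AffineSubspace.mk' (fun _ => r) W ↔ y (Fin.last n) = r := by
    intro r y
    rw [AffineSubspace.mem_mk', hW, LinearMap.mem_ker]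
    simp [LinearMap.proj_apply, vsub_eq_sub, sub_eq_zero]
  have hWrank : Module.finrank ℝ W = n := by
    have hsurj : Function.Surjective
        (LinearMap.proj (R := ℝ) (φ := fun _ : Fin (n+1) => ℝ) (Fin.last n)) :=
      fun r => ⟨fun _ => r, rfl⟩
    have h := LinearMap.finrank_range_add_finrank_ker
      (LinearMap.proj (R := ℝ) (φ := fun _ : Fin (n+1) => ℝ) (Fin.last n))
    rw [LinearMap.range_eq_top.mpr hsurj, finrank_top] at h
    have h1 : Module.finrank ℝ (Fin (n+1) → ℝ) = n + 1 := by simp [Module.finrank_pi]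
    have h2 : Module.finrank ℝ ℝ = 1 := Module.finrank_self ℝ
    rw [h1, h2] at h
    rw [hW]
    omega
  have hspanP : affineSpan ℝ P = AffineSubspace.mk' (fun _ => (1:ℝ)) W := by
    have hle : affineSpan ℝ P ≤ AffineSubspace.mk' (fun _ => (1:ℝ)) W :=
      affineSpan_le.mpr (fun p hp => (hHmem 1 p).mpr (hheight p hp))
    have hdir : (affineSpan ℝ P).direction
        = (AffineSubspace.mk' (fun _ => (1:ℝ)) W).direction := by
      rw [AffineSubspace.direction_mk', direction_affineSpan]
      refine Submodule.eq_of_le_of_finrank_le ?_ ?_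
      · have hd := AffineSubspace.direction_le hle
        rwa [direction_affineSpan, AffineSubspace.direction_mk'] at hd
      · rw [hWrank, hPdim]
    exact AffineSubspace.ext_of_direction_eq hdir
      ⟨v 0, subset_affineSpan ℝ P (hvmem 0), (hHmem 1 _).mpr (hvlast 0)⟩
  have himg : (K + 1) • P
      = (LinearMap.lsmul ℝ (Fin (n+1) → ℝ) (K+1)).toAffineMap '' P := by
    ext y
    constructor
    · rintro ⟨p, hp, rfl⟩; exact ⟨p, hp, rfl⟩
    · rintro ⟨p, hp, rfl⟩; exact ⟨p, hp, rfl⟩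
  have hHspanQ : ∀ u : Fin (n+1) → ℝ, u (Fin.last n) = K + 1 →
      u ∈ affineSpan ℝ ((K + 1) • P) := by
    intro u hu
    have h1 : ((K+1)⁻¹ • u) ∈ affineSpan ℝ P := by
      rw [hspanP]
      refine (hHmem _ _).mpr ?_
      rw [Pi.smul_apply, smul_eq_mul, hu]
      field_simp
    rw [himg, ← AffineSubspace.map_span]
    refine AffineSubspace.mem_map.mpr ⟨(K+1)⁻¹ • u, h1, ?_⟩
    show (K+1) • ((K+1)⁻¹ • u) = u
    rw [smul_smul, mul_inv_cancel₀ hK1pos.ne', one_smul]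
  -- (A1) : `x` is in the ambient interior of the cone `C`
  have hxC : x ∈ interior C := by
    rw [mem_interior_iff_mem_nhds]
    obtain ⟨y, hy, hyx⟩ := hxmem
    obtain ⟨ε, hε, hball⟩ := Metric.isOpen_iff.mp isOpen_interior y hy
    have hlx : x (Fin.last n) ≠ 0 := by rw [hxlast]; positivity
    have hcont : ContinuousAt
        (fun w : Fin (n+1) → ℝ => ((K + 1) * (w (Fin.last n))⁻¹) • w) x :=
      (continuousAt_const.mul
        (((continuous_apply (Fin.last n)).continuousAt).inv₀ hlx)).smul continuousAt_id
    have hGx : ((K + 1) * (x (Fin.last n))⁻¹) • x = x := by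
      rw [hxlast, mul_inv_cancel₀ hK1pos.ne', one_smul]
    have hnb1 : (fun w : Fin (n+1) → ℝ => ((K + 1) * (w (Fin.last n))⁻¹) • w) ⁻¹'
        (Metric.ball x ε) ∈ nhds x := by
      apply hcont.preimage_mem_nhds
      rw [hGx]
      exact Metric.ball_mem_nhds x hε
    have hnb2 : {w : Fin (n+1) → ℝ | 0 < w (Fin.last n)} ∈ nhds x := by
      refine IsOpen.mem_nhds ?_ ?_
      · exact isOpen_lt continuous_const (continuous_apply _)
      · rw [Set.mem_setOf_eq, hxlast]; positivity
    filter_upwards [hnb1, hnb2] with w hw1 hw2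
    have htw : w (Fin.last n) ≠ 0 := ne_of_gt hw2
    have hul : (((K + 1) * (w (Fin.last n))⁻¹) • w) (Fin.last n) = K + 1 := by
      rw [Pi.smul_apply, smul_eq_mul]
      field_simp
    have huA : ((K + 1) * (w (Fin.last n))⁻¹) • w ∈ affineSpan ℝ ((K + 1) • P) :=
      hHspanQ _ hul
    have hmemball : (⟨((K + 1) * (w (Fin.last n))⁻¹) • w, huA⟩ :
        affineSpan ℝ ((K + 1) • P)) ∈ Metric.ball y ε := by
      rw [Metric.mem_ball, Subtype.dist_eq, hyx]
      exact Metric.mem_ball.mp hw1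
    have huQ : ((K + 1) * (w (Fin.last n))⁻¹) • w ∈ (K + 1) • P := by
      have h' : (⟨((K + 1) * (w (Fin.last n))⁻¹) • w, huA⟩ :
          affineSpan ℝ ((K + 1) • P)) ∈ Subtype.val ⁻¹' ((K + 1) • P) :=
        interior_subset (hball hmemball)
      exact h'
    obtain ⟨p, hp, hpu⟩ := huQ
    refine ⟨w (Fin.last n), hw2, p, hp, ?_⟩
    have hpu' : (K + 1) • p = ((K + 1) * (w (Fin.last n))⁻¹) • w := hpu
    have hcoef : w (Fin.last n) • p
        = (w (Fin.last n) * (K + 1)⁻¹) • ((K + 1) • p) := by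
      rw [smul_smul]
      congr 1
      field_simp
    rw [hcoef, hpu', smul_smul]
    rw [show w (Fin.last n) * (K + 1)⁻¹ * ((K + 1) * (w (Fin.last n))⁻¹) = 1 by
      field_simp]
    rw [one_smul]
  -- the auxiliary point `β • x - v j`
  set β : ℝ := (b x j)⁻¹ with hβ
  have hβpos : 0 < β := inv_pos.mpr hbj
  have hβlt : β < 1 := inv_lt_one_of_one_lt₀ hj
  have hcnonneg : ∀ i, 0 ≤ β * b x i - (if i = j then 1 else 0) := by
    intro i
    by_cases hij : i = j
    · subst hij
      rw [hβ, inv_mul_cancel₀ hbj.ne']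
      simp
    · simp only [hij, if_false, sub_zero]
      have := hxcone i
      positivity
  have hwsum : β • x - v j
      = ∑ i, (β * b x i - (if i = j then 1 else 0)) • v i := by
    have h1 : β • x = ∑ i, (β * b x i) • v i := by
      calc β • x = β • ∑ i, b x i • v i := by rw [← hb x]
      _ = ∑ i, (β * b x i) • v i := by
          rw [Finset.smul_sum]
          exact Finset.sum_congr rfl (fun i _ => (smul_smul β (b x i) (v i)))
    have h2 : (∑ i, (if i = j then (1:ℝ) else 0) • v i) = v j := by
      have hterm : ∀ i : Fin (n+1), (if i = j then (1:ℝ) else 0) • v i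
          = if i = j then v i else 0 := by
        intro i; by_cases h : i = j <;> simp [h]
      rw [Finset.sum_congr rfl (fun i _ => hterm i)]
      simp
    rw [h1, ← h2, ← Finset.sum_sub_distrib]
    exact Finset.sum_congr rfl (fun i _ => (sub_smul _ _ _).symm)
  have hTnn : (0:ℝ) ≤ ∑ i, (β * b x i - (if i = j then 1 else 0)) :=
    Finset.sum_nonneg (fun i _ => hcnonneg i)
  have hwC : (β • x - v j) = 0 ∨ (β • x - v j) ∈ C := by
    rcases eq_or_lt_of_le hTnn with h0 | hTpos
    · left
      rw [hwsum]
      apply Finset.sum_eq_zero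
      intro i hi
      rw [(Finset.sum_eq_zero_iff_of_nonneg (fun i _ => hcnonneg i)).mp h0.symm i hi,
        zero_smul]
    · right
      set T : ℝ := ∑ i, (β * b x i - (if i = j then 1 else 0)) with hT
      refine ⟨T, hTpos, ∑ i, (T⁻¹ * (β * b x i - (if i = j then 1 else 0))) • v i, ?_, ?_⟩
      · apply hPconv.sum_mem
        · intro i _
          exact mul_nonneg (inv_nonneg.mpr hTpos.le) (hcnonneg i)
        · rw [← Finset.mul_sum, ← hT, inv_mul_cancel₀ hTpos.ne']
        · intro i _; exact hvmem i
      · rw [hwsum, Finset.smul_sum]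
        refine Finset.sum_congr rfl (fun i _ => ?_)
        rw [smul_smul, ← mul_assoc, mul_inv_cancel₀ hTpos.ne', one_mul]
  -- `z = x - v j` is in the interior of the cone
  have hzdecomp : x - v j = (1 - β) • x + (β • x - v j) := by module
  have hδ : 0 < 1 - β := by linarith
  have hs1 : (1 - β) • x ∈ interior C := by
    have hsub : (1 - β) • interior C ⊆ C := by
      rintro _ ⟨a, ha, rfl⟩
      exact hCsmul _ hδ a (interior_subset ha)
    have hopen : IsOpen ((1 - β) • interior C) := isOpen_interior.smul₀ hδ.ne'
    exact interior_maximal hsub hopen (Set.smul_mem_smul_set hxC)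
  have hzC : x - v j ∈ interior C := by
    rcases hwC with h0 | hwC'
    · rw [hzdecomp, h0, add_zero]; exact hs1
    · have hopen : IsOpen ((fun a => a + (β • x - v j)) '' interior C) :=
        (Homeomorph.addRight (β • x - v j)).isOpenMap _ isOpen_interior
      have hsub : (fun a => a + (β • x - v j)) '' interior C ⊆ C := by
        rintro _ ⟨a, ha, rfl⟩
        exact hCadd a (interior_subset ha) _ hwC'
      rw [hzdecomp]
      exact interior_maximal hsub hopen ⟨_, hs1, rfl⟩
  have hzlast : (x - v j) (Fin.last n) = K := by
    rw [Pi.sub_apply, hxlast, hvlast]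
    ring
  have hzKP : x - v j ∈ K • P := hslice K hKpos _ (interior_subset hzC) hzlast
  have hspanKP : ∀ u, u ∈ affineSpan ℝ (K • P) → u (Fin.last n) = K := by
    intro u hu
    have hle : affineSpan ℝ (K • P) ≤ AffineSubspace.mk' (fun _ => K) W :=
      affineSpan_le.mpr (fun y hy => (hHmem K y).mpr (hsmul_last K y hy))
    exact (hHmem K u).mp (hle hu)
  have hzint : x - v j ∈ intrinsicInterior ℝ (K • P) := by
    refine ⟨⟨x - v j, subset_affineSpan ℝ _ hzKP⟩, ?_, rfl⟩
    have hsub : (Subtype.val ⁻¹' interior C : Set (affineSpan ℝ (K • P)))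
        ⊆ Subtype.val ⁻¹' (K • P) := by
      intro u hu
      exact hslice K hKpos _ (interior_subset hu) (hspanKP _ u.2)
    exact interior_maximal hsub (isOpen_interior.preimage continuous_subtype_val) hzC
  -- contradiction with `hNoInt`
  have hzlat : ∀ i, ∃ m : ℤ, (x - v j) i = (m : ℝ) := by
    intro i
    obtain ⟨a, ha⟩ := hxint i
    obtain ⟨e, he⟩ := hvint j i
    refine ⟨a - e, ?_⟩
    rw [Pi.sub_apply, ha, he]
    push_cast
    ring
  choose m hm using hzlat
  refine hNoInt m ?_
  have hfun : (fun i => (m i : ℝ)) = x - v j := funext fun i => (hm i).symm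
  rw [hfun]
  exact hzint


end
end

section
/- In the setup below, for any point y in the cone σ spanned by P, one has |V^−(y)| ≤ |Z^+(y)|. In particular |V^−(y)| ≤ |Z| ≤ d. -/
open scoped BigOperators Pointwise

noncomputable section

namespace S6

variable {N : ℕ}

/-- last-coordinate functional -/
def hfun (N : ℕ) : (Fin (N+1) → ℝ) →ₗ[ℝ] ℝ := LinearMap.proj (Fin.last N)

/-- the cone over P -/
def Cone (P : Set (Fin (N+1) → ℝ)) : Set (Fin (N+1) → ℝ) :=
  {u | ∃ c : ℝ, 0 ≤ c ∧ ∃ p ∈ P, u = c • p}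

variable {P : Set (Fin (N+1) → ℝ)}

lemma subset_cone : P ⊆ Cone P := fun p hp => ⟨1, zero_le_one, p, hp, (one_smul _ _).symm⟩

lemma zero_mem_cone (hPne : P.Nonempty) : (0 : Fin (N+1) → ℝ) ∈ Cone P := by
  obtain ⟨p, hp⟩ := hPne
  exact ⟨0, le_refl _, p, hp, (zero_smul _ _).symm⟩

lemma cone_smul {t : ℝ} (ht : 0 ≤ t) {u : Fin (N+1) → ℝ} (hu : u ∈ Cone P) :
    t • u ∈ Cone P := by
  obtain ⟨c, hc, p, hp, rfl⟩ := hu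
  exact ⟨t * c, mul_nonneg ht hc, p, hp, smul_smul t c p⟩

lemma cone_add (hPconv : Convex ℝ P) {u w : Fin (N+1) → ℝ}
    (hu : u ∈ Cone P) (hw : w ∈ Cone P) : u + w ∈ Cone P := by
  obtain ⟨c, hc, p, hp, rfl⟩ := hu
  obtain ⟨e, he, q, hq, rfl⟩ := hw
  rcases eq_or_lt_of_le (add_nonneg hc he) with h0 | hpos
  · have hc0 : c = 0 := by linarith
    have he0 : e = 0 := by linarith
    subst hc0; subst he0
    simpa using zero_mem_cone ⟨p, hp⟩
  · refine ⟨c + e, le_of_lt hpos, (c/(c+e)) • p + (e/(c+e)) • q, ?_, ?_⟩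
    · refine hPconv hp hq (div_nonneg hc hpos.le) (div_nonneg he hpos.le) ?_
      field_simp
    · rw [smul_add, smul_smul, smul_smul]
      rw [mul_div_cancel₀ _ hpos.ne', mul_div_cancel₀ _ hpos.ne']

lemma cone_convex (hPconv : Convex ℝ P) : Convex ℝ (Cone P) := by
  intro u hu w hw a b ha hb _
  exact cone_add hPconv (cone_smul ha hu) (cone_smul hb hw)

lemma cone_sum (hPconv : Convex ℝ P) (hPne : P.Nonempty) {ι : Type*} (s : Finset ι)
    (f : ι → Fin (N+1) → ℝ) (hf : ∀ i ∈ s, f i ∈ Cone P) : (∑ i ∈ s, f i) ∈ Cone P := by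
  classical
  induction s using Finset.induction_on with
  | empty => simpa using zero_mem_cone hPne
  | insert _ _ hnot ih =>
    rw [Finset.sum_insert hnot]
    exact cone_add hPconv (hf _ (Finset.mem_insert_self _ _))
      (ih fun i hi => hf i (Finset.mem_insert_of_mem hi))

lemma cone_smul_eq {t : ℝ} (ht : 0 < t) : t • Cone P = Cone P := by
  apply Set.Subset.antisymm
  · rintro u ⟨w, hw, rfl⟩
    exact cone_smul ht.le hw
  · intro u hu
    refine ⟨t⁻¹ • u, cone_smul (inv_nonneg.2 ht.le) hu, ?_⟩
    show t • t⁻¹ • u = u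
    rw [smul_smul, mul_inv_cancel₀ ht.ne', one_smul]

lemma interior_add_cone (hPconv : Convex ℝ P) {u w : Fin (N+1) → ℝ}
    (hu : u ∈ interior (Cone P)) (hw : w ∈ Cone P) : u + w ∈ interior (Cone P) := by
  have hsub : (fun a => a + w) '' interior (Cone P) ⊆ Cone P := by
    rintro _ ⟨a, ha, rfl⟩
    exact cone_add hPconv (interior_subset ha) hw
  have hopen : IsOpen ((fun a => a + w) '' interior (Cone P)) :=
    (isOpenMap_add_right w) _ isOpen_interior
  exact interior_maximal hsub hopen ⟨u, hu, rfl⟩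

lemma interior_cone_smul {t : ℝ} (ht : 0 < t) {u : Fin (N+1) → ℝ}
    (hu : u ∈ interior (Cone P)) : t • u ∈ interior (Cone P) := by
  have : interior (Cone P) = t • interior (Cone P) := by
    conv_lhs => rw [← cone_smul_eq (P := P) ht]
    exact interior_smul₀ ht.ne' _
  rw [this]
  exact Set.smul_mem_smul_set hu


lemma hfun_apply (u : Fin (N+1) → ℝ) : hfun N u = u (Fin.last N) := rfl

lemma hfun_cone_nonneg (hheight : ∀ p ∈ P, p (Fin.last N) = 1) {u : Fin (N+1) → ℝ}
    (hu : u ∈ Cone P) : 0 ≤ hfun N u := by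
  obtain ⟨c, hc, p, hp, rfl⟩ := hu
  have : hfun N (c • p) = c * p (Fin.last N) := rfl
  rw [this, hheight p hp, mul_one]; exact hc

lemma mem_smulP_iff (hheight : ∀ p ∈ P, p (Fin.last N) = 1) {c : ℝ} (hc : 0 < c)
    {u : Fin (N+1) → ℝ} :
    u ∈ c • P ↔ u ∈ Cone P ∧ hfun N u = c := by
  constructor
  · rintro ⟨p, hp, rfl⟩
    refine ⟨⟨c, hc.le, p, hp, rfl⟩, ?_⟩
    show c * p (Fin.last N) = c
    rw [hheight p hp, mul_one]
  · rintro ⟨⟨e, he, p, hp, rfl⟩, h2⟩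
    have : e * p (Fin.last N) = c := h2
    rw [hheight p hp, mul_one] at this
    subst this
    exact Set.smul_mem_smul_set hp

/-- the affine span of `c • P` is contained in the hyperplane `h = c` -/
lemma hfun_eq_of_mem_affineSpan (hheight : ∀ p ∈ P, p (Fin.last N) = 1) {c : ℝ}
    {u : Fin (N+1) → ℝ} (hu : u ∈ affineSpan ℝ (c • P)) : hfun N u = c := by
  set Q : AffineSubspace ℝ (Fin (N+1) → ℝ) :=
    AffineSubspace.comap ((hfun N).toAffineMap)
      (AffineSubspace.mk' (c : ℝ) (⊥ : Submodule ℝ ℝ)) with hQ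
  have hmem : ∀ w : Fin (N+1) → ℝ, w ∈ Q ↔ hfun N w = c := by
    intro w
    rw [hQ]
    simp only [AffineSubspace.mem_comap, AffineSubspace.mem_mk',
      Submodule.mem_bot, vsub_eq_sub, sub_eq_zero]
    rfl
  have hle : affineSpan ℝ (c • P) ≤ Q := by
    rw [affineSpan_le]
    rintro _ ⟨p, hp, rfl⟩
    show c • p ∈ Q
    rw [hmem]
    show c * p (Fin.last N) = c
    rw [hheight p hp, mul_one]
  exact (hmem u).1 (hle hu)

lemma vectorSpan_le_ker (hheight : ∀ p ∈ P, p (Fin.last N) = 1) :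
    vectorSpan ℝ P ≤ LinearMap.ker (hfun N) := by
  rw [vectorSpan_def, Submodule.span_le]
  rintro w hw
  rw [Set.mem_vsub] at hw
  obtain ⟨p, hp, q, hq, rfl⟩ := hw
  simp only [SetLike.mem_coe, LinearMap.mem_ker, vsub_eq_sub, map_sub]
  rw [hfun_apply, hfun_apply, hheight p hp, hheight q hq, sub_self]

lemma finrank_ker_hfun : Module.finrank ℝ (LinearMap.ker (hfun N)) = N := by
  have hsurj : Function.Surjective (hfun N) := fun r => ⟨fun _ => r, rfl⟩
  have h1 := LinearMap.finrank_range_add_finrank_ker (hfun N)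
  rw [LinearMap.range_eq_top.2 hsurj] at h1
  simp only [finrank_top, Module.finrank_self] at h1
  have h2 : Module.finrank ℝ (Fin (N+1) → ℝ) = N + 1 := by
    simp [Module.finrank_pi]
  omega

/-- hard direction: the hyperplane `h = c` is inside the affine span of `c • P`. -/
lemma mem_affineSpan_of_hfun (hPne : P.Nonempty)
    (hPdim : Module.finrank ℝ (vectorSpan ℝ P) = N)
    (hheight : ∀ p ∈ P, p (Fin.last N) = 1) {c : ℝ} (hc : c ≠ 0)
    {u : Fin (N+1) → ℝ} (hu : hfun N u = c) : u ∈ affineSpan ℝ (c • P) := by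
  obtain ⟨p₀, hp₀⟩ := hPne
  have hVS : vectorSpan ℝ P = LinearMap.ker (hfun N) := by
    apply Submodule.eq_of_le_of_finrank_le (vectorSpan_le_ker hheight)
    rw [finrank_ker_hfun, hPdim]
  have hVS2 : vectorSpan ℝ P ≤ vectorSpan ℝ (c • P) := by
    rw [vectorSpan_def, Submodule.span_le]
    rintro w hw
    rw [Set.mem_vsub] at hw
    obtain ⟨p, hp, q, hq, rfl⟩ := hw
    have h1 : (c • p) -ᵥ (c • q) ∈ vectorSpan ℝ (c • P) :=
      vsub_mem_vectorSpan ℝ (Set.smul_mem_smul_set hp) (Set.smul_mem_smul_set hq)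
    have h2 : p -ᵥ q = c⁻¹ • ((c • p) -ᵥ (c • q)) := by
      simp only [vsub_eq_sub, smul_sub, smul_smul, inv_mul_cancel₀ hc, one_smul]
    rw [SetLike.mem_coe, h2]
    exact Submodule.smul_mem _ _ h1
  have hker : LinearMap.ker (hfun N) ≤ (affineSpan ℝ (c • P)).direction := by
    rw [direction_affineSpan]
    exact le_trans (le_of_eq hVS.symm) hVS2
  have hcp₀ : c • p₀ ∈ affineSpan ℝ (c • P) :=
    subset_affineSpan ℝ _ (Set.smul_mem_smul_set hp₀)
  have hdiff : u - c • p₀ ∈ LinearMap.ker (hfun N) := by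
    rw [LinearMap.mem_ker, map_sub, hu]
    have : hfun N (c • p₀) = c * p₀ (Fin.last N) := rfl
    rw [this, hheight p₀ hp₀, mul_one, sub_self]
  have := AffineSubspace.vadd_mem_of_mem_direction (hker hdiff) hcp₀
  simpa [vsub_eq_sub, vadd_eq_add, sub_add_cancel] using this


/-- relative interior of the slice lands in the interior of the cone -/
lemma mem_interior_cone (hPne : P.Nonempty)
    (hPdim : Module.finrank ℝ (vectorSpan ℝ P) = N)
    (hheight : ∀ p ∈ P, p (Fin.last N) = 1) {M : ℝ} (hM : 1 ≤ M)
    {x : Fin (N+1) → ℝ} (hx : x ∈ intrinsicInterior ℝ (M • P)) :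
    x ∈ interior (Cone P) := by
  have hM0 : (0:ℝ) < M := lt_of_lt_of_le zero_lt_one hM
  rw [mem_intrinsicInterior] at hx
  obtain ⟨q, hq_int, hq_coe⟩ := hx
  rw [mem_interior_iff_mem_nhds, Metric.mem_nhds_iff] at hq_int
  obtain ⟨ε, hε, hball⟩ := hq_int
  -- key property: any point of the hyperplane h = M close to x is in M • P
  have key : ∀ u : Fin (N+1) → ℝ, hfun N u = M → dist u x < ε → u ∈ M • P := by
    intro u hu hux
    have humem : u ∈ affineSpan ℝ (M • P) :=
      mem_affineSpan_of_hfun hPne hPdim hheight hM0.ne' hu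
    have : (⟨u, humem⟩ : affineSpan ℝ (M • P)) ∈ Metric.ball q ε := by
      rw [Metric.mem_ball, Subtype.dist_eq, hq_coe]
      exact hux
    exact hball this
  -- now fatten the ball to an open ball around x in the cone
  rw [mem_interior_iff_mem_nhds, Metric.mem_nhds_iff]
  set δ : ℝ := min (M/2) (ε / (2 * (1 + ‖x‖))) with hδdef
  have hxnorm : (0:ℝ) < 1 + ‖x‖ := by positivity
  have hδ : 0 < δ := lt_min (by positivity) (by positivity)
  refine ⟨δ, hδ, ?_⟩
  intro w hw
  rw [Metric.mem_ball, dist_eq_norm] at hw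
  set γ : ℝ := hfun N w with hγdef
  have hxh : hfun N x = M := hfun_eq_of_mem_affineSpan hheight (by
    rw [← hq_coe]; exact q.2)
  have hγx : |γ - M| ≤ ‖w - x‖ := by
    have : γ - M = (w - x) (Fin.last N) := by
      rw [hγdef, ← hxh]; simp [hfun_apply]
    rw [this]
    exact norm_le_pi_norm (w - x) (Fin.last N)
  have hδM : δ ≤ M/2 := min_le_left _ _
  have hγpos : M/2 ≤ γ := by
    have := abs_le.1 hγx
    have h2 : ‖w - x‖ < δ := hw
    linarith [this.1]
  have hγ0 : 0 < γ := by linarith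
  set u : Fin (N+1) → ℝ := (M/γ) • w with hudef
  have huh : hfun N u = M := by
    rw [hudef]
    have : hfun N ((M/γ) • w) = (M/γ) * hfun N w := by simp
    rw [this, ← hγdef]
    field_simp
  have hdist : dist u x < ε := by
    rw [dist_eq_norm]
    have hcalc : u - x = (M/γ) • (w - x) + ((M - γ)/γ) • x := by
      rw [hudef]
      have hx' : ((M - γ)/γ) • x = (M/γ) • x - x := by
        rw [sub_div, sub_smul]
        congr 1
        rw [div_self hγ0.ne', one_smul]
      rw [hx', smul_sub]
      abel
    rw [hcalc]
    have h1 : ‖(M/γ) • (w - x)‖ ≤ 2 * ‖w - x‖ := by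
      rw [norm_smul]
      have : ‖(M/γ)‖ = M/γ := by
        rw [Real.norm_eq_abs, abs_of_pos (by positivity)]
      rw [this]
      have hMγ : M/γ ≤ 2 := by
        rw [div_le_iff₀ hγ0]; linarith
      nlinarith [norm_nonneg (w - x)]
    have hγhalf : (1:ℝ)/2 ≤ γ := by linarith
    have habs : |M - γ| ≤ δ := by
      rw [abs_sub_comm]; linarith [le_trans hγx hw.le]
    have h2 : ‖((M - γ)/γ) • x‖ ≤ 2 * δ * ‖x‖ := by
      rw [norm_smul, Real.norm_eq_abs, abs_div, abs_of_pos hγ0]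
      have hfr : |M - γ|/γ ≤ 2 * δ := by
        rw [div_le_iff₀ hγ0]
        nlinarith
      nlinarith [norm_nonneg x]
    have h3 : ‖(M/γ) • (w - x) + ((M - γ)/γ) • x‖ ≤ ‖(M/γ) • (w - x)‖ + ‖((M - γ)/γ) • x‖ :=
      norm_add_le _ _
    have hδε : δ * (2 * (1 + ‖x‖)) ≤ ε := by
      have := min_le_right (M/2) (ε / (2 * (1 + ‖x‖)))
      rw [← hδdef] at this
      exact (le_div_iff₀ (by positivity)).1 this
    nlinarith [norm_nonneg (w - x), norm_nonneg x]
  -- conclude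
  have humem : u ∈ M • P := key u huh hdist
  have hucone : u ∈ Cone P := ((mem_smulP_iff hheight hM0).1 humem).1
  have hwu : w = (γ/M) • u := by
    rw [hudef, smul_smul]
    field_simp
    rw [one_smul]
  rw [hwu]
  exact cone_smul (by positivity) hucone


/-- interior of the cone meets the hyperplane `h = c` inside the relative interior
of the slice `c • P`. -/
lemma mem_intrinsicInterior_slice (hheight : ∀ p ∈ P, p (Fin.last N) = 1)
    {c : ℝ} (hc : 0 < c) {u : Fin (N+1) → ℝ}
    (hu : u ∈ interior (Cone P)) (huh : hfun N u = c) :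
    u ∈ intrinsicInterior ℝ (c • P) := by
  have huP : u ∈ c • P := (mem_smulP_iff hheight hc).2 ⟨interior_subset hu, huh⟩
  have huA : u ∈ affineSpan ℝ (c • P) := subset_affineSpan ℝ _ huP
  rw [mem_intrinsicInterior]
  refine ⟨⟨u, huA⟩, ?_, rfl⟩
  have hopen : IsOpen ((Subtype.val : affineSpan ℝ (c • P) → _) ⁻¹' interior (Cone P)) :=
    isOpen_interior.preimage continuous_subtype_val
  have hsub : (Subtype.val : affineSpan ℝ (c • P) → _) ⁻¹' interior (Cone P) ⊆
      (Subtype.val) ⁻¹' (c • P) := by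
    intro r hr
    have h1 : (r : Fin (N+1) → ℝ) ∈ Cone P := interior_subset hr
    have h2 : hfun N (r : Fin (N+1) → ℝ) = c := hfun_eq_of_mem_affineSpan hheight r.2
    exact (mem_smulP_iff hheight hc).2 ⟨h1, h2⟩
  exact interior_maximal hsub hopen hu

lemma d_lt_n {n d : ℕ} (hdn : d ≤ n) (hPne : P.Nonempty)
    (hNoInt : ∀ z : Fin (N + 1) → ℤ,
      (fun i => (z i : ℝ)) ∉ intrinsicInterior ℝ (((n - d : ℕ) : ℝ) • P)) : d < n := by
  rcases lt_or_eq_of_le hdn with h | h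
  · exact h
  · exfalso
    subst h
    apply hNoInt (fun _ => 0)
    have h0 : ((d - d : ℕ) : ℝ) = 0 := by simp
    rw [h0, Set.zero_smul_set hPne, ← Set.singleton_zero, intrinsicInterior_singleton]
    simp only [Int.cast_zero, Set.mem_singleton_iff]
    rfl


/-- The key separation lemma: a point of the cone whose simplex coordinates vanish only
where `y`'s coordinates are nonpositive (strictly negative where `x`'s are positive)
lies in the interior of the cone. -/
lemma key_interior (hPconv : Convex ℝ P)
    (v : Fin (N+1) → Fin (N+1) → ℝ) (b : (Fin (N+1) → ℝ) → Fin (N+1) → ℝ)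
    (x y z : Fin (N+1) → ℝ)
    (hvP : ∀ i, v i ∈ P)
    (hb : ∀ u : Fin (N+1) → ℝ, u = ∑ i, b u i • v i)
    (hx_int : x ∈ interior (Cone P))
    (hy : y ∈ Cone P)
    (hz : z ∈ Cone P)
    (hbxnn : ∀ i, 0 ≤ b x i)
    (hz0 : ∀ i, 0 ≤ b z i)
    (K1 : ∀ i, b z i = 0 → b y i ≤ 0)
    (K2 : ∀ i, b z i = 0 → 0 < b x i → b y i < 0) :
    z ∈ interior (Cone P) := by
  by_contra hcon
  obtain ⟨f, hf⟩ := geometric_hahn_banach_open_point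
    (cone_convex hPconv).interior isOpen_interior hcon
  have fint_nonpos : ∀ a ∈ interior (Cone P), f a ≤ 0 := by
    intro a ha
    by_contra hpos
    push_neg at hpos
    set t := max 1 ((f z + 1)/(f a)) with ht
    have ht0 : 0 < t := lt_of_lt_of_le zero_lt_one (le_max_left _ _)
    have h1 : f (t • a) < f z := hf _ (interior_cone_smul ht0 ha)
    rw [map_smul, smul_eq_mul] at h1
    have h2 : (f z + 1)/(f a) ≤ t := le_max_right _ _
    rw [div_le_iff₀ hpos] at h2
    nlinarith
  have fx_nonpos : f x ≤ 0 := fint_nonpos x hx_int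
  have fcone_nonpos : ∀ u ∈ Cone P, f u ≤ 0 := by
    intro u hu
    by_contra hpos
    push_neg at hpos
    have hden : 0 < f u - f x := by linarith
    set t := f u / (2*(f u - f x)) with htdef
    have ht0 : 0 < t := by positivity
    have ht1 : t + (1 - t) = 1 := by ring
    have h1t : 0 ≤ 1 - t := by
      have : t ≤ 1/2 := by
        rw [htdef, div_le_iff₀ (by positivity)]
        nlinarith
      linarith
    have hmem := (cone_convex hPconv).combo_interior_self_mem_interior hx_int hu ht0 h1t ht1
    have hle := fint_nonpos _ hmem
    rw [map_add, map_smul, map_smul, smul_eq_mul, smul_eq_mul] at hle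
    have hkey : t * (f u - f x) = f u/2 := by
      rw [htdef]; field_simp
    nlinarith
  have fz_nonneg : 0 ≤ f z := by
    by_contra hneg
    push_neg at hneg
    rcases lt_or_eq_of_le fx_nonpos with hx0 | hx0
    · have ht0 : 0 < f z / (2 * f x) := div_pos_of_neg_of_neg hneg (by linarith)
      have h1 : f ((f z/(2*f x)) • x) < f z := hf _ (interior_cone_smul ht0 hx_int)
      rw [map_smul, smul_eq_mul] at h1
      have heq : f z/(2*f x) * f x = f z / 2 := by
        rw [div_mul_eq_mul_div, mul_comm (2:ℝ) (f x), ← div_div,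
          mul_div_assoc, div_self hx0.ne, mul_one]
      rw [heq] at h1
      linarith
    · have h1 : f x < f z := hf x hx_int
      rw [hx0] at h1
      linarith
  have fz0 : f z = 0 := le_antisymm (fcone_nonpos z hz) fz_nonneg
  have fx_neg : f x < 0 := by
    have := hf x hx_int
    linarith
  set L : Fin (N+1) → ℝ := fun i => -f (v i) with hL
  have hLnn : ∀ i, 0 ≤ L i := by
    intro i
    have := fcone_nonpos _ (subset_cone (hvP i))
    simp only [hL]
    linarith
  have hexp : ∀ u : Fin (N+1) → ℝ, f u = ∑ i, b u i * f (v i) := by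
    intro u
    conv_lhs => rw [hb u]
    rw [map_sum]
    exact Finset.sum_congr rfl fun i _ => by rw [map_smul, smul_eq_mul]
  have hexpL : ∀ u : Fin (N+1) → ℝ, ∑ i, b u i * L i = - f u := by
    intro u
    rw [hexp u, ← Finset.sum_neg_distrib]
    exact Finset.sum_congr rfl fun i _ => by simp only [hL]; ring
  have hterm0 : ∀ i ∈ Finset.univ, b z i * L i = 0 := by
    refine (Finset.sum_eq_zero_iff_of_nonneg fun i _ =>
      mul_nonneg (hz0 i) (hLnn i)).1 ?_
    rw [hexpL z, fz0, neg_zero]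
  have hxpos : 0 < ∑ i, b x i * L i := by
    rw [hexpL x]; linarith
  have hex : ∃ i, 0 < b x i * L i := by
    by_contra hall
    push_neg at hall
    have : ∑ i, b x i * L i ≤ 0 := Finset.sum_nonpos fun i _ => hall i
    linarith
  obtain ⟨i₀, hi₀⟩ := hex
  have hbx₀ : 0 < b x i₀ := by
    rcases lt_or_eq_of_le (hbxnn i₀) with h | h
    · exact h
    · exfalso; rw [← h] at hi₀; simp at hi₀
  have hL₀ : 0 < L i₀ := by
    rcases lt_or_eq_of_le (hLnn i₀) with h | h
    · exact h
    · exfalso; rw [← h] at hi₀; simp at hi₀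
  have hbz₀ : b z i₀ = 0 := by
    have h := hterm0 i₀ (Finset.mem_univ _)
    rcases mul_eq_zero.1 h with h' | h'
    · exact h'
    · exact absurd h' hL₀.ne'
  have hby₀ : b y i₀ < 0 := K2 i₀ hbz₀ hbx₀
  have hy_nonneg : 0 ≤ ∑ i, b y i * L i := by
    rw [hexpL y]
    linarith [fcone_nonpos y hy]
  have hy_neg : ∑ i, b y i * L i < 0 := by
    rw [← Finset.add_sum_erase _ _ (Finset.mem_univ i₀)]
    have h1 : b y i₀ * L i₀ < 0 := mul_neg_of_neg_of_pos hby₀ hL₀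
    have h2 : ∑ i ∈ Finset.univ.erase i₀, b y i * L i ≤ 0 := by
      refine Finset.sum_nonpos fun i _ => ?_
      have h := hterm0 i (Finset.mem_univ _)
      rcases mul_eq_zero.1 h with h' | h'
      · exact mul_nonpos_of_nonpos_of_nonneg (K1 i h') (hLnn i)
      · rw [h', mul_zero]
    linarith
  linarith


def IsLatticePoint {m : ℕ} (w : Fin m → ℝ) : Prop := ∀ i, ∃ z : ℤ, w i = (z : ℝ)

lemma latt_add {m : ℕ} {u w : Fin m → ℝ} (hu : IsLatticePoint u) (hw : IsLatticePoint w) :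
    IsLatticePoint (u + w) := fun i => by
  obtain ⟨a, ha⟩ := hu i; obtain ⟨c, hc⟩ := hw i
  exact ⟨a + c, by simp [ha, hc]⟩

lemma latt_sub {m : ℕ} {u w : Fin m → ℝ} (hu : IsLatticePoint u) (hw : IsLatticePoint w) :
    IsLatticePoint (u - w) := fun i => by
  obtain ⟨a, ha⟩ := hu i; obtain ⟨c, hc⟩ := hw i
  exact ⟨a - c, by simp [ha, hc]⟩

lemma latt_zero {m : ℕ} : IsLatticePoint (0 : Fin m → ℝ) := fun i => ⟨0, by simp⟩

lemma latt_sum {m : ℕ} {ι : Type*} (s : Finset ι) (f : ι → Fin m → ℝ)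
    (h : ∀ i ∈ s, IsLatticePoint (f i)) : IsLatticePoint (∑ i ∈ s, f i) := by
  classical
  induction s using Finset.induction_on with
  | empty => simpa using latt_zero
  | insert _ _ hnot ih =>
    rw [Finset.sum_insert hnot]
    exact latt_add (h _ (Finset.mem_insert_self _ _))
      (ih fun i hi => h i (Finset.mem_insert_of_mem hi))

lemma latt_nsmul {m : ℕ} (k : ℕ) {u : Fin m → ℝ} (hu : IsLatticePoint u) :
    IsLatticePoint ((k : ℝ) • u) := fun i => by
  obtain ⟨a, ha⟩ := hu i
  exact ⟨k * a, by simp [ha]⟩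

lemma linIndep_v (hheight : ∀ p ∈ P, p (Fin.last N) = 1)
    {v : Fin (N+1) → Fin (N+1) → ℝ} (hvmem : ∀ i, v i ∈ P)
    (hvaff : AffineIndependent ℝ v) : LinearIndependent ℝ v := by
  rw [Fintype.linearIndependent_iff]
  intro g hg
  have hgsum : ∑ i, g i = 0 := by
    have h1 : hfun N (∑ i, g i • v i) = 0 := by rw [hg, map_zero]
    rw [map_sum] at h1
    have h2 : ∀ i ∈ Finset.univ, hfun N (g i • v i) = g i := fun i _ => by
      rw [map_smul, smul_eq_mul, hfun_apply, hheight _ (hvmem i), mul_one]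
    rwa [Finset.sum_congr rfl h2] at h1
  intro i
  exact affineIndependent_iff.1 hvaff Finset.univ g hgsum hg i (Finset.mem_univ i)

lemma b_unique {v : Fin (N+1) → Fin (N+1) → ℝ} {b : (Fin (N+1) → ℝ) → Fin (N+1) → ℝ}
    (hlin : LinearIndependent ℝ v)
    (hb : ∀ u : Fin (N+1) → ℝ, u = ∑ i, b u i • v i)
    (u : Fin (N+1) → ℝ) (c : Fin (N+1) → ℝ) (hc : ∑ i, c i • v i = u) :
    ∀ i, c i = b u i := by
  intro i
  have h0 : ∑ j, (c j - b u j) • v j = 0 := by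
    simp only [sub_smul, Finset.sum_sub_distrib]
    rw [hc, ← hb u, sub_self]
  have := Fintype.linearIndependent_iff.1 hlin _ h0 i
  linarith [this]

lemma no_lattice (hPne : P.Nonempty)
    (hPdim : Module.finrank ℝ (vectorSpan ℝ P) = N)
    (hheight : ∀ p ∈ P, p (Fin.last N) = 1) {k : ℕ} (hk : 0 < k)
    (hNoInt : ∀ z : Fin (N + 1) → ℤ,
      (fun i => (z i : ℝ)) ∉ intrinsicInterior ℝ (((k : ℕ) : ℝ) • P))
    {w : Fin (N+1) → ℝ} (hw_int : w ∈ interior (Cone P)) (hwlat : IsLatticePoint w)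
    (hwh : hfun N w = ((k : ℕ) : ℝ)) : False := by
  have hc : (0:ℝ) < ((k : ℕ) : ℝ) := by exact_mod_cast hk
  have hmem := mem_intrinsicInterior_slice hheight hc hw_int hwh
  set zz : Fin (N+1) → ℤ := fun i => (hwlat i).choose with hzz
  have hzw : (fun i => ((zz i : ℤ) : ℝ)) = w := by
    funext i
    exact ((hwlat i).choose_spec).symm
  exact hNoInt zz (hzw ▸ hmem)


end S6

/- **Setup** (Section 2): `P ⊆ ℝ^{n+1}` is an `n`-dimensional lattice polytope contained
in the hyperplane `x_{n+1} = 1`, of degree `d`: `(n−d)P` has no lattice points in its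
relative interior, and `x` is a lattice point in the relative interior of `(n−d+1)P`.
`S ⊆ P` is an `n`-dimensional lattice simplex with vertices `v_0, …, v_n` whose spanned
cone contains `x`, and `b y` gives the unique coefficients of `y` in the basis
`v_0, …, v_n`, i.e. `y = ∑ i, b y i • v i`. -/
/-- (Lemma 2.4 / `bound V-`.) For any point `y` in the cone `σ` spanned
by `P`, one has `|V⁻(y)| ≤ |Z⁺(y)|`; in particular `|V⁻(y)| ≤ |Z| ≤ d`.  Here `Z` is the
set of indices `i` with `b_i(x) = 0`, `V` the set of indices `j` with `b_j(x)` a positive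
integer, and `Z⁺(y)`, `V⁻(y)` the subsets where `b_i(y) > 0`, resp. `b_j(y) < 0`. -/
theorem statement6 (n d : ℕ) (P : Set (Fin (n + 1) → ℝ))
    (v : Fin (n + 1) → Fin (n + 1) → ℝ) (b : (Fin (n + 1) → ℝ) → Fin (n + 1) → ℝ)
    (x : Fin (n + 1) → ℝ)
    (hP : IsLatticePolytope P)
    (hPdim : Module.finrank ℝ (vectorSpan ℝ P) = n)
    (hheight : ∀ p ∈ P, p (Fin.last n) = 1)
    (hdn : d ≤ n)
    (hNoInt : ∀ z : Fin (n + 1) → ℤ,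
      (fun i => (z i : ℝ)) ∉ intrinsicInterior ℝ (((n - d : ℕ) : ℝ) • P))
    (hxint : IsLatticePoint x)
    (hxmem : x ∈ intrinsicInterior ℝ (((n - d + 1 : ℕ) : ℝ) • P))
    (hvint : ∀ i, IsLatticePoint (v i))
    (hvmem : ∀ i, v i ∈ P)
    (hvaff : AffineIndependent ℝ v)
    (hb : ∀ y : Fin (n + 1) → ℝ, y = ∑ i, b y i • v i)
    (hxcone : ∀ i, 0 ≤ b x i)
    (y : Fin (n + 1) → ℝ)
    (hy : ∃ c : ℝ, 0 ≤ c ∧ ∃ p ∈ P, y = c • p) :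
    Set.ncard {j : Fin (n + 1) | (∃ m : ℤ, 0 < m ∧ b x j = (m : ℝ)) ∧ b y j < 0} ≤
        Set.ncard {i : Fin (n + 1) | b x i = 0 ∧ 0 < b y i} ∧
      Set.ncard {j : Fin (n + 1) | (∃ m : ℤ, 0 < m ∧ b x j = (m : ℝ)) ∧ b y j < 0} ≤
        Set.ncard {i : Fin (n + 1) | b x i = 0} ∧
      Set.ncard {i : Fin (n + 1) | b x i = 0} ≤ d := by
  classical
  obtain ⟨VF, hVFne, hVFlat, hPhull⟩ := hP
  have hPconv : Convex ℝ P := hPhull ▸ convex_convexHull ℝ _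
  have hPne : P.Nonempty := by
    obtain ⟨w, hw⟩ := hVFne
    exact ⟨w, hPhull ▸ subset_convexHull ℝ _ hw⟩
  have hdlt : d < n := S6.d_lt_n hdn hPne hNoInt
  set M : ℝ := ((n - d + 1 : ℕ) : ℝ) with hMdef
  have hM1 : (1:ℝ) ≤ M := by
    rw [hMdef]; exact_mod_cast Nat.le_add_left 1 (n - d)
  have hM0 : (0:ℝ) < M := by linarith
  have hMnd : M = ((n - d : ℕ) : ℝ) + 1 := by rw [hMdef]; push_cast; ring
  have hnd1 : (1:ℝ) ≤ ((n - d : ℕ) : ℝ) := by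
    have : 1 ≤ n - d := by omega
    exact_mod_cast this
  have hx_int : x ∈ interior (S6.Cone P) :=
    S6.mem_interior_cone hPne hPdim hheight hM1 hxmem
  have hy_cone : y ∈ S6.Cone P := hy
  have hlin : LinearIndependent ℝ v := S6.linIndep_v hheight hvmem hvaff
  have hbu : ∀ (u : Fin (n+1) → ℝ) (c : Fin (n+1) → ℝ),
      ∑ i, c i • v i = u → ∀ i, c i = b u i := S6.b_unique hlin hb
  have hfv : ∀ i, S6.hfun n (v i) = 1 := fun i => hheight _ (hvmem i)
  have hfsum : ∀ u : Fin (n+1) → ℝ, S6.hfun n u = ∑ i, b u i := by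
    intro u
    conv_lhs => rw [hb u]
    rw [map_sum]
    exact Finset.sum_congr rfl fun i _ => by
      rw [map_smul, smul_eq_mul, hfv i, mul_one]
  have hxP : x ∈ M • P := intrinsicInterior_subset hxmem
  have hfx : S6.hfun n x = M := ((S6.mem_smulP_iff hheight hM0).1 hxP).2
  -- Finsets
  set Vm : Finset (Fin (n+1)) :=
    Finset.univ.filter (fun j => (∃ m : ℤ, 0 < m ∧ b x j = (m:ℝ)) ∧ b y j < 0) with hVmdef
  set Zp : Finset (Fin (n+1)) :=
    Finset.univ.filter (fun i => b x i = 0 ∧ 0 < b y i) with hZpdef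
  set Zf : Finset (Fin (n+1)) :=
    Finset.univ.filter (fun i => b x i = 0) with hZfdef
  have hVm_mem : ∀ j, j ∈ Vm ↔ ((∃ m : ℤ, 0 < m ∧ b x j = (m:ℝ)) ∧ b y j < 0) := by
    intro j; rw [hVmdef]; simp
  have hZp_mem : ∀ i, i ∈ Zp ↔ (b x i = 0 ∧ 0 < b y i) := by
    intro i; rw [hZpdef]; simp
  have hZf_mem : ∀ i, i ∈ Zf ↔ b x i = 0 := by
    intro i; rw [hZfdef]; simp
  have hVm_one : ∀ j ∈ Vm, (1:ℝ) ≤ b x j := by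
    intro j hj
    obtain ⟨⟨m, hm, hbm⟩, _⟩ := (hVm_mem j).1 hj
    rw [hbm]
    exact_mod_cast hm
  have hVm_neg : ∀ j ∈ Vm, b y j < 0 := fun j hj => ((hVm_mem j).1 hj).2
  have hdisj : ∀ i, i ∈ Zp → i ∉ Vm := by
    intro i hi hvi
    have h1 := ((hZp_mem i).1 hi).1
    have h2 := hVm_one i hvi
    rw [h1] at h2
    linarith
  -- ncard identifications
  have hcard1 : Set.ncard {j : Fin (n + 1) | (∃ m : ℤ, 0 < m ∧ b x j = (m : ℝ)) ∧ b y j < 0}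
      = Vm.card := by
    rw [← Set.ncard_coe_finset]
    congr 1
    ext j
    simp [hVm_mem j]
  have hcard2 : Set.ncard {i : Fin (n + 1) | b x i = 0 ∧ 0 < b y i} = Zp.card := by
    rw [← Set.ncard_coe_finset]
    congr 1
    ext i
    simp [hZp_mem i]
  have hcard3 : Set.ncard {i : Fin (n + 1) | b x i = 0} = Zf.card := by
    rw [← Set.ncard_coe_finset]
    congr 1
    ext i
    simp [hZf_mem i]
  -- step 1 : Vm.card ≤ Zp.card
  have step1 : Vm.card ≤ Zp.card := by
    by_contra hcon
    push_neg at hcon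
    set c : Fin (n+1) → ℝ :=
      fun i => b x i + (if i ∈ Zp then (1:ℝ) else 0) - (if i ∈ Vm then (1:ℝ) else 0) with hcdef
    set z : Fin (n+1) → ℝ := x + (∑ i ∈ Zp, v i) - (∑ j ∈ Vm, v j) with hzdef
    have hzc : ∑ i, c i • v i = z := by
      rw [hzdef]
      simp only [hcdef, sub_smul, add_smul, ite_smul, one_smul, zero_smul,
        Finset.sum_sub_distrib, Finset.sum_add_distrib]
      rw [← hb x]
      congr 1 <;> [skip; rw [Finset.sum_ite_mem, Finset.univ_inter]]
      congr 1
      rw [Finset.sum_ite_mem, Finset.univ_inter]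
    have hbz : ∀ i, b z i = c i := fun i => (hbu z c hzc i).symm
    have hcnn : ∀ i, 0 ≤ c i := by
      intro i
      have hci : c i = (b x i + if i ∈ Zp then (1:ℝ) else 0) - if i ∈ Vm then (1:ℝ) else 0 := rfl
      rw [hci]
      by_cases hzp : i ∈ Zp
      · have hnv := hdisj i hzp
        rw [if_pos hzp, if_neg hnv]
        linarith [hxcone i]
      · by_cases hvm : i ∈ Vm
        · simp only [if_neg hzp, if_pos hvm]
          linarith [hVm_one i hvm]
        · simp only [if_neg hzp, if_neg hvm]
          linarith [hxcone i]
    have hz0 : ∀ i, 0 ≤ b z i := fun i => (hbz i) ▸ hcnn i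
    have hzcone : z ∈ S6.Cone P := by
      rw [← hzc]
      exact S6.cone_sum hPconv hPne _ _ fun i _ =>
        S6.cone_smul (hcnn i) (S6.subset_cone (hvmem i))
    have K1 : ∀ i, b z i = 0 → b y i ≤ 0 := by
      intro i hi
      rw [hbz i, hcdef] at hi
      by_cases hzp : i ∈ Zp
      · exfalso
        have h1 := ((hZp_mem i).1 hzp).1
        have h2 := hdisj i hzp
        simp only [hzp, if_pos, if_neg h2, h1] at hi
        norm_num at hi
      · by_cases hvm : i ∈ Vm
        · exact le_of_lt (hVm_neg i hvm)
        · simp only [if_neg hzp, if_neg hvm] at hi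
          have hbx0 : b x i = 0 := by linarith
          by_contra hpos
          push_neg at hpos
          exact hzp ((hZp_mem i).2 ⟨hbx0, hpos⟩)
    have K2 : ∀ i, b z i = 0 → 0 < b x i → b y i < 0 := by
      intro i hi hxi
      rw [hbz i, hcdef] at hi
      by_cases hzp : i ∈ Zp
      · exfalso
        have h1 := ((hZp_mem i).1 hzp).1
        linarith
      · by_cases hvm : i ∈ Vm
        · exact hVm_neg i hvm
        · exfalso
          simp only [if_neg hzp, if_neg hvm] at hi
          linarith
    have hz_int : z ∈ interior (S6.Cone P) :=
      S6.key_interior hPconv v b x y z hvmem hb hx_int hy_cone hzcone hxcone hz0 K1 K2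
    set pad : ℕ := Vm.card - Zp.card - 1 with hpaddef
    set z' : Fin (n+1) → ℝ := z + (pad:ℝ) • v 0 with hz'def
    have hz'_int : z' ∈ interior (S6.Cone P) :=
      S6.interior_add_cone hPconv hz_int
        (S6.cone_smul (by positivity) (S6.subset_cone (hvmem 0)))
    have hpad : (pad:ℝ) + Zp.card + 1 = Vm.card := by
      have : pad + Zp.card + 1 = Vm.card := by omega
      exact_mod_cast this
    have hfz : S6.hfun n z = M + Zp.card - Vm.card := by
      rw [hzdef, map_sub, map_add, map_sum, map_sum, hfx]
      rw [Finset.sum_congr rfl fun i _ => hfv i, Finset.sum_congr rfl fun i _ => hfv i]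
      simp
    have hfz' : S6.hfun n z' = ((n - d : ℕ) : ℝ) := by
      rw [hz'def, map_add, map_smul, smul_eq_mul, hfv 0, mul_one, hfz]
      rw [hMnd]
      linarith
    have hzlat : IsLatticePoint z' := by
      refine S6.latt_add (S6.latt_sub (S6.latt_add hxint ?_) ?_) (S6.latt_nsmul pad (hvint 0))
      · exact S6.latt_sum _ _ fun i _ => hvint i
      · exact S6.latt_sum _ _ fun i _ => hvint i
    exact S6.no_lattice hPne hPdim hheight (k := n - d) (by omega) hNoInt hz'_int hzlat hfz'
  -- step 3 : Zf.card ≤ d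
  have step3 : Zf.card ≤ d := by
    by_contra hcon
    push_neg at hcon
    have hsumbx : ∑ i, b x i = M := by rw [← hfsum x, hfx]
    set Tf : Finset (Fin (n+1)) := Finset.univ.filter (fun i => ¬ (b x i = 0)) with hTfdef
    have hcards : Zf.card + Tf.card = n + 1 := by
      rw [hZfdef, hTfdef]
      rw [Finset.card_filter_add_card_filter_not]
      simp
    have hTsum : ∑ i ∈ Tf, b x i = M := by
      have h0 := Finset.sum_filter_add_sum_filter_not Finset.univ (fun i => b x i = 0) (b x)
      rw [hsumbx] at h0
      have hz0' : ∑ i ∈ Finset.filter (fun i => b x i = 0) Finset.univ, b x i = 0 :=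
        Finset.sum_eq_zero fun i hi => by simpa using (Finset.mem_filter.1 hi).2
      rw [hz0', zero_add] at h0
      rw [hTfdef]
      exact h0
    by_cases hex : ∃ i, 1 < b x i
    · obtain ⟨istar, histar⟩ := hex
      set β : ℝ := b x istar with hβdef
      have hβ1 : 1 < β := histar
      have hβ0 : 0 < β := by linarith
      set q : Fin (n+1) → ℝ := x - β • v istar with hqdef
      set c3 : Fin (n+1) → ℝ := fun i => b x i - (if i = istar then β else 0) with hc3def
      have hc3nn : ∀ i, 0 ≤ c3 i := by
        intro i
        rw [hc3def]
        by_cases h : i = istar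
        · subst h; simp [hβdef]
        · simp only [if_neg h]
          linarith [hxcone i]
      have hqc : ∑ i, c3 i • v i = q := by
        rw [hqdef]
        simp only [hc3def, sub_smul, ite_smul, zero_smul, Finset.sum_sub_distrib]
        rw [← hb x]
        congr 1
        rw [Finset.sum_ite_eq' Finset.univ istar (fun i => β • v i)]
        simp
      have hq_cone : q ∈ S6.Cone P := by
        rw [← hqc]
        exact S6.cone_sum hPconv hPne _ _ fun i _ =>
          S6.cone_smul (hc3nn i) (S6.subset_cone (hvmem i))
      have hcombo : (1 - β⁻¹) • x + β⁻¹ • q = x - v istar := by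
        rw [hqdef, smul_sub, smul_smul, inv_mul_cancel₀ hβ0.ne', one_smul, sub_smul, one_smul]
        abel
      have hz3_int : x - v istar ∈ interior (S6.Cone P) := by
        rw [← hcombo]
        refine (S6.cone_convex hPconv).combo_interior_self_mem_interior hx_int hq_cone ?_ ?_ ?_
        · have : β⁻¹ < 1 := inv_lt_one_of_one_lt₀ hβ1
          linarith
        · positivity
        · ring
      have hfz3 : S6.hfun n (x - v istar) = ((n - d : ℕ) : ℝ) := by
        rw [map_sub, hfx, hfv istar, hMnd]
        ring
      exact S6.no_lattice hPne hPdim hheight (k := n - d) (by omega) hNoInt hz3_int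
        (S6.latt_sub hxint (hvint istar)) hfz3
    · push_neg at hex
      have hTbound : ∑ i ∈ Tf, b x i ≤ (Tf.card : ℝ) := by
        have := Finset.sum_le_card_nsmul Tf (b x) 1 fun i _ => hex i
        simpa using this
      have hTcard : Tf.card ≤ n - d := by omega
      have hTcast : (Tf.card : ℝ) ≤ ((n - d : ℕ) : ℝ) := by exact_mod_cast hTcard
      rw [hTsum, hMnd] at hTbound
      linarith
  refine ⟨?_, ?_, ?_⟩
  · rw [hcard1, hcard2]; exact step1
  · rw [hcard1, hcard3]
    refine le_trans step1 (Finset.card_le_card ?_)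
    intro i hi
    exact (hZf_mem i).2 ((hZp_mem i).1 hi).1
  · rw [hcard3]; exact step3


end
end

section
/- In the setup below, if y is a point in the cone spanned by k vertices of P, then |V^+(y)| ≤ |Z^−(y)| + k. -/
open scoped BigOperators Pointwise

noncomputable section

namespace Statement7Aux

open Set Filter

variable {N : ℕ}

/-- The cone over `P`. -/
def cone (P : Set (Fin (N + 1) → ℝ)) : Set (Fin (N + 1) → ℝ) :=
  {z | ∃ l : ℝ, ∃ p ∈ P, 0 ≤ l ∧ z = l • p}

theorem smul_mem_cone {P : Set (Fin (N + 1) → ℝ)} {p : Fin (N + 1) → ℝ} (hp : p ∈ P) {l : ℝ}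
    (hl : 0 ≤ l) : l • p ∈ cone P := ⟨l, p, hp, hl, rfl⟩

theorem mem_cone_self {P : Set (Fin (N + 1) → ℝ)} {p : Fin (N + 1) → ℝ} (hp : p ∈ P) :
    p ∈ cone P := by simpa using smul_mem_cone hp zero_le_one

theorem zero_mem_cone {P : Set (Fin (N + 1) → ℝ)} (hne : P.Nonempty) : 0 ∈ cone P := by
  obtain ⟨p, hp⟩ := hne
  exact ⟨0, p, hp, le_rfl, (zero_smul ℝ p).symm⟩

theorem smul_mem_cone' {P : Set (Fin (N + 1) → ℝ)} {z : Fin (N + 1) → ℝ} {a : ℝ} (ha : 0 ≤ a)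
    (hz : z ∈ cone P) : a • z ∈ cone P := by
  obtain ⟨l, p, hp, hl, rfl⟩ := hz
  exact ⟨a * l, p, hp, mul_nonneg ha hl, (smul_smul a l p)⟩

theorem add_mem_cone {P : Set (Fin (N + 1) → ℝ)} (hconv : Convex ℝ P)
    {z₁ z₂ : Fin (N + 1) → ℝ} (h₁ : z₁ ∈ cone P) (h₂ : z₂ ∈ cone P) : z₁ + z₂ ∈ cone P := by
  obtain ⟨l₁, p₁, hp₁, hl₁, rfl⟩ := h₁
  obtain ⟨l₂, p₂, hp₂, hl₂, rfl⟩ := h₂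
  rcases eq_or_lt_of_le (add_nonneg hl₁ hl₂ : (0:ℝ) ≤ l₁ + l₂) with h | h
  · have hl₁0 : l₁ = 0 := by linarith
    have hl₂0 : l₂ = 0 := by linarith
    refine ⟨0, p₁, hp₁, le_rfl, ?_⟩
    simp [hl₁0, hl₂0]
  · refine ⟨l₁ + l₂, (l₁ / (l₁ + l₂)) • p₁ + (l₂ / (l₁ + l₂)) • p₂,
      hconv hp₁ hp₂ (by positivity) (by positivity) (by field_simp), h.le, ?_⟩
    rw [smul_add, smul_smul, smul_smul]
    rw [mul_div_cancel₀ _ h.ne', mul_div_cancel₀ _ h.ne']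

theorem sum_mem_cone {P : Set (Fin (N + 1) → ℝ)} (hconv : Convex ℝ P) (hne : P.Nonempty)
    {ι : Type*} (s : Finset ι) (f : ι → Fin (N + 1) → ℝ) (h : ∀ i ∈ s, f i ∈ cone P) :
    ∑ i ∈ s, f i ∈ cone P := by
  classical
  induction s using Finset.induction with
  | empty => simpa using zero_mem_cone hne
  | insert _ _ hnotmem ih =>
    rename_i a s
    rw [Finset.sum_insert hnotmem]
    exact add_mem_cone hconv (h a (Finset.mem_insert_self a s))
      (ih fun i hi => h i (Finset.mem_insert_of_mem hi))

theorem add_mem_interior {S : Set (Fin (N + 1) → ℝ)}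
    (hadd : ∀ ⦃a b : Fin (N + 1) → ℝ⦄, a ∈ S → b ∈ S → a + b ∈ S)
    {z s : Fin (N + 1) → ℝ} (hz : z ∈ interior S) (hs : s ∈ S) : z + s ∈ interior S := by
  obtain ⟨U, hUS, hUo, hzU⟩ := mem_interior.1 hz
  refine mem_interior.2 ⟨(· + s) '' U, ?_, (isOpenMap_add_right s) U hUo, ⟨z, hzU, rfl⟩⟩
  rintro _ ⟨a, ha, rfl⟩
  exact hadd (hUS ha) hs

theorem smul_mem_interior {S : Set (Fin (N + 1) → ℝ)}
    (hsm : ∀ ⦃a : ℝ⦄ ⦃z : Fin (N + 1) → ℝ⦄, 0 ≤ a → z ∈ S → a • z ∈ S)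
    {z : Fin (N + 1) → ℝ} {α : ℝ} (hα : 0 < α) (hz : z ∈ interior S) :
    α • z ∈ interior S := by
  obtain ⟨U, hUS, hUo, hzU⟩ := mem_interior.1 hz
  refine mem_interior.2 ⟨(α • ·) '' U, ?_, (isOpenMap_smul₀ hα.ne') U hUo, ⟨z, hzU, rfl⟩⟩
  rintro _ ⟨a, ha, rfl⟩
  exact hsm hα.le (hUS ha)

theorem lat_add {u w : Fin N → ℝ} (hu : IsLatticePoint u) (hw : IsLatticePoint w) :
    IsLatticePoint (u + w) := by
  intro i
  obtain ⟨a, ha⟩ := hu i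
  obtain ⟨b, hbb⟩ := hw i
  exact ⟨a + b, by push_cast [Pi.add_apply, ha, hbb]; ring⟩

theorem lat_sub {u w : Fin N → ℝ} (hu : IsLatticePoint u) (hw : IsLatticePoint w) :
    IsLatticePoint (u - w) := by
  intro i
  obtain ⟨a, ha⟩ := hu i
  obtain ⟨b, hbb⟩ := hw i
  exact ⟨a - b, by push_cast [Pi.sub_apply, ha, hbb]; ring⟩

theorem lat_sum {ι : Type*} (s : Finset ι) (f : ι → Fin N → ℝ)
    (h : ∀ i ∈ s, IsLatticePoint (f i)) : IsLatticePoint (∑ i ∈ s, f i) := by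
  classical
  induction s using Finset.induction with
  | empty => exact fun i => ⟨0, by simp⟩
  | insert _ _ hnotmem ih =>
    rename_i a s
    rw [Finset.sum_insert hnotmem]
    exact lat_add (h a (Finset.mem_insert_self a s))
      (ih fun i hi => h i (Finset.mem_insert_of_mem hi))

theorem lat_nsmul {u : Fin N → ℝ} (hu : IsLatticePoint u) (m : ℕ) :
    IsLatticePoint ((m : ℝ) • u) := by
  intro i
  obtain ⟨a, ha⟩ := hu i
  exact ⟨m * a, by push_cast [Pi.smul_apply, ha, smul_eq_mul]; ring⟩

theorem mem_affineSpan_smul_iff {P : Set (Fin (N + 1) → ℝ)} (hPne : P.Nonempty)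
    (hheight : ∀ p ∈ P, p (Fin.last N) = 1)
    (hPdim : Module.finrank ℝ (vectorSpan ℝ P) = N)
    {c : ℝ} (hc : c ≠ 0) (z : Fin (N + 1) → ℝ) :
    z ∈ affineSpan ℝ (c • P) ↔ z (Fin.last N) = c := by
  obtain ⟨p₀, hp₀⟩ := hPne
  set π : (Fin (N + 1) → ℝ) →ₗ[ℝ] ℝ :=
    LinearMap.proj (R := ℝ) (φ := fun _ : Fin (N + 1) => ℝ) (Fin.last N) with hπ
  set W := LinearMap.ker π with hWdef
  have hWmem : ∀ u : Fin (N + 1) → ℝ, u ∈ W ↔ u (Fin.last N) = 0 := by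
    intro u; simp [hWdef, LinearMap.mem_ker, hπ]
  have hWrank : Module.finrank ℝ W = N := by
    have hsurj : Function.Surjective π := fun r => ⟨fun _ => r, rfl⟩
    have h1 := LinearMap.finrank_range_add_finrank_ker π
    rw [LinearMap.range_eq_top.2 hsurj, finrank_top] at h1
    have h2 : Module.finrank ℝ (Fin (N + 1) → ℝ) = N + 1 := Module.finrank_fin_fun ℝ
    rw [h2, Module.finrank_self] at h1
    rw [hWdef]
    omega
  have hvs : vectorSpan ℝ P = W := by
    have hle : vectorSpan ℝ P ≤ W := by
      rw [vectorSpan_def]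
      apply Submodule.span_le.2
      rintro u hu
      obtain ⟨p, hp, q, hq, rfl⟩ := Set.mem_vsub.1 hu
      have : (p - q) (Fin.last N) = 0 := by
        simp [Pi.sub_apply, hheight p hp, hheight q hq]
      exact (hWmem _).2 this
    exact Submodule.eq_of_le_of_finrank_le hle (by rw [hPdim, hWrank])
  have hcp₀mem : c • p₀ ∈ c • P := Set.smul_mem_smul_set hp₀
  have hcp₀ : c • p₀ ∈ affineSpan ℝ (c • P) := subset_affineSpan ℝ _ hcp₀mem
  have hcp₀last : (c • p₀) (Fin.last N) = c := by
    simp [Pi.smul_apply, hheight p₀ hp₀]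
  constructor
  · intro hz
    have hdir : z -ᵥ c • p₀ ∈ (affineSpan ℝ (c • P)).direction :=
      AffineSubspace.vsub_mem_direction hz hcp₀
    rw [direction_affineSpan] at hdir
    have hle2 : vectorSpan ℝ (c • P) ≤ W := by
      rw [vectorSpan_def]
      apply Submodule.span_le.2
      rintro u hu
      obtain ⟨a, ha, b2, hb2, rfl⟩ := Set.mem_vsub.1 hu
      obtain ⟨p, hp, rfl⟩ := Set.mem_smul_set.1 ha
      obtain ⟨q, hq, rfl⟩ := Set.mem_smul_set.1 hb2
      have : (c • p - c • q) (Fin.last N) = 0 := by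
        simp [Pi.sub_apply, Pi.smul_apply, hheight p hp, hheight q hq]
      exact (hWmem _).2 this
    have h3 := (hWmem _).1 (hle2 hdir)
    have h4 : (z - c • p₀) (Fin.last N) = 0 := h3
    rw [Pi.sub_apply, hcp₀last] at h4
    linarith
  · intro hz
    have hWle : W ≤ vectorSpan ℝ (c • P) := by
      rw [← hvs, vectorSpan_def]
      apply Submodule.span_le.2
      rintro u hu
      obtain ⟨p, hp, q, hq, rfl⟩ := Set.mem_vsub.1 hu
      have h1 : c • p -ᵥ c • q ∈ vectorSpan ℝ (c • P) :=
        vsub_mem_vectorSpan ℝ (Set.smul_mem_smul_set hp) (Set.smul_mem_smul_set hq)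
      have h2 : p -ᵥ q = c⁻¹ • (c • p -ᵥ c • q) := by
        rw [vsub_eq_sub, vsub_eq_sub, smul_sub, smul_smul, smul_smul, inv_mul_cancel₀ hc, one_smul, one_smul]
      rw [h2]
      exact Submodule.smul_mem _ _ h1
    have hdirmem : z -ᵥ c • p₀ ∈ (affineSpan ℝ (c • P)).direction := by
      rw [direction_affineSpan]
      apply hWle
      refine (hWmem _).2 ?_
      show (z - c • p₀) (Fin.last N) = 0
      rw [Pi.sub_apply, hcp₀last, hz, sub_self]
    have hmem := AffineSubspace.vadd_mem_of_mem_direction hdirmem hcp₀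
    have hvv : (z -ᵥ c • p₀) +ᵥ c • p₀ = z := vsub_vadd z (c • p₀)
    rwa [hvv] at hmem


end Statement7Aux


/- **Setup** (Section 2): `P ⊆ ℝ^{n+1}` is an `n`-dimensional lattice polytope contained
in the hyperplane `x_{n+1} = 1`, of degree `d`: `(n−d)P` has no lattice points in its
relative interior, and `x` is a lattice point in the relative interior of `(n−d+1)P`.
`S ⊆ P` is an `n`-dimensional lattice simplex with vertices `v_0, …, v_n` whose spanned
cone contains `x`, and `b y` gives the unique coefficients of `y` in the basis
`v_0, …, v_n`, i.e. `y = ∑ i, b y i • v i`. -/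
set_option maxHeartbeats 4000000 in
/-- (Lemma 2.5 / `bound V+`.) If `y` is a point in the cone spanned by
`k` vertices of `P`, then `|V⁺(y)| ≤ |Z⁻(y)| + k`. -/
theorem statement7 (n d : ℕ) (P : Set (Fin (n + 1) → ℝ))
    (v : Fin (n + 1) → Fin (n + 1) → ℝ) (b : (Fin (n + 1) → ℝ) → Fin (n + 1) → ℝ)
    (x : Fin (n + 1) → ℝ)
    (hP : IsLatticePolytope P)
    (hPdim : Module.finrank ℝ (vectorSpan ℝ P) = n)
    (hheight : ∀ p ∈ P, p (Fin.last n) = 1)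
    (hdn : d ≤ n)
    (hNoInt : ∀ z : Fin (n + 1) → ℤ,
      (fun i => (z i : ℝ)) ∉ intrinsicInterior ℝ (((n - d : ℕ) : ℝ) • P))
    (hxint : IsLatticePoint x)
    (hxmem : x ∈ intrinsicInterior ℝ (((n - d + 1 : ℕ) : ℝ) • P))
    (hvint : ∀ i, IsLatticePoint (v i))
    (hvmem : ∀ i, v i ∈ P)
    (hvaff : AffineIndependent ℝ v)
    (hb : ∀ y : Fin (n + 1) → ℝ, y = ∑ i, b y i • v i)
    (hxcone : ∀ i, 0 ≤ b x i)
    (k : ℕ) (y : Fin (n + 1) → ℝ)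
    (hy : ∃ (w : Fin k → Fin (n + 1) → ℝ) (c : Fin k → ℝ),
      (∀ t, w t ∈ Set.extremePoints ℝ P) ∧ (∀ t, 0 ≤ c t) ∧ y = ∑ t, c t • w t) :
    Set.ncard {j : Fin (n + 1) | (∃ m : ℤ, 0 < m ∧ b x j = (m : ℝ)) ∧ 0 < b y j} ≤
      Set.ncard {i : Fin (n + 1) | b x i = 0 ∧ b y i < 0} + k := by
  classical
  obtain ⟨w, c, hwext, hcnn, hyeq⟩ := hy
  obtain ⟨Vf, hVne, hVlat, hPeq⟩ := hP
  have hPconv : Convex ℝ P := hPeq ▸ convex_convexHull ℝ _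
  have hPne : P.Nonempty := by
    obtain ⟨v₀, hv₀⟩ := hVne
    exact ⟨v₀, hPeq ▸ subset_convexHull ℝ _ hv₀⟩
  rcases Nat.lt_or_ge d n with hdlt | hdge
  swap
  · exfalso
    have hnd : n - d = 0 := by omega
    have h0 : (((n - d : ℕ) : ℝ)) = 0 := by rw [hnd]; norm_num
    refine hNoInt 0 ?_
    rw [h0, Set.zero_smul_set hPne]
    have h1 : ((0 : Set (Fin (n + 1) → ℝ))) = {(0 : Fin (n + 1) → ℝ)} := rfl
    rw [h1, intrinsicInterior_singleton]
    show (fun _ : Fin (n+1) => ((0:ℤ):ℝ)) ∈ ({0} : Set (Fin (n + 1) → ℝ))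
    simp only [Int.cast_zero, Set.mem_singleton_iff]
    rfl
  have hm1 : 1 ≤ n - d := by omega
  set m : ℕ := n - d with hmdef
  set creal : ℝ := ((m + 1 : ℕ) : ℝ) with hcrealdef
  have hcreal : creal = (m : ℝ) + 1 := by rw [hcrealdef]; push_cast; ring
  have hcpos : 0 < creal := by rw [hcreal]; positivity
  have hcne : creal ≠ 0 := hcpos.ne'
  have hmpos : (0 : ℝ) < ((m : ℕ) : ℝ) := by exact_mod_cast Nat.pos_of_ne_zero (by omega)
  have hmne : ((m : ℕ) : ℝ) ≠ 0 := hmpos.ne'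
  set L := Fin.last n with hLdef
  set σ := Statement7Aux.cone P with hσdef
  have hσadd : ∀ ⦃a b₂ : Fin (n + 1) → ℝ⦄, a ∈ σ → b₂ ∈ σ → a + b₂ ∈ σ :=
    fun a b₂ ha hb₂ => Statement7Aux.add_mem_cone hPconv ha hb₂
  have hσsmul : ∀ ⦃a : ℝ⦄ ⦃z : Fin (n + 1) → ℝ⦄, 0 ≤ a → z ∈ σ → a • z ∈ σ :=
    fun a z ha hz => Statement7Aux.smul_mem_cone' ha hz
  have hspan : ∀ (cc : ℝ), cc ≠ 0 → ∀ z : Fin (n + 1) → ℝ,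
      z ∈ affineSpan ℝ (cc • P) ↔ z L = cc :=
    fun cc hcc z => Statement7Aux.mem_affineSpan_smul_iff hPne hheight hPdim hcc z
  have hσlast : ∀ z ∈ σ, 0 ≤ z L ∧ (z L = 0 → z = 0) := by
    rintro z ⟨l, p, hp, hl, rfl⟩
    constructor
    · rw [Pi.smul_apply, smul_eq_mul, hheight p hp, mul_one]; exact hl
    · intro h0
      rw [Pi.smul_apply, smul_eq_mul, hheight p hp, mul_one] at h0
      rw [h0, zero_smul]
  -- x is in the interior of the cone σ
  have hxIntσ : x ∈ interior σ := by
    obtain ⟨x₁, hx₁int, hx₁eq⟩ := hxmem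
    obtain ⟨U₀, hU₀open, hU₀eq⟩ := isOpen_induced_iff.1
      (isOpen_interior (s := ((↑) ⁻¹' (creal • P) : Set (affineSpan ℝ (creal • P)))))
    have hxspan : x ∈ affineSpan ℝ (creal • P) := by rw [← hx₁eq]; exact x₁.2
    have hxU₀ : x ∈ U₀ := by
      have h2 : x₁ ∈ ((↑) ⁻¹' U₀ : Set (affineSpan ℝ (creal • P))) := by
        rw [hU₀eq]; exact hx₁int
      rw [← hx₁eq]; exact h2
    have hU₀sub : ∀ z : Fin (n + 1) → ℝ, z ∈ U₀ → z L = creal → z ∈ creal • P := by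
      intro z hzU hzlast
      have hzspan : z ∈ affineSpan ℝ (creal • P) := (hspan creal hcne z).2 hzlast
      have h3 : (⟨z, hzspan⟩ : affineSpan ℝ (creal • P)) ∈ ((↑) ⁻¹' U₀ :
          Set (affineSpan ℝ (creal • P))) := hzU
      rw [hU₀eq] at h3
      have h4 : (⟨z, hzspan⟩ : affineSpan ℝ (creal • P)) ∈ ((↑) ⁻¹' (creal • P) :
          Set (affineSpan ℝ (creal • P))) := interior_subset h3
      exact h4
    have hxlast : x L = creal := (hspan creal hcne x).1 hxspan
    set U : Set (Fin (n + 1) → ℝ) :=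
      {z | 0 < z L} ∩ (fun z => (creal / z L) • z) ⁻¹' U₀ with hUdef
    have hUopen : IsOpen U := by
      apply ContinuousOn.isOpen_inter_preimage ?_ ?_ hU₀open
      · exact (continuousOn_const.div (continuous_apply L).continuousOn
          (fun z hz => ne_of_gt hz)).smul continuousOn_id
      · exact isOpen_lt continuous_const (continuous_apply L)
    have hxU : x ∈ U := by
      constructor
      · show 0 < x L; rw [hxlast]; exact hcpos
      · show (creal / x L) • x ∈ U₀
        rw [hxlast, div_self hcne, one_smul]; exact hxU₀
    have hUσ : U ⊆ σ := by
      rintro z ⟨hz1, hz2⟩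
      have hz1' : (0 : ℝ) < z L := hz1
      have hwl : ((creal / z L) • z) L = creal := by
        rw [Pi.smul_apply, smul_eq_mul]; field_simp
      have hwP2 := hU₀sub _ hz2 hwl
      obtain ⟨p, hp, hpe⟩ := Set.mem_smul_set.1 hwP2
      have h5 := congrArg (fun u : Fin (n + 1) → ℝ => (z L / creal) • u) hpe.symm
      simp only [smul_smul] at h5
      have e1 : z L / creal * (creal / z L) = 1 := by field_simp
      have e2 : z L / creal * creal = z L := by field_simp
      rw [e1, e2, one_smul] at h5
      exact ⟨z L, p, hp, hz1'.le, h5⟩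
    exact mem_interior.2 ⟨U, hUσ, hUopen, hxU⟩
  -- counting setup
  set Af : Finset (Fin (n + 1)) :=
    Finset.univ.filter (fun j => (∃ mm : ℤ, 0 < mm ∧ b x j = (mm : ℝ)) ∧ 0 < b y j) with hAfdef
  set Bf : Finset (Fin (n + 1)) :=
    Finset.univ.filter (fun i => b x i = 0 ∧ b y i < 0) with hBfdef
  have hAset : {j : Fin (n + 1) | (∃ mm : ℤ, 0 < mm ∧ b x j = (mm : ℝ)) ∧ 0 < b y j}
      = (Af : Set (Fin (n + 1))) := by
    ext j; simp [hAfdef]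
  have hBset : {i : Fin (n + 1) | b x i = 0 ∧ b y i < 0} = (Bf : Set (Fin (n + 1))) := by
    ext i; simp [hBfdef]
  rw [hAset, hBset, Set.ncard_coe_finset, Set.ncard_coe_finset]
  by_contra hcon
  push_neg at hcon
  have hAmem : ∀ i, i ∈ Af ↔ ((∃ mm : ℤ, 0 < mm ∧ b x i = (mm : ℝ)) ∧ 0 < b y i) := by
    intro i; simp [hAfdef]
  have hBmem : ∀ i, i ∈ Bf ↔ (b x i = 0 ∧ b y i < 0) := by
    intro i; simp [hBfdef]
  have hA1 : ∀ i ∈ Af, 1 ≤ b x i ∧ 0 < b y i := by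
    intro i hi
    obtain ⟨⟨mm, hmm, hbeq⟩, hby⟩ := (hAmem i).1 hi
    refine ⟨?_, hby⟩
    rw [hbeq]
    exact_mod_cast hmm
  have hABdisj : ∀ i, i ∈ Af → i ∈ Bf → False := by
    intro i hA hB
    have h1 := ((hAmem i).1 hA).2
    have h2 := ((hBmem i).1 hB).2
    linarith
  -- the constants
  set Sy : ℝ := ∑ i, |b y i| with hSydef
  set Sc : ℝ := ∑ t, c t with hScdef
  set Sr : ℝ := ∑ i, (if 0 < b x i then |b y i| / b x i else 0) with hSrdef
  have hSynn : 0 ≤ Sy := Finset.sum_nonneg fun i _ => abs_nonneg _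
  have hScnn : 0 ≤ Sc := Finset.sum_nonneg fun t _ => hcnn t
  have hSrnn : 0 ≤ Sr := Finset.sum_nonneg fun i _ => by
    by_cases h : 0 < b x i
    · rw [if_pos h]; positivity
    · rw [if_neg h]
  set M : ℝ := 1 + Sc + Sy + Sr with hMdef
  have hMpos : 0 < M := by rw [hMdef]; linarith
  set ε : ℝ := 1 / M with hεdef
  have hεpos : 0 < ε := by positivity
  have hεc : ∀ t, ε * c t ≤ 1 := by
    intro t
    have h1 : c t ≤ M := by
      have := Finset.single_le_sum (fun t _ => hcnn t) (Finset.mem_univ t)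
      rw [hMdef]; linarith
    calc ε * c t = c t / M := by rw [hεdef]; ring
    _ ≤ 1 := (div_le_one hMpos).2 h1
  have hεy : ∀ i, |ε * b y i| ≤ 1 := by
    intro i
    have h1 : |b y i| ≤ M := by
      have := Finset.single_le_sum (f := fun i => |b y i|)
        (fun i _ => abs_nonneg (b y i)) (Finset.mem_univ i)
      rw [hMdef]; linarith
    rw [abs_mul, abs_of_pos hεpos]
    calc ε * |b y i| = |b y i| / M := by rw [hεdef]; ring
    _ ≤ 1 := (div_le_one hMpos).2 h1
  -- the auxiliary coefficients μ'
  set μ' : Fin (n + 1) → ℝ := fun i =>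
    b x i + ε * b y i + (if i ∈ Bf then 1 else 0) - (if i ∈ Af then 1 else 0) with hμ'def
  have hμ'pos : ∀ i, 0 < b x i → 0 < μ' i := by
    intro i hbx
    by_cases hA : i ∈ Af
    · have hB : i ∉ Bf := fun hB => hABdisj i hA hB
      have h6 := hA1 i hA
      have h7 : 0 < ε * b y i := mul_pos hεpos h6.2
      simp only [hμ'def, if_pos hA, if_neg hB]
      linarith [h6.1]
    · have hB : i ∉ Bf := by
        intro hB; exact absurd ((hBmem i).1 hB).1 (ne_of_gt hbx)
      simp only [hμ'def, if_neg hA, if_neg hB]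
      by_cases hby : 0 ≤ b y i
      · nlinarith [mul_nonneg hεpos.le hby]
      · push_neg at hby
        have hri : |b y i| / b x i ≤ Sr := by
          rw [hSrdef]
          have h11 := Finset.single_le_sum
            (f := fun j => if 0 < b x j then |b y j| / b x j else 0)
            (fun j _ => by
              by_cases h : 0 < b x j
              · rw [if_pos h]; positivity
              · rw [if_neg h]) (Finset.mem_univ i)
          rwa [if_pos hbx] at h11
        have hMgt : |b y i| / b x i < M := by rw [hMdef]; linarith
        have h7 : |b y i| < M * b x i := by
          have := (div_lt_iff₀ hbx).1 hMgt
          linarith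
        have habs : |b y i| = -b y i := abs_of_neg hby
        have h8 : ε * (-b y i) < b x i := by
          have h9 : ε * (-b y i) = (-b y i) / M := by rw [hεdef]; ring
          rw [h9, div_lt_iff₀ hMpos]
          rw [habs] at h7; linarith
        linarith
  have hμ'nonneg : ∀ i, 0 ≤ μ' i := by
    intro i
    rcases (hxcone i).lt_or_eq with hbx | hbx
    · exact (hμ'pos i hbx).le
    · have hbx0 : b x i = 0 := hbx.symm
      have hA : i ∉ Af := by
        intro hA; have := (hA1 i hA).1; rw [hbx0] at this; linarith
      by_cases hB : i ∈ Bf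
      · simp only [hμ'def, if_pos hB, if_neg hA, hbx0]
        have := (abs_le.1 (hεy i)).1
        linarith
      · have hby : 0 ≤ b y i := by
          by_contra hby; push_neg at hby
          exact hB ((hBmem i).2 ⟨hbx0, hby⟩)
        simp only [hμ'def, if_neg hB, if_neg hA, hbx0]
        have := mul_nonneg hεpos.le hby
        linarith
  -- the constant α
  set Sq : ℝ := ∑ i, (if 0 < b x i then b x i / μ' i else 0) with hSqdef
  have hSqnn : 0 ≤ Sq := Finset.sum_nonneg fun i _ => by
    by_cases h : 0 < b x i
    · rw [if_pos h]; exact div_nonneg h.le (hμ'nonneg i)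
    · rw [if_neg h]
  have hSq1pos : (0 : ℝ) < 1 + Sq := by linarith
  set α : ℝ := 1 / (1 + Sq) with hαdef
  have hαpos : 0 < α := by positivity
  have hμnn : ∀ i, 0 ≤ μ' i - α * b x i := by
    intro i
    rcases (hxcone i).lt_or_eq with hbx | hbx
    · have hμpos := hμ'pos i hbx
      have hqle : b x i / μ' i ≤ Sq := by
        rw [hSqdef]
        have h11 := Finset.single_le_sum (f := fun j => if 0 < b x j then b x j / μ' j else 0)
          (fun j _ => by
            by_cases h : 0 < b x j
            · rw [if_pos h]; exact div_nonneg h.le (hμ'nonneg j)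
            · rw [if_neg h]) (Finset.mem_univ i)
        rwa [if_pos hbx] at h11
      have h1 : b x i / μ' i < 1 + Sq := by linarith
      have h2 : α * b x i = b x i / (1 + Sq) := by rw [hαdef]; ring
      have h3 : b x i / (1 + Sq) < μ' i := by
        rw [div_lt_iff₀ hSq1pos, mul_comm]
        exact (div_lt_iff₀ hμpos).1 h1
      rw [sub_nonneg, h2]
      exact h3.le
    · rw [← hbx, mul_zero, sub_zero]
      exact hμ'nonneg i
  -- the coefficients μ and the decomposition of x'
  set μ : Fin (n + 1) → ℝ := fun i =>
    (1 - α) * b x i + ε * b y i - (if i ∈ Af then 1 else 0)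
      + (if i ∈ Bf then 1 else 0) with hμdef
  have hμge : ∀ i, 0 ≤ μ i := by
    intro i
    have h1 : μ i = μ' i - α * b x i := by
      simp only [hμdef, hμ'def]; ring
    rw [h1]; exact hμnn i
  set SA : Fin (n + 1) → ℝ := ∑ j ∈ Af, v j with hSAdef
  set SB : Fin (n + 1) → ℝ := ∑ i ∈ Bf, v i with hSBdef
  set SW : Fin (n + 1) → ℝ := ∑ t, w t with hSWdef
  set x' : Fin (n + 1) → ℝ := x + SW - SA + SB with hx'def
  set S : Fin (n + 1) → ℝ := (∑ i, μ i • v i) + (∑ t, (1 - ε * c t) • w t) with hSdef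
  have hwP : ∀ t, w t ∈ P := fun t => extremePoints_subset (hwext t)
  have hSσ : S ∈ σ := by
    apply hσadd
    · exact Statement7Aux.sum_mem_cone hPconv hPne _ _
        (fun i _ => Statement7Aux.smul_mem_cone (hvmem i) (hμge i))
    · exact Statement7Aux.sum_mem_cone hPconv hPne _ _
        (fun t _ => Statement7Aux.smul_mem_cone (hwP t) (by linarith [hεc t]))
  have hkey : x' = α • x + S := by
    have e1 : ∑ i, μ i • v i = (1 - α) • x + ε • y - SA + SB := by
      have h1 : ∀ i : Fin (n + 1), μ i • v i =
          (1 - α) • (b x i • v i) + ε • (b y i • v i)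
            - (if i ∈ Af then v i else 0) + (if i ∈ Bf then v i else 0) := by
        intro i
        simp only [hμdef, add_smul, sub_smul, ite_smul, one_smul, zero_smul, smul_smul]
      rw [Finset.sum_congr rfl (fun i _ => h1 i)]
      rw [Finset.sum_add_distrib, Finset.sum_sub_distrib, Finset.sum_add_distrib]
      rw [← Finset.smul_sum, ← Finset.smul_sum, ← hb x, ← hb y]
      rw [Finset.sum_ite_mem, Finset.sum_ite_mem, Finset.univ_inter, Finset.univ_inter]
    have e2 : ∑ t, (1 - ε * c t) • w t = SW - ε • y := by
      have h1 : ∀ t : Fin k, (1 - ε * c t) • w t = w t - ε • (c t • w t) := by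
        intro t
        rw [sub_smul, one_smul, smul_smul]
      rw [Finset.sum_congr rfl (fun t _ => h1 t), Finset.sum_sub_distrib, ← Finset.smul_sum,
        ← hyeq]
    rw [hSdef, e1, e2, hx'def]
    have e3 : α • x + ((1 - α) • x + ε • y - SA + SB + (SW - ε • y)) =
        (α • x + (1 - α) • x) + SW - SA + SB := by abel
    have e4 : α • x + (1 - α) • x = x := by
      rw [← add_smul]; norm_num
    rw [e3, e4]
  -- heights
  have hvlast : ∀ i, (v i) L = 1 := fun i => hheight _ (hvmem i)
  have hwlast2 : ∀ t, (w t) L = 1 := fun t => hheight _ (hwP t)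
  have hxlast : x L = creal := by
    obtain ⟨p, hp, hpe⟩ := Set.mem_smul_set.1 (intrinsicInterior_subset hxmem)
    rw [← hpe, Pi.smul_apply, smul_eq_mul, hheight p hp, mul_one]
  have hx'last : x' L = creal + k - Af.card + Bf.card := by
    rw [hx'def]
    simp only [Pi.add_apply, Pi.sub_apply, hSAdef, hSBdef, hSWdef, Finset.sum_apply]
    rw [hxlast]
    rw [Finset.sum_congr rfl (fun t _ => hwlast2 t),
      Finset.sum_congr rfl (fun j (_ : j ∈ Af) => hvlast j),
      Finset.sum_congr rfl (fun i (_ : i ∈ Bf) => hvlast i)]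
    simp [Finset.sum_const, Finset.card_univ]
  have hx'int : x' ∈ interior σ := by
    rw [hkey]
    exact Statement7Aux.add_mem_interior hσadd
      (Statement7Aux.smul_mem_interior hσsmul hαpos hxIntσ) hSσ
  -- the height of x' is positive
  have hx'pos : 0 < x' L := by
    rcases (hσlast x' (interior_subset hx'int)).1.lt_or_eq with h | h
    · exact h
    · exfalso
      have hx'0 : x' = 0 := (hσlast x' (interior_subset hx'int)).2 h.symm
      rw [hx'0] at hx'int
      have hνσ : σ ∈ nhds (0 : Fin (n + 1) → ℝ) := mem_interior_iff_mem_nhds.1 hx'int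
      have hco : Continuous fun t : ℝ => t • (-(v 0)) := continuous_id.smul continuous_const
      have hcontt : Filter.Tendsto (fun t : ℝ => t • (-(v 0)))
          (nhdsWithin (0 : ℝ) (Set.Ioi 0)) (nhds 0) := by
        have h2 := (hco.tendsto 0).mono_left (nhdsWithin_le_nhds (s := Set.Ioi (0 : ℝ)))
        simpa using h2
      have hev : ∀ᶠ t : ℝ in nhdsWithin 0 (Set.Ioi 0), t • (-(v 0)) ∈ σ := hcontt hνσ
      obtain ⟨t, htσ, htpos⟩ := (hev.and eventually_mem_nhdsWithin).exists
      have h3 := (hσlast _ htσ).1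
      rw [Pi.smul_apply, Pi.neg_apply, smul_eq_mul, hvlast 0] at h3
      have htpos' : (0 : ℝ) < t := htpos
      nlinarith
  -- integer bookkeeping
  set g : ℤ := (m : ℤ) + 1 + (k : ℤ) + (Bf.card : ℤ) - (Af.card : ℤ) with hgdef
  have hxg : x' L = (g : ℝ) := by
    rw [hx'last, hcreal, hgdef]; push_cast; ring
  have hg1 : 1 ≤ g := by
    have h0 : (0 : ℝ) < (g : ℝ) := by rw [← hxg]; exact hx'pos
    have h1 : (0 : ℤ) < g := by exact_mod_cast h0
    omega
  have hgm : g ≤ (m : ℤ) := by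
    have h1 : (Bf.card : ℤ) + (k : ℤ) + 1 ≤ (Af.card : ℤ) := by exact_mod_cast hcon
    omega
  set Nn : ℕ := ((m : ℤ) - g).toNat with hNndef
  have hNnval : ((Nn : ℤ)) = (m : ℤ) - g := by
    rw [hNndef]; exact Int.toNat_of_nonneg (by omega)
  have hNnR : (Nn : ℝ) = ((m : ℕ) : ℝ) - (g : ℝ) := by exact_mod_cast hNnval
  set x'' : Fin (n + 1) → ℝ := x' + (Nn : ℝ) • v 0 with hx''def
  have hx''int : x'' ∈ interior σ := by
    rw [hx''def]
    exact Statement7Aux.add_mem_interior hσadd hx'int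
      (Statement7Aux.smul_mem_cone (hvmem 0) (Nat.cast_nonneg Nn))
  have hx''last : x'' L = ((m : ℕ) : ℝ) := by
    rw [hx''def, Pi.add_apply, Pi.smul_apply, smul_eq_mul, hvlast 0, mul_one, hxg, hNnR]
    ring
  -- x'' is a lattice point
  have hwlatt : ∀ t, IsLatticePoint (w t) := by
    intro t
    apply hVlat
    have h2 := hwext t
    rw [hPeq] at h2
    exact extremePoints_convexHull_subset h2
  have hx''lat : IsLatticePoint x'' := by
    rw [hx''def, hx'def]
    exact Statement7Aux.lat_add
      (Statement7Aux.lat_add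
        (Statement7Aux.lat_sub
          (Statement7Aux.lat_add hxint (Statement7Aux.lat_sum _ _ (fun t _ => hwlatt t)))
          (Statement7Aux.lat_sum _ _ (fun j _ => hvint j)))
        (Statement7Aux.lat_sum _ _ (fun i _ => hvint i)))
      (Statement7Aux.lat_nsmul (hvint 0) Nn)
  -- points of σ at height m lie in m • P
  have hmemmP : ∀ u : Fin (n + 1) → ℝ, u ∈ σ → u L = ((m : ℕ) : ℝ) →
      u ∈ ((m : ℕ) : ℝ) • P := by
    rintro u ⟨l, p, hp, hl, rfl⟩ hu
    rw [Pi.smul_apply, smul_eq_mul, hheight p hp, mul_one] at hu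
    rw [hu]
    exact Set.smul_mem_smul_set hp
  have hx''mP : x'' ∈ ((m : ℕ) : ℝ) • P := hmemmP x'' (interior_subset hx''int) hx''last
  have hx''span : x'' ∈ affineSpan ℝ (((m : ℕ) : ℝ) • P) := subset_affineSpan ℝ _ hx''mP
  have hfinal : x'' ∈ intrinsicInterior ℝ (((m : ℕ) : ℝ) • P) := by
    refine ⟨⟨x'', hx''span⟩, ?_, rfl⟩
    apply mem_interior.2
    refine ⟨(↑) ⁻¹' (interior σ), ?_, ?_, Set.mem_preimage.2 hx''int⟩
    · intro u hu
      have huσ : (u : Fin (n + 1) → ℝ) ∈ interior σ := hu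
      have hulast : (u : Fin (n + 1) → ℝ) L = ((m : ℕ) : ℝ) := (hspan _ hmne _).1 u.2
      exact hmemmP _ (interior_subset huσ) hulast
    · exact continuous_subtype_val.isOpen_preimage _ isOpen_interior
  exact hNoInt (fun i => (hx''lat i).choose) (by
    have hfe : (fun i => (((hx''lat i).choose : ℤ) : ℝ)) = x'' := by
      funext i; exact ((hx''lat i).choose_spec).symm
    rw [hfe]
    exact hfinal)




end
end

section
/- Let d ≥ 1 and let S be the standard unimodular simplex of dimension 2d − 1, i.e. the convex hull of 0, e_1, …, e_{2d−1} in ℝ^{2d−1}. Then 2S is a Gorenstein polytope of degree d, and 2S admits no nontrivial Cayley decomposition: every ℤ-affine identification of 2S with a Cayley sum P_0 * ⋯ * P_s of lattice polytopes has s = 0. (Indeed, every edge of 2S has lattice length two.) -/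
open scoped BigOperators Pointwise

noncomputable section

/-- The standard unimodular simplex in `ℝ^m`: the convex hull of `0, e_1, …, e_m`. -/
def stdUnimodularSimplex (m : ℕ) : Set (Fin m → ℝ) :=
  convexHull ℝ ({0} ∪ Set.range fun j : Fin m => fun i => if i = j then (1 : ℝ) else 0)

def simplexSet (n : ℕ) (c : ℝ) : Set (Fin n → ℝ) :=
  {x | (∀ i, 0 ≤ x i) ∧ ∑ i, x i ≤ c}

lemma convex_simplexSet (n : ℕ) (c : ℝ) : Convex ℝ (simplexSet n c) := by
  intro x hx y hy a b ha hb hab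
  refine ⟨fun i => ?_, ?_⟩
  · have h1 := hx.1 i; have h2 := hy.1 i
    simp only [Pi.add_apply, Pi.smul_apply, smul_eq_mul]
    positivity
  · have h1 := hx.2; have h2 := hy.2
    simp only [Pi.add_apply, Pi.smul_apply, smul_eq_mul]
    rw [Finset.sum_add_distrib, ← Finset.mul_sum, ← Finset.mul_sum]
    have h3 : a * c + b * c = c := by rw [← add_mul, hab, one_mul]
    linarith [mul_le_mul_of_nonneg_left h1 ha, mul_le_mul_of_nonneg_left h2 hb]


lemma stdUnimodularSimplex_eq (n : ℕ) : stdUnimodularSimplex n = simplexSet n 1 := by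
  apply le_antisymm
  · apply convexHull_min _ (convex_simplexSet n 1)
    rintro x (rfl | ⟨j, rfl⟩)
    · exact ⟨fun i => le_refl 0, by simp⟩
    · refine ⟨fun i => by dsimp only; split <;> norm_num, ?_⟩
      simp [Finset.sum_ite_eq']
  · intro x hx
    obtain ⟨hx0, hx1⟩ := hx
    have h0 : (0 : Fin n → ℝ) ∈ stdUnimodularSimplex n :=
      subset_convexHull ℝ _ (Or.inl rfl)
    have he : ∀ j : Fin n, (fun i => if i = j then (1:ℝ) else 0) ∈ stdUnimodularSimplex n :=
      fun j => subset_convexHull ℝ _ (Or.inr ⟨j, rfl⟩)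
    have hxsum : ∑ j, x j • (fun i => if i = j then (1:ℝ) else 0) = x := by
      funext i
      rw [Finset.sum_apply]
      simp only [Pi.smul_apply, smul_eq_mul, mul_ite, mul_one, mul_zero]
      simp [Finset.sum_ite_eq]
    have hmem := (convex_convexHull ℝ _).sum_mem
      (t := (Finset.univ : Finset (Option (Fin n))))
      (w := fun o => o.elim (1 - ∑ i, x i) x)
      (z := fun o => o.elim 0 fun j i => if i = j then (1:ℝ) else 0)
      (fun o _ => by
        cases o with
        | none => simpa using hx1
        | some j => exact hx0 j)
      (by
        rw [Fintype.sum_option]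
        simp only [Option.elim_none, Option.elim_some]
        ring)
      (fun o _ => by
        cases o with
        | none => exact h0
        | some j => exact he j)
    rw [Fintype.sum_option] at hmem
    simp only [Option.elim_none, Option.elim_some, smul_zero, zero_add] at hmem
    rwa [hxsum] at hmem

lemma smul_simplexSet {n : ℕ} {c : ℝ} (hc : 0 < c) :
    c • simplexSet n 1 = simplexSet n c := by
  ext x
  constructor
  · rintro ⟨y, ⟨hy0, hy1⟩, rfl⟩
    refine ⟨fun i => ?_, ?_⟩
    · simpa using mul_nonneg hc.le (hy0 i)
    · simp only [Pi.smul_apply, smul_eq_mul, ← Finset.mul_sum]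
      calc c * ∑ i, y i ≤ c * 1 := mul_le_mul_of_nonneg_left hy1 hc.le
        _ = c := mul_one c
  · rintro ⟨hx0, hxc⟩
    refine ⟨c⁻¹ • x, ⟨fun i => ?_, ?_⟩, ?_⟩
    · simpa using mul_nonneg (inv_nonneg.mpr hc.le) (hx0 i)
    · simp only [Pi.smul_apply, smul_eq_mul, ← Finset.mul_sum]
      have h1 : c⁻¹ * ∑ i, x i ≤ c⁻¹ * c :=
        mul_le_mul_of_nonneg_left hxc (inv_nonneg.mpr hc.le)
      rwa [inv_mul_cancel₀ hc.ne'] at h1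
    · show c • c⁻¹ • x = x
      rw [smul_inv_smul₀ hc.ne']

lemma simplexSet_zero (n : ℕ) : simplexSet n 0 = {0} := by
  ext x
  constructor
  · rintro ⟨hx0, hx1⟩
    have hs : ∑ i, x i = 0 :=
      le_antisymm hx1 (Finset.sum_nonneg fun i _ => hx0 i)
    have := (Finset.sum_eq_zero_iff_of_nonneg (fun i _ => hx0 i)).mp hs
    funext i
    exact this i (Finset.mem_univ i)
  · rintro rfl
    exact ⟨fun i => le_refl 0, by simp⟩

lemma dilate_eq (n m : ℕ) :
    (m : ℝ) • ((2:ℝ) • stdUnimodularSimplex n) = simplexSet n ((2*m : ℕ) : ℝ) := by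
  rw [stdUnimodularSimplex_eq, smul_smul]
  rcases Nat.eq_zero_or_pos m with rfl | hm
  · have hne : (simplexSet n 1).Nonempty := ⟨0, fun i => le_refl 0, by simp⟩
    rw [show ((0:ℕ):ℝ) * 2 = 0 by norm_num, Set.zero_smul_set hne]
    rw [show (2*0 : ℕ) = 0 by norm_num, Nat.cast_zero, simplexSet_zero]
    rfl
  · have hpos : (0:ℝ) < (m:ℝ) * 2 := by positivity
    rw [smul_simplexSet hpos]
    norm_num [mul_comm]

def cnt (n k : ℕ) : Finset (Fin n → ℕ) :=
  (Fintype.piFinset fun _ : Fin n => Finset.range (k+1)).filter fun z => ∑ i, z i ≤ k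

lemma mem_cnt {n k : ℕ} {z : Fin n → ℕ} : z ∈ cnt n k ↔ ∑ i, z i ≤ k := by
  simp only [cnt, Finset.mem_filter, Fintype.mem_piFinset, Finset.mem_range]
  refine ⟨fun h => h.2, fun h => ⟨fun i => Nat.lt_succ_of_le (le_trans ?_ h), h⟩⟩
  exact Finset.single_le_sum (fun i _ => Nat.zero_le _) (Finset.mem_univ i)

lemma sum_choose_sub (n : ℕ) : ∀ k,
    (∑ v ∈ Finset.range (k+1), (n + (k - v)).choose n) = (n + k + 1).choose (n + 1)
  | 0 => by simp
  | (k+1) => by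
    rw [Finset.sum_range_succ']
    have h1 : ∀ v ∈ Finset.range (k+1),
        (n + (k + 1 - (v+1))).choose n = (n + (k - v)).choose n := by
      intro v _; congr 2; omega
    rw [Finset.sum_congr rfl h1, sum_choose_sub n k]
    have h2 : n + (k + 1 - 0) = n + k + 1 := by omega
    rw [h2]
    have h := Nat.choose_succ_succ (n + k + 1) n
    have h3 : n + (k+1) + 1 = n + k + 1 + 1 := by omega
    rw [h3, h]
    simp only [Nat.succ_eq_add_one]
    omega

lemma card_cnt : ∀ n k, (cnt n k).card = (n + k).choose n
  | 0, k => by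
    have h : cnt 0 k = {fun _ => 0} := by
      ext z
      simp only [mem_cnt, Finset.mem_singleton]
      constructor
      · intro _; funext i; exact i.elim0
      · intro _; simp
    rw [h]
    simp
  | (n+1), k => by
    have hmaps : ∀ z ∈ cnt (n+1) k, z 0 ∈ Finset.range (k+1) := fun z hz =>
      Finset.mem_range.mpr (Nat.lt_succ_of_le (le_trans
        (Finset.single_le_sum (fun i _ => Nat.zero_le _) (Finset.mem_univ 0))
        (mem_cnt.mp hz)))
    rw [Finset.card_eq_sum_card_fiberwise hmaps]
    have hfib : ∀ v ∈ Finset.range (k+1),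
        ((cnt (n+1) k).filter fun z => z 0 = v).card = (cnt n (k - v)).card := by
      intro v hv
      rw [Finset.mem_range] at hv
      refine Finset.card_bij' (fun z _ => Fin.tail z) (fun w _ => Fin.cons v w) ?_ ?_ ?_ ?_
      · intro z hz
        obtain ⟨hz1, hz0⟩ := Finset.mem_filter.mp hz
        have hz1' := mem_cnt.mp hz1
        have hsum : ∑ i, z i = z 0 + ∑ i, Fin.tail z i := by
          rw [Fin.sum_univ_succ]; rfl
        exact mem_cnt.mpr (by omega)
      · intro w hw
        have hw' := mem_cnt.mp hw
        have hsum : ∑ i, Fin.cons (α := fun _ => ℕ) v w i = v + ∑ i, w i := by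
          rw [Fin.sum_univ_succ]; simp
        refine Finset.mem_filter.mpr ⟨mem_cnt.mpr (by omega), ?_⟩
        simp
      · intro z hz
        obtain ⟨-, h0⟩ := Finset.mem_filter.mp hz
        rw [← h0, Fin.cons_self_tail]
      · intro w _
        exact Fin.tail_cons (α := fun _ => ℕ) v w
    rw [Finset.sum_congr rfl hfib]
    have hcc : ∀ v ∈ Finset.range (k+1), (cnt n (k-v)).card = (n + (k - v)).choose n :=
      fun v _ => card_cnt n (k - v)
    rw [Finset.sum_congr rfl hcc, sum_choose_sub n k]
    congr 1
    omega

lemma ite_one_eq {a : ℕ} (ha : a ≤ 1) : (if a = 1 then 1 else 0) = a := by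
  interval_cases a <;> rfl

lemma card_parity (n j : ℕ) :
    ((Fintype.piFinset fun _ : Fin n => Finset.range 2).filter fun r => ∑ i, r i = j).card
      = n.choose j := by
  have h := Finset.card_powersetCard j (Finset.univ : Finset (Fin n))
  rw [Finset.card_univ, Fintype.card_fin] at h
  rw [← h]
  refine Finset.card_bij' (fun r _ => Finset.univ.filter fun i => r i = 1)
    (fun S _ => fun i => if i ∈ S then 1 else 0) ?_ ?_ ?_ ?_
  · intro r hr
    obtain ⟨hr1, hr2⟩ := Finset.mem_filter.mp hr
    have hle : ∀ i, r i ≤ 1 := fun i => by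
      have := Fintype.mem_piFinset.mp hr1 i
      rw [Finset.mem_range] at this
      omega
    refine Finset.mem_powersetCard.mpr ⟨Finset.subset_univ _, ?_⟩
    rw [Finset.card_filter]
    rw [show j = ∑ i, r i from hr2.symm]
    exact Finset.sum_congr rfl fun i _ => ite_one_eq (hle i)
  · intro S hS
    obtain ⟨-, hcard⟩ := Finset.mem_powersetCard.mp hS
    refine Finset.mem_filter.mpr ⟨?_, ?_⟩
    · refine Fintype.mem_piFinset.mpr fun i => Finset.mem_range.mpr ?_
      split <;> omega
    · dsimp only
      rw [Finset.sum_ite_mem, Finset.univ_inter, ← hcard]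
      simp
  · intro r hr
    obtain ⟨hr1, -⟩ := Finset.mem_filter.mp hr
    have hle : ∀ i, r i ≤ 1 := fun i => by
      have := Fintype.mem_piFinset.mp hr1 i
      rw [Finset.mem_range] at this
      omega
    funext i
    by_cases h1 : r i = 1
    · simp [h1]
    · have : r i = 0 := by have := hle i; omega
      simp [h1, this]
  · intro S hS
    dsimp only
    ext i
    simp only [Finset.mem_filter, Finset.mem_univ, true_and]
    split <;> simp_all

lemma card_cnt_even (n m : ℕ) :
    (cnt n (2*m)).card
      = ∑ j ∈ Finset.range (n+1), n.choose j * (n + m - (j+1)/2).choose n := by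
  have hmaps : ∀ z ∈ cnt n (2*m),
      (fun i => z i % 2) ∈ Fintype.piFinset fun _ : Fin n => Finset.range 2 := by
    intro z _
    exact Fintype.mem_piFinset.mpr fun i => Finset.mem_range.mpr (Nat.mod_lt _ two_pos)
  rw [Finset.card_eq_sum_card_fiberwise hmaps]
  have hfib : ∀ r ∈ Fintype.piFinset fun _ : Fin n => Finset.range 2,
      ((cnt n (2*m)).filter fun z => (fun i => z i % 2) = r).card
        = (n + m - ((∑ i, r i) + 1)/2).choose n := by
    intro r hr
    have hr1 : ∀ i, r i ≤ 1 := fun i => by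
      have := Fintype.mem_piFinset.mp hr i
      rw [Finset.mem_range] at this
      omega
    by_cases hcase : (∑ i, r i) ≤ 2*m
    · rw [show n + m - ((∑ i, r i)+1)/2 = n + (m - ((∑ i, r i)+1)/2) from by omega]
      rw [← card_cnt]
      refine Finset.card_bij' (fun z _ => fun i => z i / 2)
        (fun w _ => fun i => 2 * w i + r i) ?_ ?_ ?_ ?_
      · intro z hz
        obtain ⟨hz1, hz2⟩ := Finset.mem_filter.mp hz
        have hz1' := mem_cnt.mp hz1
        have he : ∀ i, z i = 2 * (z i / 2) + r i := by
          intro i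
          have := congrFun hz2 i
          omega
        have hs : ∑ i, z i = 2 * (∑ i, z i / 2) + ∑ i, r i := by
          rw [Finset.mul_sum, ← Finset.sum_add_distrib]
          exact Finset.sum_congr rfl fun i _ => he i
        exact mem_cnt.mpr (by omega)
      · intro w hw
        have hw' := mem_cnt.mp hw
        have hs : ∑ i, (2 * w i + r i) = 2 * ∑ i, w i + ∑ i, r i := by
          rw [Finset.mul_sum, ← Finset.sum_add_distrib]
        refine Finset.mem_filter.mpr ⟨mem_cnt.mpr (by omega), ?_⟩
        funext i
        dsimp only
        have := hr1 i
        omega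
      · intro z hz
        obtain ⟨-, hz2⟩ := Finset.mem_filter.mp hz
        show (fun i => 2 * (z i / 2) + r i) = z
        funext i
        have := congrFun hz2 i
        omega
      · intro w hw
        show (fun i => (2 * w i + r i) / 2) = w
        funext i
        have := hr1 i
        omega
    · have h1 : ((cnt n (2*m)).filter fun z => (fun i => z i % 2) = r) = ∅ := by
        rw [Finset.filter_eq_empty_iff]
        intro z hz
        have hz' := mem_cnt.mp hz
        intro hzr
        have hle : ∑ i, r i ≤ ∑ i, z i := by
          apply Finset.sum_le_sum
          intro i _
          have := congrFun hzr i
          omega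
        omega
      rw [h1, Finset.card_empty]
      symm
      apply Nat.choose_eq_zero_of_lt
      have hrn : ∑ i, r i ≤ n := by
        calc ∑ i, r i ≤ ∑ _i : Fin n, 1 := Finset.sum_le_sum fun i _ => hr1 i
          _ = n := by simp
      omega
  rw [Finset.sum_congr rfl hfib]
  rw [← Finset.sum_fiberwise_of_maps_to (t := Finset.range (n+1))
    (g := fun r : Fin n → ℕ => ∑ i, r i) ?_ (fun r => (n + m - ((∑ i, r i) + 1)/2).choose n)]
  · apply Finset.sum_congr rfl
    intro j hj
    have hco : ∀ r ∈ (Fintype.piFinset fun _ : Fin n => Finset.range 2).filter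
        (fun r => ∑ i, r i = j),
        (n + m - ((∑ i, r i) + 1)/2).choose n = (n + m - (j+1)/2).choose n := by
      intro r hr
      rw [(Finset.mem_filter.mp hr).2]
    rw [Finset.sum_congr rfl hco, Finset.sum_const, card_parity, smul_eq_mul]
  · intro r hr
    refine Finset.mem_range.mpr (Nat.lt_succ_of_le ?_)
    have hr1 : ∀ i, r i ≤ 1 := fun i => by
      have := Fintype.mem_piFinset.mp hr i
      rw [Finset.mem_range] at this
      omega
    calc ∑ i, r i ≤ ∑ _i : Fin n, 1 := Finset.sum_le_sum fun i _ => hr1 i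
      _ = n := by simp

lemma sum_range_two_mul (D : ℕ) (F : ℕ → ℕ) :
    ∑ j ∈ Finset.range (2*D), F j = ∑ i ∈ Finset.range D, (F (2*i) + F (2*i+1)) := by
  induction D with
  | zero => simp
  | succ D ih =>
    have h : 2 * (D+1) = (2*D + 1) + 1 := by ring
    rw [h, Finset.sum_range_succ, Finset.sum_range_succ, Finset.sum_range_succ, ih]
    omega

lemma regroup (d m : ℕ) (hd : 1 ≤ d) :
    ∑ j ∈ Finset.range (2*d), (2*d-1).choose j * ((2*d-1) + m - (j+1)/2).choose (2*d-1)
      = ∑ i ∈ Finset.range (d+1), (2*d).choose (2*i) * ((2*d-1) + m - i).choose (2*d-1) := by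
  set n := 2*d - 1 with hn
  set g : ℕ → ℕ := fun i => (n + m - i).choose n with hg
  rw [sum_range_two_mul]
  have hL : ∀ i ∈ Finset.range d,
      n.choose (2*i) * (n + m - (2*i+1)/2).choose n
        + n.choose (2*i+1) * (n + m - (2*i+1+1)/2).choose n
      = n.choose (2*i) * g i + n.choose (2*i+1) * g (i+1) := by
    intro i _
    have e1 : (2*i+1)/2 = i := by omega
    have e2 : (2*i+1+1)/2 = i+1 := by omega
    rw [e1, e2]
  rw [Finset.sum_congr rfl hL, Finset.sum_add_distrib]
  rw [Finset.sum_range_succ' (fun i => (2*d).choose (2*i) * g i) d]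
  have hR : ∀ i ∈ Finset.range d,
      (2*d).choose (2*(i+1)) * g (i+1)
        = n.choose (2*i+1) * g (i+1) + n.choose (2*i+2) * g (i+1) := by
    intro i _
    have h1 : 2*(i+1) = (2*i+1) + 1 := by ring
    have h2d : 2*d = n + 1 := by omega
    rw [h1, h2d, Nat.choose_succ_succ, add_mul]
  rw [Finset.sum_congr rfl hR, Finset.sum_add_distrib]
  have key : ∑ i ∈ Finset.range d, n.choose (2*i) * g i
      = (∑ i ∈ Finset.range d, n.choose (2*(i+1)) * g (i+1)) + n.choose (2*0) * g 0 := by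
    rw [← Finset.sum_range_succ' (fun i => n.choose (2*i) * g i) d]
    rw [Finset.sum_range_succ]
    have hz : n.choose (2*d) = 0 := Nat.choose_eq_zero_of_lt (by omega)
    rw [hz, zero_mul, add_zero]
  have halign : ∀ i ∈ Finset.range d,
      n.choose (2*(i+1)) * g (i+1) = n.choose (2*i+2) * g (i+1) := by
    intro i _
    have : 2*(i+1) = 2*i+2 := by ring
    rw [this]
  rw [Finset.sum_congr rfl halign] at key
  have hzero : (2*d).choose (2*0) = n.choose (2*0) := by simp
  rw [hzero]
  omega



lemma latticePointCount_simplexSet (n k : ℕ) :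
    latticePointCount (simplexSet n (k : ℝ)) = (cnt n k).card := by
  have himg : {z : Fin n → ℤ | (fun i => (z i : ℝ)) ∈ simplexSet n (k:ℝ)}
      = (fun (w : Fin n → ℕ) => fun i => (w i : ℤ)) '' ↑(cnt n k) := by
    ext z
    simp only [Set.mem_setOf_eq, Set.mem_image, Finset.mem_coe, mem_cnt, simplexSet]
    constructor
    · rintro ⟨h0, h1⟩
      have hz0 : ∀ i, (0:ℤ) ≤ z i := fun i => by exact_mod_cast h0 i
      have htn : ∀ i, (((z i).toNat : ℤ)) = z i := fun i => Int.toNat_of_nonneg (hz0 i)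
      refine ⟨fun i => (z i).toNat, ?_, ?_⟩
      · show (∑ i, (z i).toNat) ≤ k
        have hsum : ((∑ i, (z i).toNat : ℕ) : ℤ) = ∑ i, z i := by
          push_cast
          exact Finset.sum_congr rfl fun i _ => htn i
        have hzk : (∑ i, z i) ≤ (k:ℤ) := by exact_mod_cast h1
        omega
      · funext i
        exact htn i
    · rintro ⟨w, hw, rfl⟩
      constructor
      · intro i
        positivity
      · exact_mod_cast hw
  rw [latticePointCount, himg, Set.ncard_image_of_injective _ ?_, Set.ncard_coe_finset]
  intro a b hab
  funext i
  have := congrFun hab i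
  simp only at this
  exact_mod_cast this

def gorPoly (d : ℕ) : Polynomial ℤ :=
  ∑ i ∈ Finset.range (d+1), Polynomial.C (((2*d).choose (2*i) : ℤ)) * Polynomial.X ^ i

lemma gorPoly_coeff (d k : ℕ) :
    (gorPoly d).coeff k = if k ≤ d then (((2*d).choose (2*k) : ℤ)) else 0 := by
  rw [gorPoly, Polynomial.finset_sum_coeff]
  simp only [Polynomial.coeff_C_mul, Polynomial.coeff_X_pow, mul_ite, mul_one, mul_zero]
  rw [Finset.sum_ite_eq]
  simp [Nat.lt_succ_iff]


lemma part1 (d : ℕ) (hd : 1 ≤ d) :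
    IsHStarPoly ((2 : ℝ) • stdUnimodularSimplex (2 * d - 1)) (gorPoly d) ∧
      (gorPoly d).natDegree = d ∧
      ∀ i ≤ d, (gorPoly d).coeff i = (gorPoly d).coeff (d - i) := by
  have hd2 : 2 * d - 1 + 1 = 2 * d := by omega
  refine ⟨⟨?_, ?_, ?_⟩, ?_, ?_⟩
  · -- natDegree ≤ 2d-1
    apply Polynomial.natDegree_le_iff_coeff_eq_zero.mpr
    intro N hN
    rw [gorPoly_coeff, if_neg (by omega)]
  · intro i
    rw [gorPoly_coeff]
    split
    · positivity
    · exact le_refl 0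
  · intro m
    have hset : (m : ℝ) • ((2:ℝ) • stdUnimodularSimplex (2*d-1))
        = simplexSet (2*d-1) ((2*m : ℕ) : ℝ) := dilate_eq (2*d-1) m
    rw [hset, latticePointCount_simplexSet]
    have h1 : (cnt (2*d-1) (2*m)).card
        = ∑ i ∈ Finset.range (d+1), (2*d).choose (2*i) * ((2*d-1) + m - i).choose (2*d-1) := by
      rw [card_cnt_even (2*d-1) m, hd2]
      exact regroup d m hd
    rw [h1, hd2]
    rw [← Finset.sum_subset (Finset.range_subset_range.mpr (by omega : d+1 ≤ 2*d))
      (fun i _ hni => by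
        rw [gorPoly_coeff, if_neg (by simp at hni ⊢; omega), zero_mul])]
    push_cast
    apply Finset.sum_congr rfl
    intro i hi
    rw [gorPoly_coeff, if_pos (by simp [Nat.lt_succ_iff] at hi; omega)]
  · -- natDegree = d
    apply le_antisymm
    · apply Polynomial.natDegree_le_iff_coeff_eq_zero.mpr
      intro N hN
      rw [gorPoly_coeff, if_neg (by omega)]
    · apply Polynomial.le_natDegree_of_ne_zero
      rw [gorPoly_coeff, if_pos (le_refl d)]
      simp [Nat.choose_self]
  · intro i hi
    rw [gorPoly_coeff, gorPoly_coeff, if_pos hi, if_pos (Nat.sub_le d i)]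
    norm_cast
    have h2 : 2*(d-i) = 2*d - 2*i := by omega
    rw [h2]
    exact (Nat.choose_symm (by omega)).symm






lemma part2 (n q s : ℕ) (Ps : Fin (s + 1) → Set (Fin q → ℝ))
    (T : (Fin n → ℝ) ≃ᵃ[ℝ] (Fin q → ℝ) × (Fin s → ℝ))
    (hPs : ∀ j, IsLatticePolytope (Ps j)) (hT : IsLatticeEquiv T)
    (himg : T '' ((2 : ℝ) • stdUnimodularSimplex n) = CayleySum Ps) :
    s = 0 := by
  by_contra hs
  have hs1 : 1 ≤ s := Nat.one_le_iff_ne_zero.mpr hs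
  have hS2 : (2:ℝ) • stdUnimodularSimplex n = simplexSet n 2 := by
    rw [stdUnimodularSimplex_eq, smul_simplexSet (by norm_num : (0:ℝ) < 2)]
  rw [hS2] at himg
  -- second coordinates of the Cayley sum lie in the standard simplex
  have hC : ∀ p ∈ CayleySum Ps, p.2 ∈ simplexSet s 1 := by
    intro p hp
    have hconv : Convex ℝ ((LinearMap.snd ℝ (Fin q → ℝ) (Fin s → ℝ)) ⁻¹' simplexSet s 1) :=
      (convex_simplexSet s 1).linear_preimage (LinearMap.snd ℝ _ _)
    have hgen : (⋃ j, (fun p => (p, cayleyVertex s j)) '' Ps j)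
        ⊆ (LinearMap.snd ℝ (Fin q → ℝ) (Fin s → ℝ)) ⁻¹' simplexSet s 1 := by
      intro x hx
      simp only [Set.mem_iUnion, Set.mem_image] at hx
      obtain ⟨j, p', hp', rfl⟩ := hx
      show cayleyVertex s j ∈ simplexSet s 1
      refine ⟨fun i => ?_, ?_⟩
      · unfold cayleyVertex
        split <;> norm_num
      · unfold cayleyVertex
        rw [Finset.sum_boole]
        have hcard : (Finset.univ.filter fun i : Fin s => (i:ℕ)+1 = (j:ℕ)).card ≤ 1 := by
          apply Finset.card_le_one.mpr
          intro a ha b hb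
          simp only [Finset.mem_filter] at ha hb
          apply Fin.ext
          omega
        exact_mod_cast hcard
    exact convexHull_min hgen hconv hp
  have hmem2 : ∀ x ∈ simplexSet n 2, T x ∈ CayleySum Ps := by
    intro x hx
    rw [← himg]
    exact Set.mem_image_of_mem _ hx
  have hbd : ∀ x ∈ simplexSet n 2, (∀ i, 0 ≤ (T x).2 i) ∧ ∑ i, (T x).2 i ≤ 1 :=
    fun x hx => hC _ (hmem2 x hx)
  have hcoordle : ∀ x ∈ simplexSet n 2, ∀ i, (T x).2 i ≤ 1 := by
    intro x hx i
    obtain ⟨h0, h1⟩ := hbd x hx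
    calc (T x).2 i ≤ ∑ i', (T x).2 i' :=
          Finset.single_le_sum (fun i' _ => h0 i') (Finset.mem_univ i)
      _ ≤ 1 := h1
  -- basis vectors
  set e : Fin n → (Fin n → ℝ) := fun k i => if i = k then 1 else 0 with he
  have hesum : ∀ k, ∑ i, e k i = 1 := by
    intro k
    simp [he, Finset.sum_ite_eq']
  have he2 : ∀ k, e k ∈ simplexSet n 2 := by
    intro k
    refine ⟨fun i => ?_, ?_⟩
    · simp only [he]; split <;> norm_num
    · rw [hesum k]; norm_num
  have h2e2 : ∀ k, (2:ℝ) • e k ∈ simplexSet n 2 := by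
    intro k
    refine ⟨fun i => ?_, ?_⟩
    · simp only [he, Pi.smul_apply, smul_eq_mul]; split <;> norm_num
    · simp only [Pi.smul_apply, smul_eq_mul, ← Finset.mul_sum]
      rw [hesum k]; norm_num
  have h02 : (0 : Fin n → ℝ) ∈ simplexSet n 2 := ⟨fun i => le_refl 0, by norm_num⟩
  have helat : ∀ k, IsLatticePoint (e k) := by
    intro k i
    by_cases h : i = k
    · exact ⟨1, by simp [he, h]⟩
    · exact ⟨0, by simp [he, h]⟩
  -- coordinates of (T (e k)).2 are 0 or 1
  have hy : ∀ k i, (T (e k)).2 i = 0 ∨ (T (e k)).2 i = 1 := by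
    intro k i
    obtain ⟨-, hlat⟩ := (hT (e k)).mp (helat k)
    obtain ⟨z, hz⟩ := hlat i
    have h0 := (hbd _ (he2 k)).1 i
    have h1 := hcoordle _ (he2 k) i
    rw [hz] at h0 h1 ⊢
    have hz01 : z = 0 ∨ z = 1 := by
      have hl : (0:ℤ) ≤ z := by exact_mod_cast h0
      have hr : z ≤ 1 := by exact_mod_cast h1
      omega
    rcases hz01 with rfl | rfl
    · left; norm_num
    · right; norm_num
  -- affine structure
  have key : ∀ x : Fin n → ℝ, T x = T.toAffineMap.linear x + T 0 := by
    intro x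
    have h := T.toAffineMap.map_vadd (0 : Fin n → ℝ) x
    simpa [vadd_eq_add] using h
  have hLe : ∀ k, T.toAffineMap.linear (e k) = T (e k) - T 0 := by
    intro k
    rw [key (e k)]
    abel
  have hLx : ∀ x : Fin n → ℝ, T.toAffineMap.linear x = ∑ k, x k • T.toAffineMap.linear (e k) := by
    intro x
    have hbasis : ∀ k : Fin n, (fun j => if k = j then (1:ℝ) else 0) = e k := by
      intro k
      funext j
      simp only [he]
      by_cases hjk : j = k
      · simp [hjk]
      · simp [hjk, Ne.symm hjk]
    conv_lhs => rw [pi_eq_sum_univ x]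
    rw [map_sum]
    apply Finset.sum_congr rfl
    intro k _
    rw [map_smul, hbasis k]
  -- (T (e k)).2 = (T 0).2
  have hyeq : ∀ k, (T (e k)).2 = (T 0).2 := by
    intro k
    funext i
    have hTk : T ((2:ℝ) • e k) = (2:ℝ) • (T (e k) - T 0) + T 0 := by
      rw [key ((2:ℝ) • e k), map_smul, hLe k]
    have hc : (T ((2:ℝ) • e k)).2 i = 2 * (T (e k)).2 i - (T 0).2 i := by
      rw [hTk]
      simp only [Prod.snd_add, Prod.smul_snd, Prod.snd_sub, Pi.add_apply, Pi.smul_apply,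
        Pi.sub_apply, smul_eq_mul]
      ring
    have ha0 := (hbd 0 h02).1 i
    have ha1 := hcoordle 0 h02 i
    have hc0 := (hbd _ (h2e2 k)).1 i
    have hc1 := hcoordle _ (h2e2 k) i
    rw [hc] at hc0 hc1
    rcases hy k i with h | h <;> rw [h] at hc0 hc1 ⊢ <;> linarith
  -- T has constant second coordinate
  have hconst : ∀ x : Fin n → ℝ, (T x).2 = (T 0).2 := by
    intro x
    have h2 : (T.toAffineMap.linear x).2 = 0 := by
      rw [hLx x, Prod.snd_sum]
      apply Finset.sum_eq_zero
      intro k _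
      rw [Prod.smul_snd, hLe k, Prod.snd_sub, hyeq k, sub_self, smul_zero]
    have h3 := congrArg Prod.snd (key x)
    simp only [Prod.snd_add] at h3
    rw [h3, h2, zero_add]
  -- two distinct fibers give a contradiction
  have hfiber : ∀ j : Fin (s+1), cayleyVertex s j = (T 0).2 := by
    intro j
    obtain ⟨V, hVne, -, hV⟩ := hPs j
    obtain ⟨v, hv⟩ := hVne
    have hv' : v ∈ Ps j := by
      rw [hV]
      exact subset_convexHull ℝ _ hv
    have hp : ((v, cayleyVertex s j) : (Fin q → ℝ) × (Fin s → ℝ)) ∈ CayleySum Ps := by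
      apply subset_convexHull ℝ _
      exact Set.mem_iUnion.mpr ⟨j, Set.mem_image_of_mem _ hv'⟩
    rw [← himg] at hp
    obtain ⟨x, hx, hTx⟩ := hp
    have := hconst x
    rw [hTx] at this
    exact this
  have h1 := hfiber ⟨1, by omega⟩
  have h0 := hfiber 0
  have h10 : cayleyVertex s ⟨1, by omega⟩ = cayleyVertex s 0 := by rw [h1, h0]
  have := congrFun h10 ⟨0, by omega⟩
  simp [cayleyVertex] at this

/-- (Optimality of Theorem 3.1.) For `d ≥ 1`, the dilation `2S` of the
standard unimodular simplex `S` of dimension `2d − 1` is a Gorenstein polytope of degree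
`d`, and `2S` admits no nontrivial Cayley decomposition: every `ℤ`-affine identification
of `2S` with a Cayley sum `P_0 * ⋯ * P_s` of lattice polytopes has `s = 0`. -/
theorem statement13 (d : ℕ) (hd : 1 ≤ d) :
    (∃ h : Polynomial ℤ,
      IsHStarPoly ((2 : ℝ) • stdUnimodularSimplex (2 * d - 1)) h ∧
      h.natDegree = d ∧ ∀ i ≤ d, h.coeff i = h.coeff (d - i)) ∧
    ∀ (q s : ℕ) (Ps : Fin (s + 1) → Set (Fin q → ℝ))
      (T : (Fin (2 * d - 1) → ℝ) ≃ᵃ[ℝ] (Fin q → ℝ) × (Fin s → ℝ)),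
      (∀ j, IsLatticePolytope (Ps j)) → IsLatticeEquiv T →
      T '' ((2 : ℝ) • stdUnimodularSimplex (2 * d - 1)) = CayleySum Ps →
      s = 0 := by
  obtain ⟨h1, h2, h3⟩ := part1 d hd
  exact ⟨⟨gorPoly d, h1, h2, h3⟩,
    fun q s Ps T hPs hT himg => part2 (2*d-1) q s Ps T hPs hT himg⟩

end
end

section
/- Let P_0, …, P_s be lattice polytopes in ℝ^q whose Cayley sum P = P_0 * ⋯ * P_s ⊂ ℝ^q × ℝ^s is n-dimensional, where n = q + s. For 1 ≤ i ≤ q and 0 ≤ j ≤ s, let ω_{ij} be the width of P_j with respect to the i-th coordinate on ℝ^q, i.e. the difference between the maximum and the minimum of the i-th coordinate over points of P_j. Then Vol(P) ≤ q! · ∏_{i=1}^{q} (ω_{i0} + ω_{i1} + ⋯ + ω_{is}), where Vol(P) is the normalized volume, n! times the Euclidean volume of P. -/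
open scoped BigOperators Pointwise

noncomputable section

namespace Statement18Aux

open MeasureTheory Set
open scoped ENNReal

/-- The standard corner simplex in `ℝ^m`. -/
def splx (m : ℕ) : Set (Fin m → ℝ) := {x | (∀ i, 0 ≤ x i) ∧ ∑ i, x i ≤ 1}

lemma isClosed_splx (m : ℕ) : IsClosed (splx m) := by
  have h1 : IsClosed {x : Fin m → ℝ | ∀ i, 0 ≤ x i} := by
    have h : {x : Fin m → ℝ | ∀ i, 0 ≤ x i} = ⋂ i, {x | 0 ≤ x i} := by ext x; simp
    rw [h]
    exact isClosed_iInter fun i => isClosed_le continuous_const (continuous_apply i)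
  have h2 : IsClosed {x : Fin m → ℝ | ∑ i, x i ≤ 1} :=
    isClosed_le (by fun_prop) continuous_const
  have : splx m = {x : Fin m → ℝ | ∀ i, 0 ≤ x i} ∩ {x : Fin m → ℝ | ∑ i, x i ≤ 1} := rfl
  rw [this]; exact h1.inter h2

lemma measurePreserving_of_det_one {m : ℕ} (f : (Fin m → ℝ) →ₗ[ℝ] (Fin m → ℝ))
    (hf : LinearMap.det f = 1) : MeasurePreserving f volume volume := by
  have hm : Measurable f := f.continuous_of_finiteDimensional.measurable
  refine ⟨hm, ?_⟩
  ext s hs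
  rw [Measure.map_apply hm hs,
    Measure.addHaar_preimage_linearMap volume (by rw [hf]; norm_num) s, hf]
  simp

lemma measurePreserving_comp_perm {m : ℕ} (π : Equiv.Perm (Fin m)) :
    MeasurePreserving (fun y : Fin m → ℝ => y ∘ π) volume volume := by
  have h : (fun y : Fin m → ℝ => y ∘ π)
      = ⇑(MeasurableEquiv.piCongrLeft (fun _ : Fin m => ℝ) π.symm) := by
    funext y; funext b
    have h2 := MeasurableEquiv.piCongrLeft_apply_apply (π.symm)
      (β := fun _ : Fin m => ℝ) y (π b)
    simpa using h2.symm
  rw [h]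
  exact volume_measurePreserving_piCongrLeft (fun _ : Fin m => ℝ) π.symm

lemma volume_hyperplane {m : ℕ} (i j : Fin m) (hij : i ≠ j) :
    volume {y : Fin m → ℝ | y i = y j} = 0 := by
  set f : (Fin m → ℝ) →ₗ[ℝ] ℝ :=
    (LinearMap.proj i : (Fin m → ℝ) →ₗ[ℝ] ℝ) - (LinearMap.proj j : (Fin m → ℝ) →ₗ[ℝ] ℝ)
    with hf
  have h1 : {y : Fin m → ℝ | y i = y j} = (LinearMap.ker f : Set (Fin m → ℝ)) := by
    ext y
    simp [hf, LinearMap.mem_ker, sub_eq_zero]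
  rw [h1]
  refine Measure.addHaar_submodule _ _ ?_
  intro htop
  have hmem : Pi.single i (1:ℝ) ∈ LinearMap.ker f := htop ▸ Submodule.mem_top
  rw [LinearMap.mem_ker] at hmem
  simp [hf, Pi.single_eq_same, Pi.single_eq_of_ne (Ne.symm hij)] at hmem

lemma volume_splx_le (m : ℕ) : volume (splx m) ≤ ((m.factorial : ℝ≥0∞))⁻¹ := by
  classical
  set O : Set (Fin m → ℝ) := {y | (∀ i, 0 ≤ y i ∧ y i ≤ 1) ∧ Monotone y} with hO
  have hOclosed : IsClosed O := by
    have h1 : IsClosed {y : Fin m → ℝ | ∀ i, 0 ≤ y i ∧ y i ≤ 1} := by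
      have h : {y : Fin m → ℝ | ∀ i, 0 ≤ y i ∧ y i ≤ 1}
          = ⋂ i, ({y | 0 ≤ y i} ∩ {y | y i ≤ 1}) := by
        ext y; simp [forall_and]
      rw [h]
      exact isClosed_iInter fun i =>
        (isClosed_le continuous_const (continuous_apply i)).inter
          (isClosed_le (continuous_apply i) continuous_const)
    have h2 : IsClosed {y : Fin m → ℝ | Monotone y} := by
      have h : {y : Fin m → ℝ | Monotone y}
          = ⋂ (a : Fin m) (b : Fin m) (_ : a ≤ b), {y | y a ≤ y b} := by
        ext y
        simp only [mem_setOf_eq, mem_iInter, Monotone]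
      rw [h]
      exact isClosed_iInter fun a => isClosed_iInter fun b => isClosed_iInter fun _ =>
        isClosed_le (continuous_apply a) (continuous_apply b)
    exact h1.inter h2
  set Opi : Equiv.Perm (Fin m) → Set (Fin m → ℝ) := fun π => (fun y => y ∘ π) ⁻¹' O with hOpi
  have hcont : ∀ π : Equiv.Perm (Fin m), Continuous fun y : Fin m → ℝ => y ∘ π :=
    fun π => continuous_pi fun i => continuous_apply (π i)
  have hvol : ∀ π, volume (Opi π) = volume O := fun π =>
    (measurePreserving_comp_perm π).measure_preimage hOclosed.measurableSet.nullMeasurableSet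
  set N : Set (Fin m → ℝ) := ⋃ (pp : Fin m × Fin m) (_ : pp.1 ≠ pp.2), {y | y pp.1 = y pp.2}
    with hN
  have hNnull : volume N = 0 :=
    measure_iUnion_null fun pp => measure_iUnion_null fun hpp => volume_hyperplane _ _ hpp
  have hdisj : Pairwise (Function.onFun (MeasureTheory.AEDisjoint volume) Opi) := by
    intro π σ hπσ
    refine measure_mono_null ?_ hNnull
    rintro y ⟨hyπ, hyσ⟩
    by_contra hyN
    simp only [hN, mem_iUnion, mem_setOf_eq, not_exists] at hyN
    have hinj : Function.Injective y := by
      intro aa bb hab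
      by_contra hne
      exact hyN (aa, bb) hne hab
    have hπs : StrictMono (y ∘ π) :=
      (show (y ∘ π) ∈ O from hyπ).2.strictMono_of_injective (hinj.comp π.injective)
    have hσs : StrictMono (y ∘ σ) :=
      (show (y ∘ σ) ∈ O from hyσ).2.strictMono_of_injective (hinj.comp σ.injective)
    have hτ : StrictMono fun x => (σ.trans π.symm) x := by
      intro aa bb h
      have h1 : (y ∘ σ) aa < (y ∘ σ) bb := hσs h
      have h2 : (y ∘ π) ((σ.trans π.symm) aa) < (y ∘ π) ((σ.trans π.symm) bb) := by
        simpa [Function.comp, Equiv.trans_apply, Equiv.apply_symm_apply] using h1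
      exact hπs.lt_iff_lt.mp h2
    have hoi : (⟨σ.trans π.symm, fun {aa bb} => hτ.le_iff_le⟩ : Fin m ≃o Fin m)
        = OrderIso.refl (Fin m) := Subsingleton.elim _ _
    apply hπσ
    apply Equiv.ext
    intro x
    have h3 : π.symm (σ x) = x := by
      have h4 := congrArg (fun o : Fin m ≃o Fin m => o x) hoi
      simpa using h4
    have h5 : σ x = π x := by
      conv_lhs => rw [← Equiv.apply_symm_apply π (σ x), h3]
    exact h5.symm
  have hnm : ∀ π, NullMeasurableSet (Opi π) volume := fun π =>
    ((hOclosed.preimage (hcont π)).measurableSet).nullMeasurableSet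
  have hunion := measure_iUnion₀ hdisj hnm
  have hcube : (⋃ π, Opi π) ⊆ Set.pi univ fun _ : Fin m => Icc (0:ℝ) 1 := by
    intro y hy
    simp only [mem_iUnion] at hy
    obtain ⟨π, hyπ⟩ := hy
    intro i _
    have h1 := (show (y ∘ π) ∈ O from hyπ).1 (π.symm i)
    simpa [Function.comp, Equiv.apply_symm_apply] using h1
  have hle1 : ∑' π : Equiv.Perm (Fin m), volume (Opi π) ≤ 1 := by
    rw [← hunion]
    refine le_trans (measure_mono hcube) ?_
    rw [volume_pi_pi]
    simp [Real.volume_Icc]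
  rw [tsum_fintype] at hle1
  have hcard : ∑ π : Equiv.Perm (Fin m), volume (Opi π) = (m.factorial : ℝ≥0∞) * volume O := by
    rw [Finset.sum_congr rfl fun π _ => hvol π, Finset.sum_const, Finset.card_univ,
      Fintype.card_perm, Fintype.card_fin, nsmul_eq_mul]
  rw [hcard] at hle1
  have hOle : volume O ≤ (m.factorial : ℝ≥0∞)⁻¹ := by
    rw [ENNReal.le_inv_iff_mul_le]
    rwa [mul_comm] at hle1
  set Lmat : Matrix (Fin m) (Fin m) ℝ := Matrix.of fun i j => if j ≤ i then (1:ℝ) else 0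
    with hLmat
  have hdet : Lmat.det = 1 := by
    have htri : Lmat.BlockTriangular OrderDual.toDual := by
      intro i j hij
      have h2 : i < j := hij
      simp [hLmat, not_le.mpr h2]
    rw [Matrix.det_of_lowerTriangular Lmat htri]
    simp [hLmat]
  set L := Matrix.toLin' Lmat with hL
  have happ : ∀ (x : Fin m → ℝ) (i : Fin m),
      L x i = ∑ j ∈ Finset.univ.filter (fun j => j ≤ i), x j := by
    intro x i
    rw [hL, Matrix.toLin'_apply]
    simp only [Matrix.mulVec, dotProduct, hLmat, Matrix.of_apply]
    rw [Finset.sum_filter]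
    refine Finset.sum_congr rfl fun j _ => ?_
    by_cases h : j ≤ i <;> simp [h]
  have hsub : splx m ⊆ ⇑L ⁻¹' O := by
    intro x hx
    refine ⟨fun i => ⟨?_, ?_⟩, ?_⟩
    · rw [happ]; exact Finset.sum_nonneg fun j _ => hx.1 j
    · rw [happ]
      exact le_trans (Finset.sum_le_sum_of_subset_of_nonneg (Finset.filter_subset _ _)
        fun j _ _ => hx.1 j) hx.2
    · intro a b hab
      rw [happ, happ]
      refine Finset.sum_le_sum_of_subset_of_nonneg ?_ fun j _ _ => hx.1 j
      intro j hj
      simp only [Finset.mem_filter, Finset.mem_univ, true_and] at hj ⊢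
      exact le_trans hj hab
  have hdetL : LinearMap.det L ≠ 0 := by
    rw [hL, LinearMap.det_toLin', hdet]; norm_num
  calc volume (splx m) ≤ volume (⇑L ⁻¹' O) := measure_mono hsub
    _ = volume O := by
        rw [Measure.addHaar_preimage_linearMap volume hdetL, hL, LinearMap.det_toLin', hdet]
        simp
    _ ≤ _ := hOle

/-- The corner simplex in `ℝ^q × ℝ^s`. -/
def splxProd (q s : ℕ) : Set ((Fin q → ℝ) × (Fin s → ℝ)) :=
  {p | (∀ i, 0 ≤ p.1 i) ∧ (∀ k, 0 ≤ p.2 k) ∧ ∑ i, p.1 i + ∑ k, p.2 k ≤ 1}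

lemma isClosed_splxProd (q s : ℕ) : IsClosed (splxProd q s) := by
  have h1 : IsClosed {p : (Fin q → ℝ) × (Fin s → ℝ) | ∀ i, 0 ≤ p.1 i} := by
    have h : {p : (Fin q → ℝ) × (Fin s → ℝ) | ∀ i, 0 ≤ p.1 i}
        = ⋂ i, {p : (Fin q → ℝ) × (Fin s → ℝ) | 0 ≤ p.1 i} := by ext p; simp
    rw [h]
    exact isClosed_iInter fun i =>
      isClosed_le continuous_const ((continuous_apply i).comp continuous_fst)
  have h2 : IsClosed {p : (Fin q → ℝ) × (Fin s → ℝ) | ∀ k, 0 ≤ p.2 k} := by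
    have h : {p : (Fin q → ℝ) × (Fin s → ℝ) | ∀ k, 0 ≤ p.2 k}
        = ⋂ k, {p : (Fin q → ℝ) × (Fin s → ℝ) | 0 ≤ p.2 k} := by ext p; simp
    rw [h]
    exact isClosed_iInter fun k =>
      isClosed_le continuous_const ((continuous_apply k).comp continuous_snd)
  have h3 : IsClosed {p : (Fin q → ℝ) × (Fin s → ℝ) | ∑ i, p.1 i + ∑ k, p.2 k ≤ 1} := by
    refine isClosed_le ?_ continuous_const
    refine Continuous.add ?_ ?_
    · exact continuous_finset_sum _ fun i _ => (continuous_apply i).comp continuous_fst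
    · exact continuous_finset_sum _ fun k _ => (continuous_apply k).comp continuous_snd
  have h : splxProd q s = {p : (Fin q → ℝ) × (Fin s → ℝ) | ∀ i, 0 ≤ p.1 i}
      ∩ ({p : (Fin q → ℝ) × (Fin s → ℝ) | ∀ k, 0 ≤ p.2 k}
        ∩ {p : (Fin q → ℝ) × (Fin s → ℝ) | ∑ i, p.1 i + ∑ k, p.2 k ≤ 1}) := rfl
  rw [h]
  exact h1.inter (h2.inter h3)

lemma volume_splxProd_le (q s : ℕ) :
    volume (splxProd q s) ≤ (((q + s).factorial : ℝ≥0∞))⁻¹ := by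
  classical
  set e1 := MeasurableEquiv.piCongrLeft (fun _ : Fin q ⊕ Fin s => ℝ) finSumFinEquiv.symm
    with he1
  set e2 := MeasurableEquiv.sumPiEquivProdPi (fun _ : Fin q ⊕ Fin s => ℝ) with he2
  have hmp : MeasurePreserving (⇑e2 ∘ ⇑e1) volume volume :=
    (volume_measurePreserving_sumPiEquivProdPi _).comp
      (volume_measurePreserving_piCongrLeft _ _)
  have hpre : volume ((⇑e2 ∘ ⇑e1) ⁻¹' splxProd q s) = volume (splxProd q s) :=
    hmp.measure_preimage (isClosed_splxProd q s).measurableSet.nullMeasurableSet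
  have he1app : ∀ (z : Fin (q + s) → ℝ) (j : Fin q ⊕ Fin s),
      e1 z j = z (finSumFinEquiv j) := by
    intro z j
    have h2 := MeasurableEquiv.piCongrLeft_apply_apply (finSumFinEquiv.symm)
      (β := fun _ : Fin q ⊕ Fin s => ℝ) z (finSumFinEquiv j)
    simpa using h2
  have hsub : (⇑e2 ∘ ⇑e1) ⁻¹' splxProd q s ⊆ splx (q + s) := by
    intro z hz
    obtain ⟨h1, h2, h3⟩ := hz
    simp only [Function.comp_apply] at h1 h2 h3
    have hfst : ∀ i : Fin q, (e2 (e1 z)).1 i = z (finSumFinEquiv (Sum.inl i)) := by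
      intro i; rw [← he1app z (Sum.inl i)]; rfl
    have hsnd : ∀ k : Fin s, (e2 (e1 z)).2 k = z (finSumFinEquiv (Sum.inr k)) := by
      intro k; rw [← he1app z (Sum.inr k)]; rfl
    constructor
    · intro a
      rcases hsa : finSumFinEquiv.symm a with i | k
      · have h4 := h1 i
        rw [hfst] at h4
        rwa [show finSumFinEquiv (Sum.inl i) = a from by
          rw [← hsa, Equiv.apply_symm_apply]] at h4
      · have h4 := h2 k
        rw [hsnd] at h4
        rwa [show finSumFinEquiv (Sum.inr k) = a from by
          rw [← hsa, Equiv.apply_symm_apply]] at h4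
    · have h4 : ∑ a, z a = ∑ jj : Fin q ⊕ Fin s, z (finSumFinEquiv jj) :=
        (Equiv.sum_comp finSumFinEquiv z).symm
      rw [h4, Fintype.sum_sum_type]
      have h5 : ∑ i : Fin q, z (finSumFinEquiv (Sum.inl i)) = ∑ i, (e2 (e1 z)).1 i :=
        Finset.sum_congr rfl fun i _ => (hfst i).symm
      have h6 : ∑ k : Fin s, z (finSumFinEquiv (Sum.inr k)) = ∑ k, (e2 (e1 z)).2 k :=
        Finset.sum_congr rfl fun k _ => (hsnd k).symm
      rw [h5, h6]
      exact h3
  calc volume (splxProd q s) = volume ((⇑e2 ∘ ⇑e1) ⁻¹' splxProd q s) := hpre.symm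
    _ ≤ volume (splx (q + s)) := measure_mono hsub
    _ ≤ _ := volume_splx_le (q + s)

/-- barycentric coordinates attached to a point of `ℝ^s`. -/
def tHat {s : ℕ} (t : Fin s → ℝ) : Fin (s + 1) → ℝ :=
  Fin.cases (1 - ∑ k, t k) (fun k => t k)

@[simp] lemma tHat_zero {s : ℕ} (t : Fin s → ℝ) : tHat t 0 = 1 - ∑ k, t k := rfl

@[simp] lemma tHat_succ {s : ℕ} (t : Fin s → ℝ) (k : Fin s) : tHat t k.succ = t k := rfl

lemma sum_tHat {s : ℕ} (t : Fin s → ℝ) : ∑ j, tHat t j = 1 := by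
  rw [Fin.sum_univ_succ]
  simp [tHat]

lemma continuous_tHat {s : ℕ} (j : Fin (s + 1)) :
    Continuous fun t : Fin s → ℝ => tHat t j := by
  induction j using Fin.cases with
  | zero => simp only [tHat_zero]; fun_prop
  | succ k => simp only [tHat_succ]; exact continuous_apply k

/-- The set of admissible `t`'s: the simplex in barycentric form. -/
def TT (s : ℕ) : Set (Fin s → ℝ) := {t | ∀ j, 0 ≤ tHat t j}

lemma TT_eq_splx (s : ℕ) : TT s = splx s := by
  ext t
  constructor
  · intro h
    exact ⟨fun k => h k.succ, by have := h 0; simp only [tHat_zero] at this; linarith⟩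
  · intro h j
    induction j using Fin.cases with
    | zero => simp only [tHat_zero]; linarith [h.2]
    | succ k => simpa using h.1 k

lemma measurableSet_TT (s : ℕ) : MeasurableSet (TT s) := by
  rw [TT_eq_splx]; exact (isClosed_splx s).measurableSet

lemma tHat_cayleyVertex (s : ℕ) (j j' : Fin (s + 1)) :
    tHat (cayleyVertex s j) j' = if j' = j then 1 else 0 := by
  induction j' using Fin.cases with
  | zero =>
    simp only [tHat_zero, cayleyVertex]
    by_cases hj : j = 0
    · subst hj
      simp
    · have hj' : (j : ℕ) ≠ 0 := fun h => hj (Fin.ext h)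
      have hlt : (j : ℕ) - 1 < s := by have := j.isLt; omega
      have hsum : ∑ k : Fin s, (if (k : ℕ) + 1 = (j : ℕ) then (1:ℝ) else 0) = 1 := by
        rw [Finset.sum_eq_single (⟨(j : ℕ) - 1, hlt⟩ : Fin s)]
        · have h : ((⟨(j : ℕ) - 1, hlt⟩ : Fin s) : ℕ) + 1 = (j : ℕ) := by simp; omega
          simp [h]
        · intro b _ hb
          have h : ¬((b : ℕ) + 1 = (j : ℕ)) := by
            intro h
            apply hb
            apply Fin.ext
            simp
            omega
          simp [h]
        · simp
      rw [hsum]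
      rw [if_neg (fun h => hj h.symm)]
      ring
  | succ k =>
    simp only [tHat_succ, cayleyVertex, Fin.ext_iff, Fin.val_succ]

/-- cayley-type region built out of interval data. -/
def region {q s : ℕ} (mm MM : Fin q → Fin (s + 1) → ℝ) : Set ((Fin q → ℝ) × (Fin s → ℝ)) :=
  {p | (∀ j, 0 ≤ tHat p.2 j) ∧
    ∀ i, (∑ j, tHat p.2 j * mm i j) ≤ p.1 i ∧ p.1 i ≤ ∑ j, tHat p.2 j * MM i j}

lemma convex_region {q s : ℕ} (mm MM : Fin q → Fin (s + 1) → ℝ) :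
    Convex ℝ (region mm MM) := by
  intro p hp r hr a b ha hb hab
  have h2 : ∀ k, (a • p + b • r).2 k = a * p.2 k + b * r.2 k := fun k => by simp
  have h1 : ∀ i, (a • p + b • r).1 i = a * p.1 i + b * r.1 i := fun i => by simp
  have htH : ∀ j, tHat (a • p + b • r).2 j = a * tHat p.2 j + b * tHat r.2 j := by
    intro j
    induction j using Fin.cases with
    | zero =>
      simp only [tHat_zero]
      rw [Finset.sum_congr rfl fun k _ => h2 k, Finset.sum_add_distrib,
        ← Finset.mul_sum, ← Finset.mul_sum]
      linear_combination -hab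
    | succ k =>
      simp only [tHat_succ]
      exact h2 k
  have hsum : ∀ (c u v : Fin (s + 1) → ℝ),
      ∑ j, (a * u j + b * v j) * c j = a * ∑ j, u j * c j + b * ∑ j, v j * c j := by
    intro c u v
    rw [Finset.mul_sum, Finset.mul_sum, ← Finset.sum_add_distrib]
    exact Finset.sum_congr rfl fun j _ => by ring
  refine ⟨fun j => ?_, fun i => ⟨?_, ?_⟩⟩
  · rw [htH j]
    exact add_nonneg (mul_nonneg ha (hp.1 j)) (mul_nonneg hb (hr.1 j))
  · rw [h1 i, show (∑ j, tHat (a • p + b • r).2 j * mm i j)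
        = ∑ j, (a * tHat p.2 j + b * tHat r.2 j) * mm i j from
        Finset.sum_congr rfl fun j _ => by rw [htH j], hsum]
    exact add_le_add (mul_le_mul_of_nonneg_left (hp.2 i).1 ha)
      (mul_le_mul_of_nonneg_left (hr.2 i).1 hb)
  · rw [h1 i, show (∑ j, tHat (a • p + b • r).2 j * MM i j)
        = ∑ j, (a * tHat p.2 j + b * tHat r.2 j) * MM i j from
        Finset.sum_congr rfl fun j _ => by rw [htH j], hsum]
    exact add_le_add (mul_le_mul_of_nonneg_left (hp.2 i).2 ha)
      (mul_le_mul_of_nonneg_left (hr.2 i).2 hb)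

lemma continuous_tHatSum {q s : ℕ} (a : Fin (s + 1) → ℝ) :
    Continuous fun p : (Fin q → ℝ) × (Fin s → ℝ) => ∑ j, tHat p.2 j * a j :=
  continuous_finset_sum _ fun j _ =>
    ((continuous_tHat j).comp continuous_snd).mul continuous_const

lemma isClosed_barys {q s : ℕ} :
    IsClosed {p : (Fin q → ℝ) × (Fin s → ℝ) | ∀ j, 0 ≤ tHat p.2 j} := by
  have h : {p : (Fin q → ℝ) × (Fin s → ℝ) | ∀ j, 0 ≤ tHat p.2 j}
      = ⋂ j, {p : (Fin q → ℝ) × (Fin s → ℝ) | 0 ≤ tHat p.2 j} := by ext p; simp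
  rw [h]
  exact isClosed_iInter fun j =>
    isClosed_le continuous_const ((continuous_tHat j).comp continuous_snd)

lemma isClosed_region {q s : ℕ} (mm MM : Fin q → Fin (s + 1) → ℝ) :
    IsClosed (region mm MM) := by
  have h : region mm MM = {p : (Fin q → ℝ) × (Fin s → ℝ) | ∀ j, 0 ≤ tHat p.2 j}
      ∩ ⋂ i, ({p : (Fin q → ℝ) × (Fin s → ℝ) | (∑ j, tHat p.2 j * mm i j) ≤ p.1 i}
        ∩ {p : (Fin q → ℝ) × (Fin s → ℝ) | p.1 i ≤ ∑ j, tHat p.2 j * MM i j}) := by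
    ext p
    simp only [region, mem_setOf_eq, mem_inter_iff, mem_iInter]
  rw [h]
  exact isClosed_barys.inter (isClosed_iInter fun i =>
    (isClosed_le (continuous_tHatSum _) ((continuous_apply i).comp continuous_fst)).inter
      (isClosed_le ((continuous_apply i).comp continuous_fst) (continuous_tHatSum _)))

/-- The region whose volume is the integral of `(tHat t j)^q` over the simplex. -/
def aset (q : ℕ) {s : ℕ} (j : Fin (s + 1)) : Set ((Fin q → ℝ) × (Fin s → ℝ)) :=
  {p | (∀ j', 0 ≤ tHat p.2 j') ∧ ∀ i, 0 ≤ p.1 i ∧ p.1 i ≤ tHat p.2 j}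

lemma isClosed_aset (q : ℕ) {s : ℕ} (j : Fin (s + 1)) : IsClosed (aset q j) := by
  have h : aset q j = {p : (Fin q → ℝ) × (Fin s → ℝ) | ∀ j', 0 ≤ tHat p.2 j'}
      ∩ ⋂ i, ({p : (Fin q → ℝ) × (Fin s → ℝ) | 0 ≤ p.1 i}
        ∩ {p : (Fin q → ℝ) × (Fin s → ℝ) | p.1 i ≤ tHat p.2 j}) := by
    ext p
    simp only [aset, mem_setOf_eq, mem_inter_iff, mem_iInter]
  rw [h]
  exact isClosed_barys.inter (isClosed_iInter fun i =>
    (isClosed_le continuous_const ((continuous_apply i).comp continuous_fst)).inter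
      (isClosed_le ((continuous_apply i).comp continuous_fst)
        ((continuous_tHat j).comp continuous_snd)))

def dmat (q : ℕ) : Matrix (Fin q) (Fin q) ℝ :=
  Matrix.of fun i j => if j = i then (1:ℝ) else if (j : ℕ) + 1 = (i : ℕ) then -1 else 0

lemma dmat_det (q : ℕ) : (dmat q).det = 1 := by
  have htri : (dmat q).BlockTriangular OrderDual.toDual := by
    intro i j hij
    have h2 : i < j := hij
    have h3 : (i : ℕ) < (j : ℕ) := h2
    have hne : j ≠ i := ne_of_gt h2
    have hne2 : ¬((j : ℕ) + 1 = (i : ℕ)) := by omega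
    simp [dmat, hne, hne2]
  rw [Matrix.det_of_lowerTriangular _ htri]
  simp [dmat]

lemma dmat_apply (q : ℕ) (u : Fin q → ℝ) (i : Fin q) :
    Matrix.toLin' (dmat q) u i
      = u i - ∑ j ∈ Finset.univ.filter (fun j : Fin q => (j : ℕ) + 1 = (i : ℕ)), u j := by
  rw [Matrix.toLin'_apply]
  simp only [Matrix.mulVec, dotProduct, dmat, Matrix.of_apply]
  rw [Finset.sum_filter]
  have h : ∀ j : Fin q, (if j = i then (1:ℝ) else if (j:ℕ)+1 = (i:ℕ) then -1 else 0) * u j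
      = (if j = i then u j else 0) + (if (j:ℕ)+1 = (i:ℕ) then -(u j) else 0) := by
    intro j
    by_cases h1 : j = i
    · subst h1
      have h2 : ¬((j:ℕ)+1 = (j:ℕ)) := by omega
      simp [h2]
    · by_cases h2 : (j:ℕ)+1 = (i:ℕ) <;> simp [h1, h2]
  rw [Finset.sum_congr rfl fun j _ => h j, Finset.sum_add_distrib,
    Finset.sum_ite_eq' Finset.univ i u]
  have h4 : ∑ j : Fin q, (if (j:ℕ)+1 = (i:ℕ) then -(u j) else 0)
      = -∑ j : Fin q, (if (j:ℕ)+1 = (i:ℕ) then u j else 0) := by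
    rw [← Finset.sum_neg_distrib]
    exact Finset.sum_congr rfl fun j _ => by split_ifs <;> simp
  rw [h4]
  simp [sub_eq_add_neg]

lemma dmat_sum_le (q : ℕ) (u : Fin q → ℝ) {B : ℝ} (hB : 0 ≤ B) (hu : ∀ i, u i ≤ B) :
    ∑ i, Matrix.toLin' (dmat q) u i ≤ B := by
  classical
  have h0 : ∀ i, Matrix.toLin' (dmat q) u i = ∑ j, dmat q i j * u j := by
    intro i
    rw [Matrix.toLin'_apply]
    simp [Matrix.mulVec, dotProduct]
  rw [Finset.sum_congr rfl fun i _ => h0 i, Finset.sum_comm]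
  have hcol : ∀ j : Fin q, ∑ i, dmat q i j * u j = (if (j:ℕ) + 1 = q then u j else 0) := by
    intro j
    rw [← Finset.sum_mul]
    have h : ∀ i : Fin q, dmat q i j
        = (if i = j then (1:ℝ) else 0) + (if (i:ℕ) = (j:ℕ)+1 then -1 else 0) := by
      intro i
      by_cases h1 : i = j
      · subst h1
        have h2 : ¬((i:ℕ) = (i:ℕ)+1) := by omega
        simp [dmat, h2]
      · have h1' : ¬(j = i) := fun h => h1 h.symm
        rw [show dmat q i j = if (j:ℕ)+1 = (i:ℕ) then (-1:ℝ) else 0 from by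
          simp [dmat, h1'], if_neg h1, zero_add]
        by_cases h2 : (i:ℕ) = (j:ℕ)+1
        · rw [if_pos h2.symm, if_pos h2]
        · rw [if_neg (fun h => h2 h.symm), if_neg h2]
    have hcs : ∑ i, dmat q i j = (if (j:ℕ) + 1 = q then (1:ℝ) else 0) := by
      rw [Finset.sum_congr rfl fun i _ => h i, Finset.sum_add_distrib,
        Finset.sum_ite_eq' Finset.univ j (fun _ => (1:ℝ))]
      by_cases hq : (j:ℕ) + 1 < q
      · have hsum2 : ∑ i : Fin q, (if (i:ℕ) = (j:ℕ)+1 then (-1:ℝ) else 0) = -1 := by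
          rw [Finset.sum_eq_single (⟨(j:ℕ)+1, hq⟩ : Fin q)]
          · simp
          · intro b _ hb
            have hb2 : ¬((b:ℕ) = (j:ℕ)+1) := by
              intro h2
              exact hb (Fin.ext (by simpa using h2))
            simp [hb2]
          · simp
        rw [hsum2]
        have hne : ¬((j:ℕ)+1 = q) := by omega
        simp [hne]
      · have hq2 : (j:ℕ)+1 = q := by have := j.isLt; omega
        have hsum2 : ∑ i : Fin q, (if (i:ℕ) = (j:ℕ)+1 then (-1:ℝ) else 0) = 0 := by
          refine Finset.sum_eq_zero fun b _ => ?_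
          have hb2 : ¬((b:ℕ) = (j:ℕ)+1) := by have := b.isLt; omega
          simp [hb2]
        rw [hsum2]
        simp [hq2]
    rw [hcs]
    split_ifs <;> simp
  rw [Finset.sum_congr rfl fun j _ => hcol j]
  rcases Nat.eq_zero_or_pos q with hq | hq
  · subst hq
    simpa using hB
  · rw [Finset.sum_eq_single (⟨q-1, by omega⟩ : Fin q)]
    · rw [if_pos (by simp; omega)]
      exact hu _
    · intro b _ hb
      have hb2 : ¬((b:ℕ) + 1 = q) := by
        intro h2
        refine hb (Fin.ext ?_)
        simp
        omega
      simp [hb2]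
    · simp

lemma isClosed_monoFst {q s : ℕ} :
    IsClosed {p : (Fin q → ℝ) × (Fin s → ℝ) | Monotone p.1} := by
  have h : {p : (Fin q → ℝ) × (Fin s → ℝ) | Monotone p.1}
      = ⋂ (a : Fin q) (b : Fin q) (_ : a ≤ b),
          {p : (Fin q → ℝ) × (Fin s → ℝ) | p.1 a ≤ p.1 b} := by
    ext p
    simp only [mem_setOf_eq, mem_iInter, Monotone]
  rw [h]
  exact isClosed_iInter fun a => isClosed_iInter fun b => isClosed_iInter fun _ =>
    isClosed_le ((continuous_apply a).comp continuous_fst)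
      ((continuous_apply b).comp continuous_fst)

lemma volume_aset_le (q : ℕ) {s : ℕ} (j : Fin (s + 1)) :
    volume (aset q j) ≤ (q.factorial : ℝ≥0∞) * (((q + s).factorial : ℝ≥0∞))⁻¹ := by
  classical
  have hmpD : MeasurePreserving (⇑(Matrix.toLin' (dmat q))) volume volume :=
    measurePreserving_of_det_one _ (by rw [LinearMap.det_toLin', dmat_det])
  set T : ((Fin q → ℝ) × (Fin s → ℝ)) → ((Fin q → ℝ) × (Fin s → ℝ)) :=
    fun p => (Matrix.toLin' (dmat q) p.1,
      p.2 - (∑ i, Matrix.toLin' (dmat q) p.1 i) • cayleyVertex s j) with hT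
  have hcontD : Continuous (⇑(Matrix.toLin' (dmat q))) :=
    (Matrix.toLin' (dmat q)).continuous_of_finiteDimensional
  have hmpT : MeasurePreserving T volume volume := by
    have hgm : Measurable (Function.uncurry fun (x : Fin q → ℝ) (y : Fin s → ℝ) =>
        y - (∑ i, Matrix.toLin' (dmat q) x i) • cayleyVertex s j) := by
      refine Continuous.measurable ?_
      refine Continuous.sub continuous_snd ?_
      refine Continuous.smul (f := fun p : (Fin q → ℝ) × (Fin s → ℝ) =>
        ∑ i, Matrix.toLin' (dmat q) p.1 i) ?_ continuous_const
      exact continuous_finset_sum _ fun i _ =>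
        (continuous_apply i).comp (hcontD.comp continuous_fst)
    have hmap : ∀ x : Fin q → ℝ,
        Measure.map (fun y : Fin s → ℝ =>
          y - (∑ i, Matrix.toLin' (dmat q) x i) • cayleyVertex s j) volume = volume := by
      intro x
      have h1 : (fun y : Fin s → ℝ =>
          y - (∑ i, Matrix.toLin' (dmat q) x i) • cayleyVertex s j)
          = fun y => y + (-((∑ i, Matrix.toLin' (dmat q) x i) • cayleyVertex s j)) := by
        funext y
        rw [sub_eq_add_neg]
      rw [h1]
      exact map_add_right_eq_self volume _
    exact MeasurePreserving.skew_product (f := ⇑(Matrix.toLin' (dmat q))) hmpD hgm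
      (ae_of_all _ hmap)
  set G : Set ((Fin q → ℝ) × (Fin s → ℝ)) := aset q j ∩ {p | Monotone p.1} with hGdef
  have hGmeas : MeasurableSet G :=
    ((isClosed_aset q j).inter isClosed_monoFst).measurableSet
  have hGsub : G ⊆ T ⁻¹' splxProd q s := by
    rintro ⟨u, t⟩ ⟨⟨hΔ, hbox⟩, hmono⟩
    have hc : ∑ i, Matrix.toLin' (dmat q) u i ≤ tHat t j :=
      dmat_sum_le q u (hΔ j) (fun i => (hbox i).2)
    have hd : ∀ i, 0 ≤ Matrix.toLin' (dmat q) u i := by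
      intro i
      rw [dmat_apply]
      rcases Nat.eq_zero_or_pos (i:ℕ) with h0 | h0
      · have hfe : Finset.univ.filter (fun j' : Fin q => (j':ℕ)+1 = (i:ℕ)) = ∅ :=
          Finset.filter_false_of_mem fun b _ => by omega
        rw [hfe]
        simpa using (hbox i).1
      · have hlt : (i:ℕ) - 1 < q := by have := i.isLt; omega
        have hfe : Finset.univ.filter (fun j' : Fin q => (j':ℕ)+1 = (i:ℕ))
            = {(⟨(i:ℕ)-1, hlt⟩ : Fin q)} := by
          ext b
          simp only [Finset.mem_filter, Finset.mem_univ, true_and, Finset.mem_singleton,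
            Fin.ext_iff]
          omega
        rw [hfe, Finset.sum_singleton]
        have hle : (⟨(i:ℕ)-1, hlt⟩ : Fin q) ≤ i := by
          rw [Fin.le_def]
          exact Nat.sub_le _ _
        have := hmono hle
        linarith
    refine ⟨fun i => hd i, fun k => ?_, ?_⟩
    · show 0 ≤ t k - (∑ i, Matrix.toLin' (dmat q) u i) * cayleyVertex s j k
      by_cases hk : (k:ℕ)+1 = (j:ℕ)
      · have hj : j = k.succ := Fin.ext (by simp [← hk])
        rw [hj] at hc
        simp only [tHat_succ] at hc
        simp only [cayleyVertex, if_pos hk, mul_one]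
        have h5 : 0 ≤ ∑ i, Matrix.toLin' (dmat q) u i :=
          Finset.sum_nonneg fun i _ => hd i
        linarith
      · simp only [cayleyVertex, if_neg hk, mul_zero, sub_zero]
        exact hΔ k.succ
    · show (∑ i, Matrix.toLin' (dmat q) u i)
        + ∑ k, (t - (∑ i, Matrix.toLin' (dmat q) u i) • cayleyVertex s j) k ≤ 1
      have hsumcv : ∑ k, cayleyVertex s j k = 1 - (if (0 : Fin (s+1)) = j then 1 else 0) := by
        have h := tHat_cayleyVertex s j 0
        simp only [tHat_zero] at h
        linarith
      have hexp : ∑ k, (t - (∑ i, Matrix.toLin' (dmat q) u i) • cayleyVertex s j) k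
          = ∑ k, t k - (∑ i, Matrix.toLin' (dmat q) u i) * ∑ k, cayleyVertex s j k := by
        rw [show (∑ k, (t - (∑ i, Matrix.toLin' (dmat q) u i) • cayleyVertex s j) k)
            = ∑ k, (t k - (∑ i, Matrix.toLin' (dmat q) u i) * cayleyVertex s j k) from
          Finset.sum_congr rfl fun k _ => by simp]
        rw [Finset.sum_sub_distrib, ← Finset.mul_sum]
      have h0 := hΔ 0
      simp only [tHat_zero] at h0
      by_cases hj0 : (0 : Fin (s+1)) = j
      · rw [← hj0] at hc
        simp only [tHat_zero] at hc
        rw [hexp, hsumcv, if_pos hj0]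
        linarith
      · rw [hexp, hsumcv, if_neg hj0]
        have h5 : 0 ≤ ∑ i, Matrix.toLin' (dmat q) u i :=
          Finset.sum_nonneg fun i _ => hd i
        linarith
  have hGvol : volume G ≤ volume (splxProd q s) := by
    calc volume G ≤ volume (T ⁻¹' splxProd q s) := measure_mono hGsub
      _ = volume (splxProd q s) :=
        hmpT.measure_preimage (isClosed_splxProd q s).measurableSet.nullMeasurableSet
  have hcover : aset q j ⊆ ⋃ π : Equiv.Perm (Fin q),
      (fun p : (Fin q → ℝ) × (Fin s → ℝ) => (p.1 ∘ π, p.2)) ⁻¹' G := by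
    intro p hp
    simp only [mem_iUnion, mem_preimage]
    refine ⟨Tuple.sort p.1, ⟨⟨hp.1, fun i => hp.2 (Tuple.sort p.1 i)⟩, ?_⟩⟩
    exact Tuple.monotone_sort p.1
  have hπvol : ∀ π : Equiv.Perm (Fin q),
      volume ((fun p : (Fin q → ℝ) × (Fin s → ℝ) => (p.1 ∘ π, p.2)) ⁻¹' G) = volume G := by
    intro π
    have hmp2 : MeasurePreserving
        (fun p : (Fin q → ℝ) × (Fin s → ℝ) => (p.1 ∘ π, p.2)) volume volume := by
      exact (measurePreserving_comp_perm π).prod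
        (MeasurePreserving.id (volume : Measure (Fin s → ℝ)))
    exact hmp2.measure_preimage hGmeas.nullMeasurableSet
  calc volume (aset q j)
      ≤ volume (⋃ π : Equiv.Perm (Fin q),
          (fun p : (Fin q → ℝ) × (Fin s → ℝ) => (p.1 ∘ π, p.2)) ⁻¹' G) :=
        measure_mono hcover
    _ ≤ ∑' π : Equiv.Perm (Fin q),
          volume ((fun p : (Fin q → ℝ) × (Fin s → ℝ) => (p.1 ∘ π, p.2)) ⁻¹' G) :=
        measure_iUnion_le _
    _ = (q.factorial : ℝ≥0∞) * volume G := by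
        rw [tsum_fintype, Finset.sum_congr rfl fun π _ => hπvol π, Finset.sum_const,
          Finset.card_univ, Fintype.card_perm, Fintype.card_fin, nsmul_eq_mul]
    _ ≤ (q.factorial : ℝ≥0∞) * volume (splxProd q s) := mul_le_mul_right hGvol _
    _ ≤ _ := mul_le_mul_right (volume_splxProd_le q s) _

lemma volume_region_le (q s : ℕ) (mm ω : Fin q → Fin (s + 1) → ℝ)
    (hω0 : ∀ i j, 0 ≤ ω i j) :
    volume (region mm (fun i j => mm i j + ω i j)) ≤ ENNReal.ofReal (∏ i, ∑ j, ω i j) *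
      ((q.factorial : ℝ≥0∞) * (((q + s).factorial : ℝ≥0∞))⁻¹) := by
  classical
  rcases Nat.eq_zero_or_pos q with hq0 | hq
  · subst hq0
    have hsub : region mm (fun i j => mm i j + ω i j) ⊆ (univ : Set (Fin 0 → ℝ)) ×ˢ TT s :=
      fun p hp => ⟨trivial, hp.1⟩
    have h1 : volume ((univ : Set (Fin 0 → ℝ)) ×ˢ TT s)
        = volume (univ : Set (Fin 0 → ℝ)) * volume (TT s) := by
      rw [Measure.volume_eq_prod, Measure.prod_prod]
    have h2 : volume (univ : Set (Fin 0 → ℝ)) = 1 := by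
      rw [show (univ : Set (Fin 0 → ℝ)) = Set.pi univ (fun _ => univ) from
        (Set.pi_univ _).symm, volume_pi_pi]
      simp
    have h3 : volume (TT s) ≤ ((s.factorial : ℝ≥0∞))⁻¹ := by
      rw [TT_eq_splx]
      exact volume_splx_le s
    calc volume (region mm fun i j => mm i j + ω i j) ≤ _ := measure_mono hsub
      _ = volume (TT s) := by rw [h1, h2, one_mul]
      _ ≤ ((s.factorial : ℝ≥0∞))⁻¹ := h3
      _ = ENNReal.ofReal (∏ i : Fin 0, ∑ j, ω i j) *
          (((0:ℕ).factorial : ℝ≥0∞) * (((0 + s).factorial : ℝ≥0∞))⁻¹) := by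
        simp
  -- main case
  have hqR : (0:ℝ) < (q:ℝ) := by exact_mod_cast hq
  have hc0 : ∀ i, 0 ≤ ∑ j, ω i j := fun i => Finset.sum_nonneg fun j _ => hω0 i j
  have hK0 : ∀ i : Fin q, 0 ≤ ∏ i' ∈ Finset.univ.erase i, ∑ j, ω i' j :=
    fun i => Finset.prod_nonneg fun i' _ => hc0 i'
  have hKc : ∀ i : Fin q, (∑ j, ω i j) * ∏ i' ∈ Finset.univ.erase i, ∑ j, ω i' j
      = ∏ i', ∑ j, ω i' j :=
    fun i => Finset.mul_prod_erase Finset.univ (fun i' => ∑ j, ω i' j) (Finset.mem_univ i)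
  have hmeasR : MeasurableSet (region mm (fun i j => mm i j + ω i j)) :=
    (isClosed_region mm _).measurableSet
  have hsliceR : ∀ t : Fin s → ℝ,
      volume ((fun x => (x, t)) ⁻¹' region mm (fun i j => mm i j + ω i j))
      = Set.indicator (TT s) (fun t => ∏ i, ENNReal.ofReal (∑ j, tHat t j * ω i j)) t := by
    intro t
    by_cases ht : t ∈ TT s
    · rw [Set.indicator_of_mem ht]
      have hpre : (fun x => (x, t)) ⁻¹' region mm (fun i j => mm i j + ω i j)
          = Set.pi univ (fun i => Icc (∑ j, tHat t j * mm i j)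
              (∑ j, tHat t j * (mm i j + ω i j))) := by
        ext x
        simp only [mem_preimage, region, mem_setOf_eq, Set.mem_pi, mem_univ,
          forall_true_left, mem_Icc, true_implies]
        exact ⟨fun h => h.2, fun h => ⟨ht, h⟩⟩
      rw [hpre, volume_pi_pi]
      refine Finset.prod_congr rfl fun i _ => ?_
      rw [Real.volume_Icc]
      congr 1
      rw [← Finset.sum_sub_distrib]
      exact Finset.sum_congr rfl fun j _ => by ring
    · rw [Set.indicator_of_notMem ht]
      have hpre : (fun x => (x, t)) ⁻¹' region mm (fun i j => mm i j + ω i j) = ∅ := by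
        ext x
        simp only [mem_preimage, mem_empty_iff_false, iff_false]
        intro h
        exact ht h.1
      rw [hpre]
      simp
  have hsliceA : ∀ (j : Fin (s+1)) (t : Fin s → ℝ),
      volume ((fun x => (x, t)) ⁻¹' aset q j)
      = Set.indicator (TT s) (fun t => ENNReal.ofReal ((tHat t j) ^ q)) t := by
    intro j t
    by_cases ht : t ∈ TT s
    · rw [Set.indicator_of_mem ht]
      have hpre : (fun x => (x, t)) ⁻¹' aset q j
          = Set.pi univ (fun _ : Fin q => Icc (0:ℝ) (tHat t j)) := by
        ext x
        simp only [mem_preimage, aset, mem_setOf_eq, Set.mem_pi, mem_univ,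
          forall_true_left, mem_Icc, true_implies]
        exact ⟨fun h => h.2, fun h => ⟨ht, h⟩⟩
      rw [hpre, volume_pi_pi]
      calc ∏ _i : Fin q, volume (Icc (0:ℝ) (tHat t j))
          = ∏ _i : Fin q, ENNReal.ofReal (tHat t j) := by
            refine Finset.prod_congr rfl fun i _ => ?_
            rw [Real.volume_Icc, sub_zero]
        _ = ENNReal.ofReal (tHat t j) ^ q := by
            rw [Finset.prod_const, Finset.card_univ, Fintype.card_fin]
        _ = ENNReal.ofReal ((tHat t j) ^ q) := (ENNReal.ofReal_pow (ht j) q).symm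
    · rw [Set.indicator_of_notMem ht]
      have hpre : (fun x => (x, t)) ⁻¹' aset q j = ∅ := by
        ext x
        simp only [mem_preimage, mem_empty_iff_false, iff_false]
        intro h
        exact ht h.1
      rw [hpre]
      simp
  -- the key pointwise real inequality
  have hkey : ∀ t ∈ TT s, ∏ i, (∑ j, tHat t j * ω i j)
      ≤ ∑ i, ∑ j, (q:ℝ)⁻¹ * ((∏ i' ∈ Finset.univ.erase i, ∑ j', ω i' j') * ω i j)
          * (tHat t j) ^ q := by
    intro t ht
    have htH0 : ∀ j, 0 ≤ tHat t j := ht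
    have hw0 : ∀ i, 0 ≤ ∑ j, tHat t j * ω i j :=
      fun i => Finset.sum_nonneg fun j _ => mul_nonneg (htH0 j) (hω0 i j)
    have hRHS0 : 0 ≤ ∑ i, ∑ j, (q:ℝ)⁻¹ *
        ((∏ i' ∈ Finset.univ.erase i, ∑ j', ω i' j') * ω i j) * (tHat t j) ^ q :=
      Finset.sum_nonneg fun i _ => Finset.sum_nonneg fun j _ =>
        mul_nonneg (mul_nonneg (by positivity) (mul_nonneg (hK0 i) (hω0 i j)))
          (pow_nonneg (htH0 j) q)
    by_cases hz : ∃ i₀, ∑ j, ω i₀ j = 0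
    · obtain ⟨i₀, hi₀⟩ := hz
      have hωz : ∀ j, ω i₀ j = 0 := by
        intro j
        exact (Finset.sum_eq_zero_iff_of_nonneg (fun j _ => hω0 i₀ j)).mp hi₀ j
          (Finset.mem_univ j)
      have hzz : (∑ j, tHat t j * ω i₀ j) = 0 := by
        simp [hωz]
      rw [Finset.prod_eq_zero (Finset.mem_univ i₀) hzz]
      exact hRHS0
    · push_neg at hz
      have hcpos : ∀ i, 0 < ∑ j, ω i j := fun i => lt_of_le_of_ne (hc0 i) (Ne.symm (hz i))
      have hJ : ∀ i, ((∑ j, tHat t j * ω i j) / (∑ j, ω i j)) ^ q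
          ≤ ∑ j, (ω i j / (∑ j', ω i j')) * (tHat t j) ^ q := by
        intro i
        have hrw : (∑ j, tHat t j * ω i j) / (∑ j, ω i j)
            = ∑ j, (ω i j / (∑ j', ω i j')) * tHat t j := by
          rw [Finset.sum_div]
          exact Finset.sum_congr rfl fun j _ => by ring
        rw [hrw]
        refine Real.pow_arith_mean_le_arith_mean_pow Finset.univ _ _
          (fun j _ => div_nonneg (hω0 i j) (hc0 i)) ?_ (fun j _ => htH0 j) q
        rw [← Finset.sum_div]
        exact div_self (hz i)
      have hAM : ∏ i, ((∑ j, tHat t j * ω i j) / (∑ j, ω i j))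
          ≤ ∑ i, (q:ℝ)⁻¹ * ((∑ j, tHat t j * ω i j) / (∑ j, ω i j)) ^ q := by
        have h := Real.geom_mean_le_arith_mean_weighted Finset.univ
          (fun _ : Fin q => (q:ℝ)⁻¹)
          (fun i => ((∑ j, tHat t j * ω i j) / (∑ j, ω i j)) ^ q)
          (fun i _ => by positivity)
          (by rw [Finset.sum_const, Finset.card_univ, Fintype.card_fin, nsmul_eq_mul]
              field_simp)
          (fun i _ => pow_nonneg (div_nonneg (hw0 i) (hc0 i)) q)
        have hLHS : (∏ i, (((∑ j, tHat t j * ω i j) / (∑ j, ω i j)) ^ q) ^ ((q:ℝ)⁻¹))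
            = ∏ i, ((∑ j, tHat t j * ω i j) / (∑ j, ω i j)) := by
          refine Finset.prod_congr rfl fun i _ => ?_
          have hxi : (0:ℝ) ≤ (∑ j, tHat t j * ω i j) / (∑ j, ω i j) :=
            div_nonneg (hw0 i) (hc0 i)
          rw [← Real.rpow_natCast ((∑ j, tHat t j * ω i j) / (∑ j, ω i j)) q,
            ← Real.rpow_mul hxi, mul_inv_cancel₀ (ne_of_gt hqR), Real.rpow_one]
        rw [hLHS] at h
        exact h
      calc ∏ i, (∑ j, tHat t j * ω i j)
          = (∏ i, ∑ j, ω i j) * ∏ i, ((∑ j, tHat t j * ω i j) / (∑ j, ω i j)) := by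
            rw [← Finset.prod_mul_distrib]
            refine Finset.prod_congr rfl fun i _ => ?_
            rw [← mul_div_assoc, mul_div_cancel_left₀ _ (hz i)]
        _ ≤ (∏ i, ∑ j, ω i j)
            * ∑ i, (q:ℝ)⁻¹ * ((∑ j, tHat t j * ω i j) / (∑ j, ω i j)) ^ q :=
            mul_le_mul_of_nonneg_left hAM (Finset.prod_nonneg fun i _ => hc0 i)
        _ ≤ (∏ i, ∑ j, ω i j)
            * ∑ i, (q:ℝ)⁻¹ * ∑ j, (ω i j / (∑ j', ω i j')) * (tHat t j) ^ q := by
            refine mul_le_mul_of_nonneg_left ?_ (Finset.prod_nonneg fun i _ => hc0 i)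
            refine Finset.sum_le_sum fun i _ => ?_
            exact mul_le_mul_of_nonneg_left (hJ i) (by positivity)
        _ = ∑ i, ∑ j, (q:ℝ)⁻¹ * ((∏ i' ∈ Finset.univ.erase i, ∑ j', ω i' j') * ω i j)
            * (tHat t j) ^ q := by
            rw [Finset.mul_sum]
            refine Finset.sum_congr rfl fun i _ => ?_
            rw [Finset.mul_sum, Finset.mul_sum]
            refine Finset.sum_congr rfl fun j _ => ?_
            rw [← hKc i]
            have hci : (∑ j', ω i j') ≠ 0 := hz i
            field_simp
  -- measurability of the indicator integrands
  have hmeasInd : ∀ jj : Fin (s+1), Measurable fun t =>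
      Set.indicator (TT s) (fun t => ENNReal.ofReal ((tHat t jj) ^ q)) t := by
    intro jj
    refine Measurable.indicator ?_ (measurableSet_TT s)
    exact ((continuous_tHat jj).pow q).measurable.ennreal_ofReal
  -- pointwise bound in ℝ≥0∞
  have hptwise : ∀ t,
      Set.indicator (TT s) (fun t => ∏ i, ENNReal.ofReal (∑ j, tHat t j * ω i j)) t
      ≤ ∑ i, ∑ j, ENNReal.ofReal ((q:ℝ)⁻¹ *
          ((∏ i' ∈ Finset.univ.erase i, ∑ j', ω i' j') * ω i j))
          * Set.indicator (TT s) (fun t => ENNReal.ofReal ((tHat t j) ^ q)) t := by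
    intro t
    by_cases ht : t ∈ TT s
    · simp only [Set.indicator_of_mem ht]
      have h1 : (∏ i, ENNReal.ofReal (∑ j, tHat t j * ω i j))
          = ENNReal.ofReal (∏ i, ∑ j, tHat t j * ω i j) :=
        (ENNReal.ofReal_prod_of_nonneg fun i _ =>
          Finset.sum_nonneg fun j _ => mul_nonneg (ht j) (hω0 i j)).symm
      rw [h1]
      refine le_trans (ENNReal.ofReal_le_ofReal (hkey t ht)) (le_of_eq ?_)
      rw [ENNReal.ofReal_sum_of_nonneg (fun i _ => Finset.sum_nonneg fun j _ =>
        mul_nonneg (mul_nonneg (by positivity) (mul_nonneg (hK0 i) (hω0 i j)))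
          (pow_nonneg (ht j) q))]
      refine Finset.sum_congr rfl fun i _ => ?_
      rw [ENNReal.ofReal_sum_of_nonneg (fun j _ =>
        mul_nonneg (mul_nonneg (by positivity) (mul_nonneg (hK0 i) (hω0 i j)))
          (pow_nonneg (ht j) q))]
      refine Finset.sum_congr rfl fun j _ => ?_
      rw [ENNReal.ofReal_mul (mul_nonneg (by positivity) (mul_nonneg (hK0 i) (hω0 i j)))]
    · simp only [Set.indicator_of_notMem ht]
      simp
  -- put everything together
  calc volume (region mm (fun i j => mm i j + ω i j))
      = ∫⁻ t, Set.indicator (TT s)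
          (fun t => ∏ i, ENNReal.ofReal (∑ j, tHat t j * ω i j)) t := by
        rw [Measure.volume_eq_prod, Measure.prod_apply_symm hmeasR]
        exact lintegral_congr fun t => hsliceR t
    _ ≤ ∫⁻ t, ∑ i, ∑ j, ENNReal.ofReal ((q:ℝ)⁻¹ *
          ((∏ i' ∈ Finset.univ.erase i, ∑ j', ω i' j') * ω i j))
          * Set.indicator (TT s) (fun t => ENNReal.ofReal ((tHat t j) ^ q)) t :=
        lintegral_mono hptwise
    _ = ∑ i, ∑ j, ENNReal.ofReal ((q:ℝ)⁻¹ *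
          ((∏ i' ∈ Finset.univ.erase i, ∑ j', ω i' j') * ω i j)) * volume (aset q j) := by
        rw [lintegral_finset_sum _ (fun i _ =>
          Finset.measurable_sum _ fun j _ => (hmeasInd j).const_mul _)]
        refine Finset.sum_congr rfl fun i _ => ?_
        rw [lintegral_finset_sum _ (fun j _ => (hmeasInd j).const_mul _)]
        refine Finset.sum_congr rfl fun j _ => ?_
        rw [lintegral_const_mul _ (hmeasInd j)]
        congr 1
        rw [Measure.volume_eq_prod, Measure.prod_apply_symm (isClosed_aset q j).measurableSet]
        exact (lintegral_congr fun t => hsliceA j t).symm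
    _ ≤ ∑ i, ∑ j, ENNReal.ofReal ((q:ℝ)⁻¹ *
          ((∏ i' ∈ Finset.univ.erase i, ∑ j', ω i' j') * ω i j)) *
          ((q.factorial : ℝ≥0∞) * (((q + s).factorial : ℝ≥0∞))⁻¹) := by
        refine Finset.sum_le_sum fun i _ => Finset.sum_le_sum fun j _ => ?_
        exact mul_le_mul_right (volume_aset_le q j) _
    _ = ENNReal.ofReal (∏ i, ∑ j, ω i j) *
          ((q.factorial : ℝ≥0∞) * (((q + s).factorial : ℝ≥0∞))⁻¹) := by
        simp only [← Finset.sum_mul]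
        congr 1
        have h4 : (∑ i, ∑ j, ENNReal.ofReal ((q:ℝ)⁻¹ *
            ((∏ i' ∈ Finset.univ.erase i, ∑ j', ω i' j') * ω i j)))
            = ENNReal.ofReal (∑ i, ∑ j, (q:ℝ)⁻¹ *
                ((∏ i' ∈ Finset.univ.erase i, ∑ j', ω i' j') * ω i j)) := by
          rw [ENNReal.ofReal_sum_of_nonneg (fun i _ => Finset.sum_nonneg fun j _ =>
            mul_nonneg (by positivity) (mul_nonneg (hK0 i) (hω0 i j)))]
          refine Finset.sum_congr rfl fun i _ => ?_
          rw [ENNReal.ofReal_sum_of_nonneg (fun j _ =>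
            mul_nonneg (by positivity) (mul_nonneg (hK0 i) (hω0 i j)))]
        rw [h4]
        congr 1
        have h5 : ∀ i : Fin q, (∑ j, (q:ℝ)⁻¹ *
            ((∏ i' ∈ Finset.univ.erase i, ∑ j', ω i' j') * ω i j))
            = (q:ℝ)⁻¹ * (∏ i', ∑ j', ω i' j') := by
          intro i
          rw [← Finset.mul_sum, ← Finset.mul_sum, ← hKc i]
          ring
        rw [Finset.sum_congr rfl fun i _ => h5 i, Finset.sum_const, Finset.card_univ,
          Fintype.card_fin, nsmul_eq_mul]
        field_simp


lemma cayley_subset_region {q s : ℕ} (Ps : Fin (s + 1) → Set (Fin q → ℝ))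
    (mm MM : Fin q → Fin (s + 1) → ℝ)
    (hb : ∀ j, ∀ p ∈ Ps j, ∀ i, mm i j ≤ p i ∧ p i ≤ MM i j) :
    CayleySum Ps ⊆ region mm MM := by
  refine convexHull_min ?_ (convex_region mm MM)
  intro x hx
  simp only [mem_iUnion, mem_image] at hx
  obtain ⟨j, p, hp, rfl⟩ := hx
  have hsum : ∀ a : Fin (s + 1) → ℝ, ∑ j', tHat (cayleyVertex s j) j' * a j' = a j := by
    intro a
    rw [Finset.sum_congr rfl fun j' _ => by
      rw [tHat_cayleyVertex, ite_mul, one_mul, zero_mul]]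
    rw [Finset.sum_ite_eq' Finset.univ j a]
    simp
  refine ⟨fun j' => ?_, fun i => ⟨?_, ?_⟩⟩
  · show 0 ≤ tHat (cayleyVertex s j) j'
    rw [tHat_cayleyVertex]
    split_ifs <;> norm_num
  · show (∑ j', tHat (cayleyVertex s j) j' * mm i j') ≤ p i
    rw [hsum (fun j' => mm i j')]
    exact (hb j p hp i).1
  · show p i ≤ ∑ j', tHat (cayleyVertex s j) j' * MM i j'
    rw [hsum (fun j' => MM i j')]
    exact (hb j p hp i).2

end Statement18Aux

open Statement18Aux
open scoped ENNReal

/-- (From the proof of Theorem 4.1.) Let `P = P_0 * ⋯ * P_s` be an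
`n`-dimensional Cayley sum of lattice polytopes in `ℝ^q`, with `n = q + s`, and let
`ω_{ij}` be the width of `P_j` in the `i`-th coordinate direction of `ℝ^q`.  Then
`Vol(P) ≤ q! · ∏_{i=1}^q (ω_{i0} + ⋯ + ω_{is})`, where `Vol(P)` is `n!` times the
Euclidean volume of `P`. -/
theorem statement18 (q s : ℕ) (Ps : Fin (s + 1) → Set (Fin q → ℝ))
    (hPs : ∀ j, IsLatticePolytope (Ps j))
    (hfull : affineSpan ℝ (CayleySum Ps) = ⊤) :
    ((q + s).factorial : ℝ) * (MeasureTheory.volume (CayleySum Ps)).toReal ≤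
      (q.factorial : ℝ) *
        ∏ i : Fin q, ∑ j : Fin (s + 1),
          (sSup ((fun p => p i) '' Ps j) - sInf ((fun p => p i) '' Ps j)) := by
  classical
  have hb : ∀ j, ∀ p ∈ Ps j, ∀ i,
      sInf ((fun p => p i) '' Ps j) ≤ p i ∧ p i ≤ sSup ((fun p => p i) '' Ps j) := by
    intro j p hp i
    obtain ⟨V, hVne, _, hVP⟩ := hPs j
    have hcomp : IsCompact (Ps j) := by
      rw [hVP]
      exact V.finite_toSet.isCompact_convexHull ℝ
    have himg : IsCompact ((fun p => p i) '' Ps j) := hcomp.image (continuous_apply i)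
    have hmem : p i ∈ (fun p => p i) '' Ps j := Set.mem_image_of_mem _ hp
    exact ⟨csInf_le himg.bddBelow hmem, le_csSup himg.bddAbove hmem⟩
  have hne : ∀ j, (Ps j).Nonempty := by
    intro j
    obtain ⟨V, hVne, _, hVP⟩ := hPs j
    obtain ⟨v, hv⟩ := hVne
    exact ⟨v, hVP ▸ subset_convexHull ℝ (V : Set (Fin q → ℝ)) hv⟩
  have hω0 : ∀ (i : Fin q) (j : Fin (s + 1)),
      0 ≤ sSup ((fun p => p i) '' Ps j) - sInf ((fun p => p i) '' Ps j) := by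
    intro i j
    obtain ⟨p, hp⟩ := hne j
    have h := hb j p hp i
    linarith [h.1, h.2]
  have hsub : CayleySum Ps ⊆ Statement18Aux.region
      (fun i j => sInf ((fun p => p i) '' Ps j))
      (fun i j => sInf ((fun p => p i) '' Ps j)
        + (sSup ((fun p => p i) '' Ps j) - sInf ((fun p => p i) '' Ps j))) := by
    refine cayley_subset_region Ps _ _ ?_
    intro j p hp i
    have h := hb j p hp i
    exact ⟨h.1, by linarith [h.2]⟩
  have hbound := volume_region_le q s (fun i j => sInf ((fun p => p i) '' Ps j))
    (fun i j => sSup ((fun p => p i) '' Ps j) - sInf ((fun p => p i) '' Ps j)) hω0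
  have hvol : MeasureTheory.volume (CayleySum Ps) ≤ ENNReal.ofReal
      (∏ i, ∑ j, (sSup ((fun p => p i) '' Ps j) - sInf ((fun p => p i) '' Ps j))) *
      ((q.factorial : ℝ≥0∞) * (((q + s).factorial : ℝ≥0∞))⁻¹) :=
    le_trans (MeasureTheory.measure_mono hsub) hbound
  set W : ℝ := ∏ i, ∑ j, (sSup ((fun p => p i) '' Ps j) - sInf ((fun p => p i) '' Ps j))
    with hW
  have hW0 : 0 ≤ W := Finset.prod_nonneg fun i _ => Finset.sum_nonneg fun j _ => hω0 i j
  have hfacpos : (0:ℝ) < ((q + s).factorial : ℝ) := by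
    exact_mod_cast Nat.factorial_pos (q + s)
  have h1 : (((q + s).factorial : ℝ≥0∞))⁻¹ = ENNReal.ofReal ((((q + s).factorial : ℝ))⁻¹) := by
    rw [ENNReal.ofReal_inv_of_pos hfacpos, ENNReal.ofReal_natCast]
  have h2 : (q.factorial : ℝ≥0∞) = ENNReal.ofReal ((q.factorial : ℝ)) :=
    (ENNReal.ofReal_natCast _).symm
  rw [h1, h2, ← ENNReal.ofReal_mul (by positivity), ← ENNReal.ofReal_mul hW0] at hvol
  have htoReal : (MeasureTheory.volume (CayleySum Ps)).toReal
      ≤ W * ((q.factorial : ℝ) * (((q + s).factorial : ℝ))⁻¹) :=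
    ENNReal.toReal_le_of_le_ofReal (mul_nonneg hW0 (by positivity)) hvol
  calc ((q + s).factorial : ℝ) * (MeasureTheory.volume (CayleySum Ps)).toReal
      ≤ ((q + s).factorial : ℝ) * (W * ((q.factorial : ℝ) * (((q + s).factorial : ℝ))⁻¹)) :=
        mul_le_mul_of_nonneg_left htoReal (le_of_lt hfacpos)
    _ = (q.factorial : ℝ) * W := by
        field_simp

end
end
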